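/- arXiv:0911.4433 — 6 statements merged into one kernel-verified Lean document; each statement's English description precedes it below -/
import Mathlib

section
/- Let p be an odd prime and let n be a positive integer such that p − 1 does not divide 6n. Then ∑_{k=1}^{p-1} H_{k,2n}²/k^{2n} ≡ 0 (mod p). -/
open Finset

section Aux

lemma zsum (p : ℕ) [Fact p.Prime] (t : ℕ) (ht : ¬ (p - 1) ∣ t) :
    ∑ k ∈ Icc 1 (p - 1), ((k : ZMod p) ^ t)⁻¹ = 0 := by
  classical
  have ht0 : t ≠ 0 := fun h => ht (h ▸ dvd_zero _)
  have hp1 : 1 ≤ p := (Fact.out : p.Prime).one_lt.le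
  -- step 1 : Icc sum = sum over all of ZMod p
  have h1 : ∑ k ∈ Icc 1 (p - 1), ((k : ZMod p) ^ t)⁻¹
      = ∑ x : ZMod p, (x ^ t)⁻¹ := by
    have h0 : range p = insert 0 (Icc 1 (p - 1)) := by
      ext k; simp [Finset.mem_range, Finset.mem_Icc]; omega
    have h2 : ∑ k ∈ range p, (((k : ZMod p)) ^ t)⁻¹ = ∑ x : ZMod p, (x ^ t)⁻¹ := by
      refine Finset.sum_nbij' (fun k => ((k : ZMod p))) (fun x => x.val) ?_ ?_ ?_ ?_ ?_
      · intros; exact Finset.mem_univ _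
      · intro x _; exact Finset.mem_range.mpr (ZMod.val_lt x)
      · intro k hk; exact ZMod.val_cast_of_lt (Finset.mem_range.mp hk)
      · intro x _; exact ZMod.natCast_rightInverse x
      · intros; rfl
    rw [← h2, h0, Finset.sum_insert (by simp)]
    simp [zero_pow ht0]
  rw [h1]
  -- step 2 : drop 0, go to units
  have h3 : ∑ x : ZMod p, (x ^ t)⁻¹ = ∑ x : (ZMod p)ˣ, (((x : ZMod p)) ^ t)⁻¹ := by
    let φ : (ZMod p)ˣ ↪ ZMod p := ⟨fun x ↦ x, fun _ _ h => Units.ext h⟩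
    have huniv : univ.map φ = univ \ {0} := by
      ext x
      simp only [mem_map, mem_univ, Function.Embedding.coeFn_mk, true_and, mem_sdiff,
        mem_singleton, φ]; exact isUnit_iff_ne_zero
    calc
      ∑ x : ZMod p, (x ^ t)⁻¹ = ∑ x ∈ univ \ {(0 : ZMod p)}, (x ^ t)⁻¹ := by
        rw [← sum_sdiff ({0} : Finset (ZMod p)).subset_univ, sum_singleton, zero_pow ht0]
        simp
      _ = ∑ x : (ZMod p)ˣ, (((x : ZMod p)) ^ t)⁻¹ := by
        rw [← huniv, Finset.sum_map]; rfl
  rw [h3]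
  -- step 3 : reindex by inverse
  have h4 : ∑ x : (ZMod p)ˣ, (((x : ZMod p)) ^ t)⁻¹
      = ∑ x : (ZMod p)ˣ, ((x : ZMod p)) ^ t := by
    apply Fintype.sum_equiv (Equiv.inv (ZMod p)ˣ)
    intro x
    rw [Equiv.inv_apply, Units.val_inv_eq_inv_val, inv_pow]
  rw [h4]
  have := FiniteField.sum_pow_units (ZMod p) t
  rw [ZMod.card] at this
  rw [this, if_neg ht]


lemma core {K : Type*} [Field K] (N : ℕ) (f A : ℕ → K)
    (hAsum : ∀ k, A k = ∑ j ∈ Icc 1 k, f j)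
    (hT : A N = 0) (hP3 : ∑ k ∈ Icc 1 N, f k ^ 3 = 0)
    (hsym : ∀ k ∈ Icc 1 N, f (N + 1 - k) = f k)
    (h2ne : (2 : K) ≠ 0) (h3ne : (3 : K) ≠ 0) :
    ∑ k ∈ Icc 1 N, (A k) ^ 2 * f k = 0 := by
  classical
  have hAsucc : ∀ k : ℕ, A (k + 1) = A k + f (k + 1) := by
    intro k
    rw [hAsum, hAsum, Finset.sum_Icc_succ_top (by omega)]
  have hArev : ∀ k ∈ Icc 1 N, A (N + 1 - k) = f k - A k := by
    intro k hk
    rw [Finset.mem_Icc] at hk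
    have h1 : A (N + 1 - k) = ∑ j ∈ Icc k N, f j := by
      rw [hAsum]
      refine Finset.sum_nbij' (fun j => N + 1 - j) (fun j => N + 1 - j) ?_ ?_ ?_ ?_ ?_
      · intro a ha; simp only [Finset.mem_Icc] at *; omega
      · intro a ha; simp only [Finset.mem_Icc] at *; omega
      · intro a ha; simp only [Finset.mem_Icc] at ha; omega
      · intro a ha; simp only [Finset.mem_Icc] at ha; omega
      · intro a ha
        simp only [Finset.mem_Icc] at ha
        exact (hsym a (Finset.mem_Icc.mpr (by omega))).symm
    have h2 : A (k - 1) + ∑ j ∈ Icc k N, f j = A N := by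
      rw [hAsum, hAsum]
      have e1 : Icc 1 (k - 1) = Ioc 0 (k - 1) := by rw [← Finset.Icc_add_one_left_eq_Ioc]; rfl
      have e2 : Icc k N = Ioc (k - 1) N := by
        rw [← Finset.Icc_add_one_left_eq_Ioc]; congr 1; omega
      have e3 : Icc 1 N = Ioc 0 N := by rw [← Finset.Icc_add_one_left_eq_Ioc]; rfl
      rw [e1, e2, e3]
      exact Finset.sum_Ioc_consecutive _ (by omega) (by omega)
    have h3 : A k = A (k - 1) + f k := by
      have h := hAsucc (k - 1)
      rwa [show k - 1 + 1 = k by omega] at h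
    rw [hT] at h2
    rw [h1]
    linear_combination h2 + h3
  set S := ∑ k ∈ Icc 1 N, (A k) ^ 2 * f k with hS
  set U := ∑ k ∈ Icc 1 N, A k * f k ^ 2 with hU
  have hrev : S = ∑ k ∈ Icc 1 N, (f k - A k) ^ 2 * f k := by
    rw [hS]
    refine Finset.sum_nbij' (fun k => N + 1 - k) (fun k => N + 1 - k) ?_ ?_ ?_ ?_ ?_
    · intro a ha; simp only [Finset.mem_Icc] at *; omega
    · intro a ha; simp only [Finset.mem_Icc] at *; omega
    · intro a ha; simp only [Finset.mem_Icc] at ha; omega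
    · intro a ha; simp only [Finset.mem_Icc] at ha; omega
    · intro a ha
      have h1 := hArev a ha
      have h2 := hsym a ha
      rw [h1, h2]; ring
  have hU0 : U = 0 := by
    have expand : ∑ k ∈ Icc 1 N, (f k - A k) ^ 2 * f k
        = S - 2 * U + ∑ k ∈ Icc 1 N, f k ^ 3 := by
      rw [hS, hU, Finset.mul_sum, ← Finset.sum_sub_distrib, ← Finset.sum_add_distrib]
      apply Finset.sum_congr rfl
      intro k _; ring
    rw [expand, hP3] at hrev
    have h2 : (2 : K) * U = 0 := by linear_combination hrev
    exact (mul_eq_zero.mp h2).resolve_left h2ne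
  have htel : ∑ i ∈ range N, (A (i + 1) ^ 3 - A i ^ 3) = 0 := by
    rw [Finset.sum_range_sub (fun i => A i ^ 3), hT]
    rw [hAsum]
    simp
  have hshift : ∀ g : ℕ → K, ∑ i ∈ range N, g (i + 1) = ∑ k ∈ Icc 1 N, g k := by
    intro g
    refine Finset.sum_nbij' (fun i => i + 1) (fun k => k - 1) ?_ ?_ ?_ ?_ ?_
    · intro a ha; simp only [Finset.mem_Icc, Finset.mem_range] at *; omega
    · intro a ha; simp only [Finset.mem_Icc, Finset.mem_range] at *; omega
    · intro a ha; simp only [Finset.mem_range] at ha; omega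
    · intro a ha; simp only [Finset.mem_Icc] at ha; omega
    · intro a ha; rfl
  have hsplit : ∑ i ∈ range N, (A (i + 1) ^ 3 - A i ^ 3)
      = 3 * S - 3 * U + ∑ k ∈ Icc 1 N, f k ^ 3 := by
    have step : ∀ i : ℕ, A (i + 1) ^ 3 - A i ^ 3
        = 3 * (A (i + 1) ^ 2 * f (i + 1)) - 3 * (A (i + 1) * f (i + 1) ^ 2)
          + f (i + 1) ^ 3 := by
      intro i
      have h := hAsucc i
      have hAi : A i = A (i + 1) - f (i + 1) := by linear_combination -h
      rw [hAi]; ring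
    rw [Finset.sum_congr rfl (fun i _ => step i),
      hshift (fun k => 3 * (A k ^ 2 * f k) - 3 * (A k * f k ^ 2) + f k ^ 3)]
    rw [hS, hU, Finset.mul_sum, Finset.mul_sum, ← Finset.sum_sub_distrib,
      ← Finset.sum_add_distrib]
  rw [htel, hU0, hP3] at hsplit
  have h3S : (3 : K) * S = 0 := by linear_combination -hsplit
  exact (mul_eq_zero.mp h3S).resolve_left h3ne


lemma ratsum {p : ℕ} [Fact p.Prime] {ι : Type*} (s : Finset ι) (g : ι → ℚ)
    (h : ∀ i ∈ s, ¬ p ∣ (g i).den) :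
    ¬ p ∣ (∑ i ∈ s, g i).den ∧
      (Rat.cast (∑ i ∈ s, g i) : ZMod p) = ∑ i ∈ s, (Rat.cast (g i) : ZMod p) := by
  classical
  have hp : p.Prime := Fact.out
  have : NeZero p := ⟨hp.ne_zero⟩
  induction s using Finset.cons_induction with
  | empty =>
    simp only [Finset.sum_empty]
    refine ⟨?_, by simp⟩
    rw [Rat.den_zero]
    simpa using hp.one_lt.ne'
  | cons a s ha ih =>
    have hterm : ¬ p ∣ (g a).den := h a (Finset.mem_cons_self a s)
    obtain ⟨ihden, ihcast⟩ := ih (fun i hi => h i (Finset.mem_cons_of_mem hi))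
    rw [Finset.sum_cons, Finset.sum_cons]
    have hda : ((g a).den : ZMod p) ≠ 0 := fun hz =>
      hterm ((ZMod.natCast_eq_zero_iff _ _).mp hz)
    have hds : (((∑ i ∈ s, g i).den : ℕ) : ZMod p) ≠ 0 := fun hz =>
      ihden ((ZMod.natCast_eq_zero_iff _ _).mp hz)
    constructor
    · intro hd
      rcases (Nat.Prime.dvd_mul hp).mp
        (hd.trans (Rat.add_den_dvd (g a) (∑ i ∈ s, g i))) with h1 | h1
      · exact hterm h1
      · exact ihden h1
    · rw [Rat.cast_add_of_ne_zero hda hds, ihcast]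

end Aux

/-- For an odd prime `p` and a positive integer `n` with
`p - 1 ∤ 6n`, we have `∑_{k=1}^{p-1} H_{k,2n}²/k^{2n} ≡ 0 (mod p)`. -/
theorem stmt_2 (p : ℕ) (hp : p.Prime) (hodd : Odd p) (n : ℕ) (hn : 0 < n)
    (hdvd : ¬ (p - 1) ∣ 6 * n) :
    (p : ℤ) ∣
      (∑ k ∈ Finset.Icc 1 (p - 1),
        (∑ j ∈ Finset.Icc 1 k, (1 : ℚ) / (j : ℚ) ^ (2 * n)) ^ 2
          / (k : ℚ) ^ (2 * n)).num := by
  classical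
  haveI : Fact p.Prime := ⟨hp⟩
  set m : ℕ := 2 * n with hmdef
  have hp2 : p ≠ 2 := by rintro rfl; revert hodd; decide
  have hp3 : p ≠ 3 := by
    rintro rfl
    exact hdvd ⟨3 * n, by ring⟩
  have hm : ¬ (p - 1) ∣ m := fun h => hdvd (h.trans ⟨3, by rw [hmdef]; ring⟩)
  have h3m : ¬ (p - 1) ∣ m * 3 := by
    intro h
    exact hdvd (by rw [show 6 * n = m * 3 by rw [hmdef]; ring]; exact h)
  set K := ZMod p with hK
  set f : ℕ → K := fun j => ((j : K) ^ m)⁻¹ with hf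
  set A : ℕ → K := fun k => ∑ j ∈ Icc 1 k, f j with hA
  -- per-element facts
  have hjdvd : ∀ j ∈ Icc 1 (p - 1), ¬ p ∣ j ^ m := by
    intro j hj hd
    rw [Finset.mem_Icc] at hj
    have h1 : p ∣ j := hp.dvd_of_dvd_pow hd
    have := Nat.le_of_dvd (by omega) h1
    omega
  have hjrw : ∀ j : ℕ, (1 : ℚ) / (j : ℚ) ^ m = (((j ^ m : ℕ) : ℚ))⁻¹ := by
    intro j; rw [one_div]; norm_cast
  have hjden : ∀ j ∈ Icc 1 (p - 1), ¬ p ∣ ((1 : ℚ) / (j : ℚ) ^ m).den := by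
    intro j hj
    rw [Finset.mem_Icc] at hj
    rw [hjrw j, Rat.inv_natCast_den_of_pos (pow_pos (by omega) m)]
    exact hjdvd j (Finset.mem_Icc.mpr hj)
  have hjcast : ∀ j ∈ Icc 1 (p - 1),
      (Rat.cast ((1 : ℚ) / (j : ℚ) ^ m) : K) = f j := by
    intro j hj
    have hnum : (((((j ^ m : ℕ) : ℚ)).num : ℤ) : K) ≠ 0 := by
      rw [Rat.num_natCast]
      push_cast
      intro hz
      exact hjdvd j hj ((ZMod.natCast_eq_zero_iff _ _).mp (by exact_mod_cast hz))
    rw [hjrw j, Rat.cast_inv_of_ne_zero hnum, Rat.cast_natCast]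
    simp only [hf]
    push_cast
    rfl
  -- inner sums
  have hH : ∀ k ∈ Icc 1 (p - 1),
      ¬ p ∣ (∑ j ∈ Icc 1 k, (1 : ℚ) / (j : ℚ) ^ m).den ∧
      (Rat.cast (∑ j ∈ Icc 1 k, (1 : ℚ) / (j : ℚ) ^ m) : K) = A k := by
    intro k hk
    rw [Finset.mem_Icc] at hk
    have hsub : Icc 1 k ⊆ Icc 1 (p - 1) := Finset.Icc_subset_Icc_right hk.2
    obtain ⟨h1, h2⟩ := ratsum (p := p) (Icc 1 k) (fun j => (1 : ℚ) / (j : ℚ) ^ m)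
      (fun j hj => hjden j (hsub hj))
    refine ⟨h1, ?_⟩
    rw [h2, hA]
    exact Finset.sum_congr rfl (fun j hj => hjcast j (hsub hj))
  -- full terms
  have hterm : ∀ k ∈ Icc 1 (p - 1),
      ¬ p ∣ ((∑ j ∈ Icc 1 k, (1 : ℚ) / (j : ℚ) ^ m) ^ 2 / (k : ℚ) ^ m).den ∧
      (Rat.cast ((∑ j ∈ Icc 1 k, (1 : ℚ) / (j : ℚ) ^ m) ^ 2 / (k : ℚ) ^ m) : K)
        = (A k) ^ 2 * f k := by
    intro k hk
    obtain ⟨hHd, hHc⟩ := hH k hk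
    set H : ℚ := ∑ j ∈ Icc 1 k, (1 : ℚ) / (j : ℚ) ^ m with hHdef
    have hHdK : ((H.den : ℕ) : K) ≠ 0 := fun hz =>
      hHd ((ZMod.natCast_eq_zero_iff _ _).mp hz)
    have hH2den : ¬ p ∣ (H ^ 2).den := by
      intro hd
      rw [pow_two] at hd
      rcases (hp.dvd_mul).mp (hd.trans (Rat.mul_den_dvd H H)) with h1 | h1 <;> exact hHd h1
    have hH2dK : (((H ^ 2).den : ℕ) : K) ≠ 0 := fun hz =>
      hH2den ((ZMod.natCast_eq_zero_iff _ _).mp hz)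
    have hinvden : ((((k : ℚ) ^ m)⁻¹).den) = k ^ m := by
      rw [show ((k : ℚ)) ^ m = ((k ^ m : ℕ) : ℚ) by norm_cast,
        Rat.inv_natCast_den_of_pos]
      rw [Finset.mem_Icc] at hk
      exact pow_pos (by omega) m
    have hinvdvd : ¬ p ∣ ((((k : ℚ) ^ m)⁻¹).den) := by
      rw [hinvden]; exact hjdvd k hk
    have hinvdK : (((((k : ℚ) ^ m)⁻¹).den : ℕ) : K) ≠ 0 := fun hz =>
      hinvdvd ((ZMod.natCast_eq_zero_iff _ _).mp hz)
    constructor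
    · intro hd
      rw [div_eq_mul_inv] at hd
      rcases (hp.dvd_mul).mp
        (hd.trans (Rat.mul_den_dvd (H ^ 2) (((k : ℚ) ^ m)⁻¹))) with h1 | h1
      · exact hH2den h1
      · exact hinvdvd h1
    · rw [div_eq_mul_inv, Rat.cast_mul_of_ne_zero hH2dK hinvdK]
      have e1 : (Rat.cast (H ^ 2) : K) = (A k) ^ 2 := by
        rw [pow_two, Rat.cast_mul_of_ne_zero hHdK hHdK, hHc, ← pow_two]
      have e2 : (Rat.cast (((k : ℚ) ^ m)⁻¹) : K) = f k := by
        have := hjcast k hk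
        rwa [hjrw k, ← show ((k : ℚ)) ^ m = ((k ^ m : ℕ) : ℚ) by norm_cast] at this
      rw [e1, e2]
  -- total sum
  obtain ⟨hSd, hSc⟩ := ratsum (p := p) (Icc 1 (p - 1))
    (fun k => (∑ j ∈ Icc 1 k, (1 : ℚ) / (j : ℚ) ^ m) ^ 2 / (k : ℚ) ^ m)
    (fun k hk => (hterm k hk).1)
  have h2ne : (2 : K) ≠ 0 := by
    intro hz
    have : p ∣ 2 := (ZMod.natCast_eq_zero_iff 2 p).mp (by exact_mod_cast hz)
    exact hp2 ((Nat.prime_dvd_prime_iff_eq hp Nat.prime_two).mp this)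
  have h3ne : (3 : K) ≠ 0 := by
    intro hz
    have : p ∣ 3 := (ZMod.natCast_eq_zero_iff 3 p).mp (by exact_mod_cast hz)
    exact hp3 ((Nat.prime_dvd_prime_iff_eq hp Nat.prime_three).mp this)
  have hzero : (Rat.cast (∑ k ∈ Icc 1 (p - 1),
      (∑ j ∈ Icc 1 k, (1 : ℚ) / (j : ℚ) ^ m) ^ 2 / (k : ℚ) ^ m) : K) = 0 := by
    rw [hSc, Finset.sum_congr rfl (fun k hk => (hterm k hk).2)]
    apply core (p - 1) f A (fun k => rfl)
    · exact zsum p m hm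
    · have := zsum p (m * 3) h3m
      rw [← this]
      apply Finset.sum_congr rfl
      intro k _
      simp only [hf]
      rw [inv_pow, ← pow_mul]
    · intro k hk
      rw [Finset.mem_Icc] at hk
      have hple : 1 ≤ p := hp.one_lt.le
      rw [show p - 1 + 1 - k = p - k by omega]
      simp only [hf]
      have hcast : ((p - k : ℕ) : K) = -(k : K) := by
        rw [Nat.cast_sub (by omega)]
        simp [hK]
      rw [hcast, Even.neg_pow ⟨n, by rw [hmdef]; ring⟩]
    · exact h2ne
    · exact h3ne
  -- conclude
  set S : ℚ := ∑ k ∈ Icc 1 (p - 1),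
      (∑ j ∈ Icc 1 k, (1 : ℚ) / (j : ℚ) ^ m) ^ 2 / (k : ℚ) ^ m with hSdef
  rw [Rat.cast_def] at hzero
  have hdK : ((S.den : ℕ) : K) ≠ 0 := fun hz =>
    hSd ((ZMod.natCast_eq_zero_iff _ _).mp hz)
  have hnum : ((S.num : ℤ) : K) = 0 := by
    rcases div_eq_zero_iff.mp hzero with h1 | h1
    · exact h1
    · exact absurd h1 hdK
  exact (ZMod.intCast_zmod_eq_zero_iff_dvd _ _).mp hnum
end

section
/- Let p > 3 be a prime. Then ∑_{k=1}^{p-1} (−1)^k/k² ≡ (p/2)·B_{p-3} (mod p²). -/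
set_option maxHeartbeats 1000000 in
section
open Finset

variable (p : ℕ) [hF : Fact p.Prime]

/-- `x` is `p^r` times a `p`-adic integer. -/
def Dp (r : ℕ) (x : ℚ) : Prop := ∃ z : ℤ_[p], (x : ℚ_[p]) = (p : ℚ_[p]) ^ r * z

variable {p}

lemma Dp.add {r : ℕ} {x y : ℚ} (hx : Dp p r x) (hy : Dp p r y) : Dp p r (x + y) := by
  obtain ⟨z, hz⟩ := hx; obtain ⟨w, hw⟩ := hy
  exact ⟨z + w, by push_cast [hz, hw]; ring⟩

lemma Dp.zero (r : ℕ) : Dp p r 0 := ⟨0, by simp⟩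

lemma Dp.neg {r : ℕ} {x : ℚ} (hx : Dp p r x) : Dp p r (-x) := by
  obtain ⟨z, hz⟩ := hx; exact ⟨-z, by push_cast [hz]; ring⟩

lemma Dp.sub {r : ℕ} {x y : ℚ} (hx : Dp p r x) (hy : Dp p r y) : Dp p r (x - y) := by
  simpa [sub_eq_add_neg] using hx.add hy.neg

lemma Dp.mul {r s : ℕ} {x y : ℚ} (hx : Dp p r x) (hy : Dp p s y) : Dp p (r + s) (x * y) := by
  obtain ⟨z, hz⟩ := hx; obtain ⟨w, hw⟩ := hy
  exact ⟨z * w, by push_cast [hz, hw]; ring⟩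

lemma Dp.mono {r s : ℕ} {x : ℚ} (hrs : s ≤ r) (hx : Dp p r x) : Dp p s x := by
  obtain ⟨z, hz⟩ := hx
  refine ⟨(p : ℤ_[p]) ^ (r - s) * z, ?_⟩
  push_cast [hz]
  rw [← mul_assoc, ← pow_add, show s + (r-s) = r by omega]

lemma Dp.int (n : ℤ) : Dp p 0 ((n : ℚ)) := ⟨(n : ℤ_[p]), by push_cast; ring⟩

lemma Dp.nat (n : ℕ) : Dp p 0 ((n : ℚ)) := by exact_mod_cast Dp.int (n : ℤ)

lemma Dp.one : Dp p 0 (1 : ℚ) := by exact_mod_cast Dp.nat 1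

lemma Dp.p_self : Dp p 1 ((p : ℚ)) := ⟨1, by push_cast; ring⟩

lemma Dp.pow {x : ℚ} (hx : Dp p 0 x) (n : ℕ) : Dp p 0 (x ^ n) := by
  induction n with
  | zero => simpa using Dp.one
  | succ n ih => rw [pow_succ]; exact_mod_cast ih.mul hx

lemma Dp.sum {r : ℕ} {s : Finset ℕ} {f : ℕ → ℚ} (h : ∀ i ∈ s, Dp p r (f i)) :
    Dp p r (∑ i ∈ s, f i) := by
  classical
  induction s using Finset.induction with
  | empty => simpa using Dp.zero r
  | insert a s hn ih =>
    rw [Finset.sum_insert hn]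
    exact (h _ (Finset.mem_insert_self _ _)).add
      (ih fun i hi => h i (Finset.mem_insert_of_mem hi))

lemma Dp.inv_int {k : ℤ} (hk : ¬ (p : ℤ) ∣ k) : Dp p 0 (((k : ℚ))⁻¹) := by
  have hnorm : ‖(k : ℤ_[p])‖ = 1 := by
    rcases lt_or_eq_of_le (PadicInt.norm_le_one (k : ℤ_[p])) with hlt | heq
    · exact absurd ((PadicInt.norm_int_lt_one_iff_dvd k).mp hlt) hk
    · exact heq
  obtain ⟨u, hu⟩ := PadicInt.isUnit_iff.mpr hnorm
  refine ⟨((u⁻¹ : ℤ_[p]ˣ) : ℤ_[p]), ?_⟩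
  have h1 : ((u⁻¹ : ℤ_[p]ˣ) : ℤ_[p]) * (k : ℤ_[p]) = 1 := by
    rw [← hu]; exact_mod_cast u.inv_mul
  have h2 : ((u⁻¹ : ℤ_[p]ˣ) : ℚ_[p]) * (k : ℚ_[p]) = 1 := by exact_mod_cast congrArg (fun z : ℤ_[p] => (z : ℚ_[p])) h1
  have hk0 : (k : ℚ_[p]) ≠ 0 := by
    intro h0; rw [h0, mul_zero] at h2; exact zero_ne_one h2
  push_cast
  rw [pow_zero, one_mul]
  exact (eq_inv_of_mul_eq_one_left h2).symm


lemma Dp.div_int {r : ℕ} {x : ℚ} (hx : Dp p r x) {k : ℤ} (hk : ¬ (p : ℤ) ∣ k) :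
    Dp p r (x / (k : ℚ)) := by
  rw [div_eq_mul_inv]
  simpa using hx.mul (Dp.inv_int hk)

lemma Dp.div_nat {r : ℕ} {x : ℚ} (hx : Dp p r x) {k : ℕ} (hk : ¬ p ∣ k) :
    Dp p r (x / (k : ℚ)) := by
  have : ¬ (p : ℤ) ∣ (k : ℤ) := by exact_mod_cast hk
  exact_mod_cast hx.div_int this

/-- Main conversion: if `x` is `p^2` times a `p`-adic integer then `p^2` divides its numerator. -/
lemma Dp.num_dvd {x : ℚ} (hx : Dp p 2 x) : (p : ℤ) ^ 2 ∣ x.num := by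
  obtain ⟨z, hz⟩ := hx
  have hp1 : (1:ℕ) < p := hF.out.one_lt
  have hnormx : ‖(x : ℚ_[p])‖ ≤ (p : ℝ) ^ (-(2:ℕ) : ℤ) := by
    rw [hz]
    calc ‖(p : ℚ_[p]) ^ 2 * (z : ℚ_[p])‖ = ‖(p : ℚ_[p])‖ ^ 2 * ‖(z : ℚ_[p])‖ := by
          rw [norm_mul, norm_pow]
      _ ≤ ‖(p : ℚ_[p])‖ ^ 2 * 1 := by
          refine mul_le_mul_of_nonneg_left ?_ (by positivity)
          rw [← PadicInt.norm_def]; exact PadicInt.norm_le_one z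
      _ = (p : ℝ) ^ (-(2:ℕ) : ℤ) := by
          rw [mul_one, Padic.norm_p]
          rw [zpow_neg, ← zpow_natCast]
          norm_num
  have hden : ‖((x.den : ℤ) : ℚ_[p])‖ ≤ 1 := Padic.norm_int_le_one _
  have hxeq : ((x.num : ℚ_[p])) = (x : ℚ_[p]) * ((x.den : ℤ) : ℚ_[p]) := by
    have : ((x.num : ℚ) : ℚ_[p]) = ((x : ℚ) * (x.den : ℚ) : ℚ_[p]) := by
      norm_cast
      rw [Rat.mul_den_eq_num]
    simpa using this
  have : ‖((x.num : ℚ_[p]))‖ ≤ (p : ℝ) ^ (-(2:ℕ) : ℤ) := by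
    rw [hxeq, norm_mul]
    calc ‖(x : ℚ_[p])‖ * ‖((x.den : ℤ) : ℚ_[p])‖ ≤ ((p:ℝ) ^ (-(2:ℕ) : ℤ)) * 1 :=
          mul_le_mul hnormx hden (norm_nonneg _) (by positivity)
      _ = _ := mul_one _
  exact_mod_cast (Padic.norm_int_le_pow_iff_dvd x.num 2).mp this

lemma Dp.nat_dvd_pow {r : ℕ} {N : ℕ} (h : p ^ r ∣ N) : Dp p r ((N : ℚ)) := by
  obtain ⟨m, hm⟩ := h
  exact ⟨(m : ℤ_[p]), by push_cast [hm]; ring⟩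

lemma Dp.p_pow (m : ℕ) : Dp p m ((p : ℚ) ^ m) := ⟨1, by push_cast; ring⟩

lemma Dp.int_dvd {n : ℤ} (hd : (p:ℤ) ∣ n) : Dp p 1 ((n : ℚ)) := by
  obtain ⟨m, hm⟩ := hd
  exact ⟨(m : ℤ_[p]), by push_cast [hm]; ring⟩

lemma zmod_sum_range_pow (n : ℕ) (hn : n < p - 1) :
    p ∣ ∑ k ∈ range p, k ^ n := by
  have hcast : ((∑ k ∈ range p, k ^ n : ℕ) : ZMod p) = ∑ x : ZMod p, x ^ n := by
    push_cast
    refine Finset.sum_nbij' (fun k => (k : ZMod p)) (fun x => x.val) ?_ ?_ ?_ ?_ ?_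
    · intro a _; exact Finset.mem_univ _
    · intro x _
      exact Finset.mem_range.mpr (ZMod.val_lt x)
    · intro a ha
      exact ZMod.val_cast_of_lt (Finset.mem_range.mp ha)
    · intro x _
      exact ZMod.natCast_rightInverse x
    · intro a _; rfl
  have hzero : ∑ x : ZMod p, x ^ n = 0 := by
    have := FiniteField.sum_pow_lt_card_sub_one (K := ZMod p) n (by rwa [ZMod.card])
    exact this
  rw [hzero] at hcast
  exact (ZMod.natCast_eq_zero_iff _ _).mp hcast

lemma not_dvd_of_lt {m : ℕ} (h0 : 0 < m) (h : m < p) : ¬ p ∣ m :=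
  fun hd => absurd (Nat.le_of_dvd h0 hd) (not_le.mpr h)

lemma bernoulli_padic_integral : ∀ n, n < p - 1 → Dp p 0 (bernoulli n) := by
  have hp1 : 1 < p := hF.out.one_lt
  intro n
  induction n using Nat.strong_induction_on with
  | _ n ih =>
    intro hn
    rcases Nat.eq_zero_or_pos n with h0 | hpos
    · subst h0; simpa using Dp.one
    have key := sum_range_pow p n
    rw [Finset.sum_range_succ] at key
    have hlast : bernoulli n * ((n+1).choose n) * (p:ℚ) ^ (n + 1 - n) / (n+1)
        = (p : ℚ) * bernoulli n := by
      rw [Nat.choose_succ_self_right, show n + 1 - n = 1 by omega]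
      have : ((n:ℚ) + 1) ≠ 0 := by positivity
      push_cast
      field_simp
    rw [hlast] at key
    have hD1 : Dp p 1 ((p:ℚ) * bernoulli n) := by
      rw [eq_comm, ← eq_sub_iff_add_eq'] at key
      rw [key]
      refine Dp.sub ?_ ?_
      · have : (∑ k ∈ range p, (k:ℚ) ^ n) = ((∑ k ∈ range p, k ^ n : ℕ) : ℚ) := by
          push_cast; rfl
        rw [this]
        exact Dp.nat_dvd_pow (by simpa using zmod_sum_range_pow n hn)
      · refine Dp.sum ?_
        intro i hi
        have hi' : i < n := Finset.mem_range.mp hi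
        have hterm : Dp p (0 + 0 + (n + 1 - i)) (bernoulli i * ((n+1).choose i : ℚ) * (p:ℚ) ^ (n + 1 - i)) :=
          ((ih i hi' (hi'.trans hn)).mul (Dp.nat _)).mul (Dp.p_pow _)
        have h2 : (1:ℕ) ≤ 0 + 0 + (n + 1 - i) := by omega
        have := (hterm.mono h2)
        have hden : ¬ p ∣ (n + 1) := not_dvd_of_lt (by omega) (by omega)
        have := this.div_nat hden
        simpa [Nat.cast_add, Nat.cast_one] using this
    obtain ⟨z, hz⟩ := hD1
    refine ⟨z, ?_⟩
    have hpne : (p : ℚ_[p]) ≠ 0 := Nat.cast_ne_zero.mpr hF.out.ne_zero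
    push_cast at hz ⊢
    rw [pow_one] at hz
    rw [pow_zero, one_mul]
    exact mul_left_cancel₀ hpne hz

end

section
open Finset PowerSeries Nat

lemma rescale_two_bps :
    rescale (2:ℚ) (bernoulliPowerSeries ℚ) * (exp ℚ + 1) = C (2:ℚ) * bernoulliPowerSeries ℚ := by
  have h0 := bernoulliPowerSeries_mul_exp_sub_one ℚ
  have h1 : rescale (2:ℚ) (bernoulliPowerSeries ℚ) * (exp ℚ ^ 2 - 1) = rescale (2:ℚ) X := by
    have := congrArg (rescale (2:ℚ)) h0
    rw [map_mul, map_sub, map_one] at this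
    rw [← this, exp_pow_eq_rescale_exp]
    norm_num
  have hX : rescale (2:ℚ) (X : PowerSeries ℚ) = C (2:ℚ) * X := by
    ext n
    simp only [coeff_rescale, coeff_X, coeff_C_mul]
    rcases eq_or_ne n 1 with rfl | hn
    · simp
    · simp [hn]
  have hexp : exp ℚ - 1 ≠ 0 := by
    intro h
    have := congrArg (coeff 1) h
    simp [coeff_exp, coeff_one] at this
  refine mul_right_cancel₀ hexp ?_
  calc rescale (2:ℚ) (bernoulliPowerSeries ℚ) * (exp ℚ + 1) * (exp ℚ - 1)
      = rescale (2:ℚ) (bernoulliPowerSeries ℚ) * (exp ℚ ^ 2 - 1) := by ring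
    _ = rescale (2:ℚ) X := h1
    _ = C (2:ℚ) * X := hX
    _ = C (2:ℚ) * (bernoulliPowerSeries ℚ * (exp ℚ - 1)) := by rw [h0]
    _ = C (2:ℚ) * bernoulliPowerSeries ℚ * (exp ℚ - 1) := by ring

lemma sum_choose_bernoulli_two_pow (n : ℕ) :
    ∑ i ∈ range (n+1), (n.choose i : ℚ) * bernoulli i * 2 ^ i
      = (2 - 2 ^ n) * bernoulli n := by
  have hco := congrArg (coeff n) rescale_two_bps
  rw [mul_add, mul_one, map_add, coeff_mul,
    Finset.Nat.sum_antidiagonal_eq_sum_range_succ_mk] at hco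
  simp only [coeff_rescale, bernoulliPowerSeries, coeff_mk, coeff_exp, coeff_C_mul,
    Algebra.algebraMap_self, RingHom.id_apply] at hco
  have hfn : ((n)! : ℚ) ≠ 0 := by exact_mod_cast Nat.factorial_ne_zero n
  have key : ∀ i ∈ range (n+1), (n.choose i : ℚ) * bernoulli i * 2 ^ i
      = 2 ^ i * (bernoulli i / (i : ℕ)!) * (1 / (((n - i) : ℕ)! : ℚ)) * (n)! := by
    intro i hi
    have hin : i ≤ n := by
      have := Finset.mem_range.mp hi; omega
    have hf : ((n.choose i : ℕ) : ℚ) * (i)! * ((n - i))! = (n)! := by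
      exact_mod_cast congrArg (Nat.cast (R := ℚ)) (Nat.choose_mul_factorial_mul_factorial hin)
    have hfi : ((i)! : ℚ) ≠ 0 := by exact_mod_cast Nat.factorial_ne_zero i
    have hfni : (((n - i))! : ℚ) ≠ 0 := by exact_mod_cast Nat.factorial_ne_zero (n - i)
    field_simp
    linear_combination (bernoulli i) * hf
  rw [Finset.sum_congr rfl key, ← Finset.sum_mul]
  have hco' : ∑ x ∈ range (n+1), 2 ^ x * (bernoulli x / (x : ℕ)!) * (1 / (((n - x) : ℕ)! : ℚ))
      = 2 * (bernoulli n / (n : ℕ)!) - 2 ^ n * (bernoulli n / (n : ℕ)!) := by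
    have := eq_sub_of_add_eq hco
    simpa using this
  rw [hco']
  field_simp

end

section
open Finset

lemma icc_split (h : ℕ) : Icc 1 (2*h) = Icc 1 h ∪ Ioc h (2*h) := by
  ext x; simp only [Finset.mem_Icc, Finset.mem_Ioc, Finset.mem_union]; omega

lemma reflect_fold (f : ℕ → ℚ) (h : ℕ) :
    ∑ k ∈ Icc 1 (2*h), f k = ∑ j ∈ Icc 1 h, (f j + f (2*h+1-j)) := by
  rw [icc_split, Finset.sum_union (by
    simp only [Finset.disjoint_left, Finset.mem_Icc, Finset.mem_Ioc]; omega),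
    Finset.sum_add_distrib]
  congr 1
  refine Finset.sum_nbij' (i := fun k => 2*h+1-k) (j := fun j => 2*h+1-j)
    (fun a ha => ?_) (fun a ha => ?_) (fun a ha => ?_) (fun a ha => ?_) (fun a ha => ?_)
  all_goals simp only [Finset.mem_Icc, Finset.mem_Ioc] at *
  · omega
  · omega
  · omega
  · omega
  · congr 1; omega

lemma parity_fold (f : ℕ → ℚ) (h : ℕ) :
    ∑ k ∈ Icc 1 (2*h), f k = ∑ j ∈ Icc 1 h, (f (2*j-1) + f (2*j)) := by
  induction h with
  | zero => simp
  | succ h ih =>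
    rw [show 2*(h+1) = (2*h+1)+1 by omega, Finset.sum_Icc_succ_top (by omega),
      Finset.sum_Icc_succ_top (by omega), ih, Finset.sum_Icc_succ_top (by omega)]
    have e1 : 2*(h+1)-1 = 2*h+1 := by omega
    have e2 : 2*(h+1) = 2*h+1+1 := by omega
    rw [e1, e2]
    ring

end
section
open Finset

/-- For a prime `p > 3`,
`∑_{k=1}^{p-1} (-1)^k/k² ≡ (p/2)·B_{p-3} (mod p²)`. -/
theorem stmt_4 (p : ℕ) (hp : p.Prime) (hp3 : 3 < p) :
    (p : ℤ) ^ 2 ∣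
      ((∑ k ∈ Finset.Icc 1 (p - 1), (-1 : ℚ) ^ k / (k : ℚ) ^ 2)
        - (p : ℚ) / 2 * bernoulli (p - 3)).num := by
  haveI hF : Fact p.Prime := ⟨hp⟩
  have hpodd : Odd p := hp.odd_of_ne_two (by omega)
  obtain ⟨h, hp2h⟩ : ∃ h, p = 2*h+1 := by
    obtain ⟨m, hm⟩ := hpodd; exact ⟨m, by omega⟩
  obtain ⟨q, hpq⟩ : ∃ q, p = q+4 := ⟨p-4, by omega⟩
  have hh2 : 2 ≤ h := by omega
  -- basic coprimality facts
  have hndvd : ∀ k : ℕ, 0 < k → k < p → ¬ (p:ℤ) ∣ (k:ℤ) := by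
    intro k h0 h1 hd
    have : (p:ℤ) ≤ k := Int.le_of_dvd (by exact_mod_cast h0) hd
    omega
  have hinv : ∀ k : ℕ, 0 < k → k < p → Dp p 0 (((k:ℕ):ℚ))⁻¹ := by
    intro k h0 h1
    have := Dp.inv_int (p := p) (hndvd k h0 h1)
    simpa using this
  have h2inv : Dp p 0 ((2:ℚ)⁻¹) := by
    have := Dp.inv_int (p := p) (k := 2) (by
      intro hd; have : (p:ℤ) ≤ 2 := Int.le_of_dvd (by norm_num) hd; omega)
    simpa using this
  -- cast and sign helpers
  have hcast : ∀ k : ℕ, k ≤ 2*h → (((p - k : ℕ)):ℚ) = (p:ℚ) - (k:ℚ) := by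
    intro k hk; push_cast [Nat.cast_sub (by omega : k ≤ p)]; ring
  have hsign : ∀ k : ℕ, k ≤ 2*h → (-1:ℚ)^(p-k) = -(-1:ℚ)^k := by
    intro k hk
    have h1 : (-1:ℚ)^(p-k) * (-1:ℚ)^k = -1 := by
      rw [← pow_add, show p-k+k = p by omega]
      exact Odd.neg_one_pow hpodd
    have hsq : (-1:ℚ)^k * (-1:ℚ)^k = 1 := by
      rw [← pow_add]; exact Even.neg_one_pow ⟨k, rfl⟩
    calc (-1:ℚ)^(p-k) = (-1:ℚ)^(p-k) * ((-1:ℚ)^k * (-1:ℚ)^k) := by rw [hsq, mul_one]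
      _ = ((-1:ℚ)^(p-k) * (-1:ℚ)^k) * (-1:ℚ)^k := by ring
      _ = -(-1:ℚ)^k := by rw [h1]; ring
  have hsgn : ∀ k : ℕ, Dp p 0 ((-1:ℚ)^k) := by
    intro k
    have := (Dp.int (p := p) (-1)).pow k
    simpa using this
  -- the sums
  set T := ∑ k ∈ Icc 1 h, (-1:ℚ)^k / (k:ℚ)^3 with hT
  set U := ∑ k ∈ Icc 1 (2*h), (-1:ℚ)^k / (k:ℚ)^3 with hU
  set A' := ∑ k ∈ Icc 1 h, ((k:ℚ)^3)⁻¹ with hA'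
  set Cs := ∑ k ∈ Icc 1 (2*h), ((k:ℚ)^3)⁻¹ with hCs
  set A := ∑ k ∈ Icc 1 h, (k:ℚ)^(p-4) with hA
  set B := bernoulli (p-3) with hB
  have c1 : Dp p 2 ((∑ k ∈ Finset.Icc 1 (p - 1), (-1 : ℚ) ^ k / (k : ℚ) ^ 2) + 2*(p:ℚ)*T) := by
    rw [show p - 1 = 2*h by omega, reflect_fold (fun k => (-1:ℚ)^k/(k:ℚ)^2) h, hT,
      Finset.mul_sum, ← Finset.sum_add_distrib]
    refine Dp.sum fun k hk => ?_
    obtain ⟨hk1, hk2⟩ := Finset.mem_Icc.mp hk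
    rw [show 2*h+1-k = p-k by omega]
    have hc : ((p-k:ℕ):ℚ) = (p:ℚ) - (k:ℚ) := hcast k (by omega)
    have hk0 : (k:ℚ) ≠ 0 := Nat.cast_ne_zero.mpr (by omega)
    have hpk0 : ((p-k:ℕ):ℚ) ≠ 0 := Nat.cast_ne_zero.mpr (by omega)
    have key : ((-1:ℚ)^k/(k:ℚ)^2 + (-1:ℚ)^(p-k)/((p-k:ℕ):ℚ)^2)
          + 2*(p:ℚ)*((-1:ℚ)^k/(k:ℚ)^3)
        = (p:ℚ)^2 * (((2*(p:ℤ) - 3*(k:ℤ)) : ℤ):ℚ) * (-1:ℚ)^k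
          * (((k:ℕ):ℚ)⁻¹)^3 * ((((p-k:ℕ)):ℚ)⁻¹)^2 := by
      have hpk' : (p:ℚ) - (k:ℚ) ≠ 0 := by rw [← hc]; exact hpk0
      rw [hsign k (by omega), hc]
      push_cast
      field_simp
      ring
    rw [key]
    exact ((((Dp.p_pow 2).mul (Dp.int _)).mul (hsgn k)).mul
      ((hinv k (by omega) (by omega)).pow 3)).mul ((hinv (p-k) (by omega) (by omega)).pow 2)
  have c2 : Dp p 1 (U - 2*T) := by
    rw [hU, reflect_fold (fun k => (-1:ℚ)^k/(k:ℚ)^3) h, hT, Finset.mul_sum,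
      ← Finset.sum_sub_distrib]
    refine Dp.sum fun k hk => ?_
    obtain ⟨hk1, hk2⟩ := Finset.mem_Icc.mp hk
    rw [show 2*h+1-k = p-k by omega]
    have hc : ((p-k:ℕ):ℚ) = (p:ℚ) - (k:ℚ) := hcast k (by omega)
    have hk0 : (k:ℚ) ≠ 0 := Nat.cast_ne_zero.mpr (by omega)
    have hpk0 : ((p-k:ℕ):ℚ) ≠ 0 := Nat.cast_ne_zero.mpr (by omega)
    have key : ((-1:ℚ)^k/(k:ℚ)^3 + (-1:ℚ)^(p-k)/((p-k:ℕ):ℚ)^3) - 2*((-1:ℚ)^k/(k:ℚ)^3)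
        = (p:ℚ) * (((-((p:ℤ)^2 - 3*(p:ℤ)*(k:ℤ) + 3*(k:ℤ)^2)) : ℤ):ℚ) * (-1:ℚ)^k
          * (((k:ℕ):ℚ)⁻¹)^3 * ((((p-k:ℕ)):ℚ)⁻¹)^3 := by
      have hpk' : (p:ℚ) - (k:ℚ) ≠ 0 := by rw [← hc]; exact hpk0
      rw [hsign k (by omega), hc]
      push_cast
      field_simp
      ring
    rw [key]
    exact (((Dp.p_self.mul (Dp.int _)).mul (hsgn k)).mul
      ((hinv k (by omega) (by omega)).pow 3)).mul ((hinv (p-k) (by omega) (by omega)).pow 3)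
  have c3 : U + Cs = A'/4 := by
    have hUC : U + Cs = ∑ k ∈ Icc 1 (2*h), ((-1:ℚ)^k/(k:ℚ)^3 + ((k:ℚ)^3)⁻¹) := by
      rw [hU, hCs, Finset.sum_add_distrib]
    rw [hUC, parity_fold (fun k => (-1:ℚ)^k/(k:ℚ)^3 + ((k:ℚ)^3)⁻¹) h, hA',
      Finset.sum_div]
    refine Finset.sum_congr rfl fun j hj => ?_
    obtain ⟨hj1, hj2⟩ := Finset.mem_Icc.mp hj
    have e1 : ((2*j-1:ℕ):ℚ) = 2*(j:ℚ)-1 := by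
      push_cast [Nat.cast_sub (show 1 ≤ 2*j by omega)]; ring
    have e2 : ((2*j:ℕ):ℚ) = 2*(j:ℚ) := by push_cast; ring
    have hodd : (-1:ℚ)^(2*j-1) = -1 := Odd.neg_one_pow ⟨j-1, by omega⟩
    have heven : (-1:ℚ)^(2*j) = 1 := Even.neg_one_pow ⟨j, by omega⟩
    have hj0 : (j:ℚ) ≠ 0 := Nat.cast_ne_zero.mpr (by omega)
    have hj1' : 2*(j:ℚ)-1 ≠ 0 := by
      have : (1:ℚ) ≤ (j:ℚ) := by exact_mod_cast hj1
      intro hc; nlinarith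
    simp only [hodd, heven, e1, e2]
    field_simp
    ring
  have c4 : Dp p 1 Cs := by
    rw [hCs, reflect_fold (fun k => ((k:ℚ)^3)⁻¹) h]
    refine Dp.sum fun k hk => ?_
    obtain ⟨hk1, hk2⟩ := Finset.mem_Icc.mp hk
    rw [show 2*h+1-k = p-k by omega]
    have hc : ((p-k:ℕ):ℚ) = (p:ℚ) - (k:ℚ) := hcast k (by omega)
    have hk0 : (k:ℚ) ≠ 0 := Nat.cast_ne_zero.mpr (by omega)
    have hpk0 : ((p-k:ℕ):ℚ) ≠ 0 := Nat.cast_ne_zero.mpr (by omega)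
    have key : ((k:ℚ)^3)⁻¹ + (((p-k:ℕ):ℚ)^3)⁻¹
        = (p:ℚ) * ((((p:ℤ))^2 - 3*(p:ℤ)*(k:ℤ) + 3*(k:ℤ)^2 : ℤ):ℚ)
          * (((k:ℕ):ℚ)⁻¹)^3 * ((((p-k:ℕ)):ℚ)⁻¹)^3 := by
      have hpk' : (p:ℚ) - (k:ℚ) ≠ 0 := by rw [← hc]; exact hpk0
      rw [hc]
      push_cast
      field_simp
      ring
    rw [key]
    exact ((Dp.p_self.mul (Dp.int _)).mul ((hinv k (by omega) (by omega)).pow 3)).mul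
      ((hinv (p-k) (by omega) (by omega)).pow 3)
  have c5 : Dp p 1 (A' - A) := by
    rw [hA', hA, ← Finset.sum_sub_distrib]
    refine Dp.sum fun k hk => ?_
    obtain ⟨hk1, hk2⟩ := Finset.mem_Icc.mp hk
    have hk0 : (k:ℚ) ≠ 0 := Nat.cast_ne_zero.mpr (by omega)
    have hfermat : (p:ℤ) ∣ (1 - (k:ℤ)^(p-1)) := by
      have hkz : ((k:ℕ) : ZMod p) ≠ 0 := by
        simpa [Ne, ZMod.natCast_eq_zero_iff] using
          (fun hd : p ∣ k => absurd (Nat.le_of_dvd (by omega) hd) (by omega))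
      apply (ZMod.intCast_zmod_eq_zero_iff_dvd _ _).mp
      push_cast
      rw [ZMod.pow_card_sub_one_eq_one hkz]
      ring
    have hpow : (k:ℚ)^(p-4) * (k:ℚ)^3 = (k:ℚ)^(p-1) := by
      rw [← pow_add]; congr 1; omega
    have key : ((k:ℚ)^3)⁻¹ - (k:ℚ)^(p-4)
        = ((1 - (k:ℤ)^(p-1) : ℤ):ℚ) * (((k:ℕ):ℚ)⁻¹)^3 := by
      push_cast
      field_simp
      linear_combination (-1:ℚ) * hpow
    rw [key]
    exact (Dp.int_dvd hfermat).mul ((hinv k (by omega) (by omega)).pow 3)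
  have c6 : Dp p 1 (A + 2*B) := by
    have hq1 : p - 3 = q + 1 := by omega
    have hq4 : p - 4 = q := by omega
    have hBq : B = bernoulli (q+1) := by rw [hB, hq1]
    set M : ℚ := ((h+1 : ℕ) : ℚ) with hM
    have hMval : M = ((p:ℚ)+1)/2 := by
      rw [hM]
      have hpc : (p:ℚ) = 2*(h:ℚ)+1 := by exact_mod_cast congrArg (Nat.cast (R := ℚ)) hp2h
      push_cast
      rw [hpc]; ring
    have hMsub : M - 2⁻¹ = (p:ℚ) * 2⁻¹ := by rw [hMval]; ring
    have hDM : Dp p 0 M := by rw [hM]; exact Dp.nat _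
    -- 6a/6b : A equals the Faulhaber sum
    have h6a : A = ∑ k ∈ range (h+1), (k:ℚ)^q := by
      rw [hA, hq4, show range (h+1) = insert 0 (Icc 1 h) by
        ext x; simp only [Finset.mem_range, Finset.mem_insert, Finset.mem_Icc]; omega,
        Finset.sum_insert (by simp)]
      rw [show ((0:ℕ):ℚ)^q = 0 by
        rw [Nat.cast_zero]; exact zero_pow (by omega)]
      ring
    have h6b := sum_range_pow (h+1) q
    have hAeq : A = ∑ i ∈ range (q+1),
        bernoulli i * (((q+1).choose i : ℕ):ℚ) * M^(q+1-i) / ((q:ℚ)+1) := h6a.trans h6b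
    set G' : ℚ := ∑ i ∈ range (q+1),
        bernoulli i * (((q+1).choose i : ℕ):ℚ) * ((2:ℚ)⁻¹)^(q+1-i) / ((q:ℚ)+1) with hG'
    have hdenq : ((q:ℚ)+1) = (((q+1:ℕ)):ℚ) := by push_cast; ring
    have hq1p : 0 < q+1 ∧ q+1 < p := by omega
    -- 6c : A - G' is divisible by p
    have h6c : Dp p 1 (A - G') := by
      rw [hAeq, hG', ← Finset.sum_sub_distrib]
      refine Dp.sum fun i hi => ?_
      have hiq : i ≤ q := by
        have := Finset.mem_range.mp hi; omega
      have hgeom := geom_sum₂_mul M ((2:ℚ)⁻¹) (q+1-i)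
      have hgeom' : M^(q+1-i) - ((2:ℚ)⁻¹)^(q+1-i)
          = (∑ j ∈ range (q+1-i), M^j * ((2:ℚ)⁻¹)^(q+1-i-1-j)) * ((p:ℚ) * 2⁻¹) := by
        rw [← hMsub, ← hgeom]
      have key : bernoulli i * (((q+1).choose i : ℕ):ℚ) * M^(q+1-i) / ((q:ℚ)+1)
          - bernoulli i * (((q+1).choose i : ℕ):ℚ) * ((2:ℚ)⁻¹)^(q+1-i) / ((q:ℚ)+1)
          = bernoulli i * (((q+1).choose i : ℕ):ℚ)
              * (∑ j ∈ range (q+1-i), M^j * ((2:ℚ)⁻¹)^(q+1-i-1-j)) * ((p:ℚ) * 2⁻¹)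
              / (((q+1:ℕ)):ℚ) := by
        push_cast
        linear_combination (bernoulli i * (((q+1).choose i : ℕ):ℚ) / ((q:ℚ)+1)) * hgeom'
      rw [key]
      have hsumD : Dp p 0 (∑ j ∈ range (q+1-i), M^j * ((2:ℚ)⁻¹)^(q+1-i-1-j)) :=
        Dp.sum fun j _ => (hDM.pow j).mul (h2inv.pow _)
      have hmul : Dp p 1 (bernoulli i * (((q+1).choose i : ℕ):ℚ)
          * (∑ j ∈ range (q+1-i), M^j * ((2:ℚ)⁻¹)^(q+1-i-1-j)) * ((p:ℚ) * 2⁻¹)) :=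
        (((bernoulli_padic_integral i (by omega)).mul (Dp.nat _)).mul hsumD).mul
          (Dp.p_self.mul h2inv)
      exact hmul.div_nat (by
        intro hd; have : p ≤ q+1 := Nat.le_of_dvd (by omega) hd; omega)
    -- 6d : closed form of G'
    have hL5 := sum_choose_bernoulli_two_pow (q+1)
    have hsum1 : ∑ i ∈ range (q+1), (((q+1).choose i : ℕ):ℚ) * bernoulli i * 2^i
        = (2 - 2^(q+2)) * bernoulli (q+1) := by
      rw [Finset.sum_range_succ] at hL5
      have hlast : (((q+1).choose (q+1) : ℕ):ℚ) = 1 := by simp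
      rw [hlast] at hL5
      linear_combination hL5
    have h6d : G' * (((q:ℚ)+1) * 2^(q+1))
        = ∑ i ∈ range (q+1), (((q+1).choose i : ℕ):ℚ) * bernoulli i * 2^i := by
      rw [hG', Finset.sum_mul]
      refine Finset.sum_congr rfl fun i hi => ?_
      have hiq : i ≤ q := by
        have := Finset.mem_range.mp hi; omega
      have h2pow : (2:ℚ)^(q+1) = 2^(q+1-i) * 2^i := by
        rw [← pow_add]; congr 1; omega
      have hinvpow : ((2:ℚ)⁻¹)^(q+1-i) * (2:ℚ)^(q+1-i) = 1 := by
        rw [← mul_pow]; norm_num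
      have hq0 : ((q:ℚ)+1) ≠ 0 := by positivity
      calc bernoulli i * (((q+1).choose i : ℕ):ℚ) * ((2:ℚ)⁻¹)^(q+1-i) / ((q:ℚ)+1)
            * (((q:ℚ)+1) * 2^(q+1))
          = bernoulli i * (((q+1).choose i : ℕ):ℚ)
              * (((2:ℚ)⁻¹)^(q+1-i) * (2:ℚ)^(q+1-i)) * 2^i * (((q:ℚ)+1)/((q:ℚ)+1)) := by
            rw [h2pow]; ring
        _ = (((q+1).choose i : ℕ):ℚ) * bernoulli i * 2^i := by
            rw [hinvpow, div_self hq0]; ring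
    have hdenne : (((q:ℚ)+1) * 2^(q+1)) ≠ 0 := by positivity
    have hG'val : G' = (2 - 2^(q+2)) * bernoulli (q+1) / (((q:ℚ)+1) * 2^(q+1)) := by
      rw [eq_div_iff hdenne, h6d, hsum1]
    -- 6e : G' + 2B divisible by p
    have hNdvd : (p:ℤ) ∣ (2 + (q:ℤ)*2^(q+2)) := by
      apply (ZMod.intCast_zmod_eq_zero_iff_dvd _ _).mp
      push_cast
      have hq' : ((q:ℕ) : ZMod p) = -4 := by
        have h1 : ((q:ℕ) : ZMod p) = ((p - 4:ℕ) : ZMod p) := by rw [hq4]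
        have h2 : ((p - 4:ℕ) : ZMod p) = ((p:ℕ) : ZMod p) - ((4:ℕ) : ZMod p) := by
          rw [← Nat.cast_sub (by omega : 4 ≤ p)]
        rw [h1, h2, ZMod.natCast_self]
        push_cast
        ring
      rw [hq']
      have hfer : (2:ZMod p)^p = 2 := ZMod.pow_card 2
      calc (2:ZMod p) + (-4) * 2^(q+2) = 2 - 2^(q+4) := by ring
        _ = 2 - 2^p := by rw [show q+4 = p by omega]
        _ = 0 := by rw [hfer]; ring
    have key6 : G' + 2*B = ((2 + (q:ℤ)*2^(q+2) : ℤ):ℚ) * bernoulli (q+1)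
        * (((q+1:ℕ):ℚ))⁻¹ * ((2:ℚ)⁻¹)^(q+1) := by
      rw [hG'val, hBq]
      have h2q : ((2:ℚ)⁻¹)^(q+1) = ((2:ℚ)^(q+1))⁻¹ := by rw [inv_pow]
      rw [h2q]
      push_cast
      field_simp
      ring
    rw [show A + 2*B = (A - G') + (G' + 2*B) by ring, key6]
    refine h6c.add ?_
    exact (((Dp.int_dvd hNdvd).mul (bernoulli_padic_integral (q+1) (by omega))).mul
      (hinv (q+1) (by omega) (by omega))).mul (h2inv.pow (q+1))
  have cT : Dp p 1 (T + B/4) := by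
    have hlin : T + B/4 = (-(1:ℚ)/2)*(U - 2*T) + (1/8)*(A' - A) + (1/8)*(A + 2*B)
        + (-(1:ℚ)/2)*Cs := by linear_combination (1/2 : ℚ) * c3
    rw [hlin]
    have h8 : Dp p 0 ((1:ℚ)/8) := by
      have := h2inv.pow 3
      simpa [one_div, show ((2:ℚ)⁻¹)^3 = (8:ℚ)⁻¹ by norm_num] using this
    have hn2 : Dp p 0 (-(1:ℚ)/2) := by
      have := ((Dp.int (p := p) (-1)).mul h2inv)
      simpa [div_eq_mul_inv] using this
    exact (((hn2.mul c2).add (h8.mul c5)).add (h8.mul c6)).add (hn2.mul c4)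
  have cfinal : Dp p 2 ((∑ k ∈ Finset.Icc 1 (p - 1), (-1 : ℚ) ^ k / (k : ℚ) ^ 2)
      - (p:ℚ)/2 * B) := by
    have hlin2 : (∑ k ∈ Finset.Icc 1 (p - 1), (-1 : ℚ) ^ k / (k : ℚ) ^ 2) - (p:ℚ)/2*B
        = ((∑ k ∈ Finset.Icc 1 (p - 1), (-1 : ℚ) ^ k / (k : ℚ) ^ 2) + 2*(p:ℚ)*T)
          - 2*(p:ℚ)*(T + B/4) := by ring
    rw [hlin2]
    refine c1.sub ?_
    have := ((Dp.int (p := p) 2).mul (Dp.p_self)).mul cT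
    simpa using this
  exact cfinal.num_dvd
end
end

section
/- Let p > 3 be a prime. Then ∑_{k=1}^{p-1} (−1)^k/k³ ≡ −B_{p-3}/2 (mod p). -/
open Finset PowerSeries

namespace Stmt5Aux

variable {p : ℕ}

lemma den_add (hp : p.Prime) {q r : ℚ} (hq : ¬ p ∣ q.den) (hr : ¬ p ∣ r.den) :
    ¬ p ∣ (q + r).den := fun h => by
  rcases (Nat.Prime.dvd_mul hp).1 (h.trans (Rat.add_den_dvd q r)) with h' | h'
  exacts [hq h', hr h']

lemma den_mul (hp : p.Prime) {q r : ℚ} (hq : ¬ p ∣ q.den) (hr : ¬ p ∣ r.den) :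
    ¬ p ∣ (q * r).den := fun h => by
  rcases (Nat.Prime.dvd_mul hp).1 (h.trans (Rat.mul_den_dvd q r)) with h' | h'
  exacts [hq h', hr h']

lemma den_neg {q : ℚ} (hq : ¬ p ∣ q.den) : ¬ p ∣ (-q).den := by
  rwa [Rat.neg_den]

lemma den_int (hp : p.Prime) (a : ℤ) : ¬ p ∣ ((a : ℚ)).den := by
  rw [Rat.den_intCast]; intro h; exact hp.one_lt.ne' (Nat.dvd_one.mp h)

lemma den_nat (hp : p.Prime) (a : ℕ) : ¬ p ∣ ((a : ℚ)).den := by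
  rw [Rat.den_natCast]; intro h; exact hp.one_lt.ne' (Nat.dvd_one.mp h)

lemma den_pow (hp : p.Prime) {q : ℚ} (hq : ¬ p ∣ q.den) (e : ℕ) : ¬ p ∣ (q ^ e).den := by
  induction e with
  | zero => simpa using den_nat hp 1
  | succ e ih => rw [pow_succ]; exact den_mul hp ih hq

lemma den_inv_int (hp : p.Prime) {b : ℤ} (hb : ¬ (p : ℤ) ∣ b) : ¬ p ∣ (((b : ℚ))⁻¹).den := by
  intro h
  have h1 : ((b : ℚ))⁻¹ = Rat.divInt 1 b := by
    rw [Rat.divInt_eq_div]; push_cast; rw [one_div]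
  have := Rat.den_dvd 1 b
  rw [← h1] at this
  exact hb (dvd_trans (Int.natCast_dvd_natCast.2 h) this)

lemma den_div_int (hp : p.Prime) {q : ℚ} (hq : ¬ p ∣ q.den) {b : ℤ} (hb : ¬ (p : ℤ) ∣ b) :
    ¬ p ∣ (q / (b : ℚ)).den := by
  rw [div_eq_mul_inv]; exact den_mul hp hq (den_inv_int hp hb)

lemma den_sum (hp : p.Prime) {ι : Type*} {s : Finset ι} {f : ι → ℚ}
    (h : ∀ i ∈ s, ¬ p ∣ (f i).den) : ¬ p ∣ (∑ i ∈ s, f i).den := by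
  classical
  induction s using Finset.induction_on with
  | empty => simpa using den_nat hp 0
  | insert _ _ hns ih =>
    rw [Finset.sum_insert hns]
    exact den_add hp (h _ (Finset.mem_insert_self _ _))
      (ih fun i hi => h i (Finset.mem_insert_of_mem hi))


section Cast

variable [hpf : Fact p.Prime]

lemma hp' : p.Prime := hpf.out

lemma dz {q : ℚ} (hq : ¬ p ∣ q.den) : ((q.den : ZMod p)) ≠ 0 := by
  rwa [Ne, ZMod.natCast_eq_zero_iff]

lemma cast_add' {q r : ℚ} (hq : ¬ p ∣ q.den) (hr : ¬ p ∣ r.den) :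
    ((q + r : ℚ) : ZMod p) = (q : ZMod p) + (r : ZMod p) :=
  Rat.cast_add_of_ne_zero (dz hq) (dz hr)

lemma cast_sub' {q r : ℚ} (hq : ¬ p ∣ q.den) (hr : ¬ p ∣ r.den) :
    ((q - r : ℚ) : ZMod p) = (q : ZMod p) - (r : ZMod p) :=
  Rat.cast_sub_of_ne_zero (dz hq) (dz hr)

lemma cast_mul' {q r : ℚ} (hq : ¬ p ∣ q.den) (hr : ¬ p ∣ r.den) :
    ((q * r : ℚ) : ZMod p) = (q : ZMod p) * (r : ZMod p) :=
  Rat.cast_mul_of_ne_zero (dz hq) (dz hr)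

lemma cast_pow' {q : ℚ} (hq : ¬ p ∣ q.den) (e : ℕ) :
    ((q ^ e : ℚ) : ZMod p) = (q : ZMod p) ^ e := by
  induction e with
  | zero => norm_num
  | succ e ih => rw [pow_succ, cast_mul' (den_pow hp' hq e) hq, ih, pow_succ]

lemma cast_div_int' {q : ℚ} (hq : ¬ p ∣ q.den) {b : ℤ} (hb : ¬ (p : ℤ) ∣ b) :
    ((q / (b : ℚ) : ℚ) : ZMod p) = (q : ZMod p) / (b : ZMod p) := by
  have hb' : (((b : ℚ)).num : ZMod p) ≠ 0 := by
    rw [Rat.num_intCast, Ne, ZMod.intCast_zmod_eq_zero_iff_dvd]; exact hb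
  rw [Rat.cast_div_of_ne_zero (dz hq) hb', Rat.cast_intCast]

lemma cast_sum' {ι : Type*} {s : Finset ι} {f : ι → ℚ}
    (h : ∀ i ∈ s, ¬ p ∣ (f i).den) :
    ((∑ i ∈ s, f i : ℚ) : ZMod p) = ∑ i ∈ s, ((f i : ℚ) : ZMod p) := by
  classical
  induction s using Finset.induction_on with
  | empty => norm_num
  | @insert a s hns ih =>
    rw [Finset.sum_insert hns, Finset.sum_insert hns,
      cast_add' (h _ (Finset.mem_insert_self _ _))
        (den_sum hp' fun i hi => h i (Finset.mem_insert_of_mem hi)),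
      ih fun i hi => h i (Finset.mem_insert_of_mem hi)]

lemma num_dvd_of_cast_eq_zero {q : ℚ} (hq : ¬ p ∣ q.den) (h : ((q : ℚ) : ZMod p) = 0) :
    (p : ℤ) ∣ q.num := by
  rw [Rat.cast_def, div_eq_zero_iff] at h
  rcases h with h | h
  · rwa [← ZMod.intCast_zmod_eq_zero_iff_dvd]
  · exact absurd h (dz hq)

end Cast


section Sums

variable [hpf : Fact p.Prime]

lemma sum_univ_eq_sum_range {M : Type*} [AddCommMonoid M] (f : ZMod p → M) :
    ∑ x : ZMod p, f x = ∑ k ∈ range p, f (k : ZMod p) := by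
  have : NeZero p := ⟨hp'.ne_zero⟩
  refine Finset.sum_nbij' (fun x => x.val) (fun k => (k : ZMod p)) ?_ ?_ ?_ ?_ ?_
  · intro a _; exact Finset.mem_range.2 (ZMod.val_lt a)
  · intro a _; exact Finset.mem_univ _
  · intro a _; exact ZMod.natCast_rightInverse a
  · intro a ha; exact ZMod.val_cast_of_lt (Finset.mem_range.1 ha)
  · intro a _; congr 1; exact (ZMod.natCast_rightInverse a).symm

lemma sum_range_pow_zmod_eq_zero {i : ℕ} (h0 : 0 < i) (h1 : i < p - 1) :
    ∑ k ∈ range p, ((k : ZMod p)) ^ i = 0 := by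
  rw [← sum_univ_eq_sum_range fun x => x ^ i]
  have : Fintype.card (ZMod p) = p := ZMod.card p
  exact FiniteField.sum_pow_lt_card_sub_one (ZMod p) i (by rwa [this])

lemma dvd_sum_range_pow {i : ℕ} (h0 : 0 < i) (h1 : i < p - 1) :
    (p : ℤ) ∣ ∑ k ∈ range p, (k : ℤ) ^ i := by
  rw [← ZMod.intCast_zmod_eq_zero_iff_dvd]
  push_cast
  exact sum_range_pow_zmod_eq_zero h0 h1

end Sums

lemma sum_range_two_mul {M : Type*} [AddCommMonoid M] (g : ℕ → M) (n : ℕ) :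
    ∑ k ∈ range (2 * n), g k = ∑ j ∈ range n, (g (2 * j) + g (2 * j + 1)) := by
  induction n with
  | zero => simp
  | succ n ih =>
    rw [Nat.mul_succ, Finset.sum_range_succ, Finset.sum_range_succ, Finset.sum_range_succ, ← ih,
      ← add_assoc]


section Half

lemma exp_sub_one_ne_zero : (exp ℚ - 1 : ℚ⟦X⟧) ≠ 0 := by
  intro h
  have := congrArg (PowerSeries.coeff (R := ℚ) 1) h
  simp [PowerSeries.coeff_exp] at this

lemma bernoulli_eval_half (N : ℕ) :
    (Polynomial.bernoulli N).eval (1/2 : ℚ) = (2 * (1/2:ℚ)^N - 1) * bernoulli N := by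
  have hG := Polynomial.bernoulli_generating_function (1/2 : ℚ)
  have hF : bernoulliPowerSeries ℚ * (exp ℚ - 1) = X := bernoulliPowerSeries_mul_exp_sub_one ℚ
  set F : ℚ⟦X⟧ := bernoulliPowerSeries ℚ with hFdef
  set R : ℚ⟦X⟧ := rescale (1/2 : ℚ) (exp ℚ) with hRdef
  have hRR : R * R = exp ℚ := by
    rw [hRdef, exp_mul_exp_eq_exp_add]
    norm_num
  have hsplit : (exp ℚ - 1 : ℚ⟦X⟧) = (R - 1) * (R + 1) := by
    have : (R - 1) * (R + 1) = R * R - 1 := by ring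
    rw [this, hRR]
  have hresc : rescale (1/2 : ℚ) F * (R - 1) = PowerSeries.C (1/2 : ℚ) * X := by
    have : rescale (1/2 : ℚ) F * (R - 1) = rescale (1/2 : ℚ) (F * (exp ℚ - 1)) := by
      rw [map_mul, map_sub, map_one, hRdef]
    rw [this, hF, rescale_X]
  have h2 : (2 : ℚ⟦X⟧) * PowerSeries.C (1/2 : ℚ) = 1 := by
    rw [← map_ofNat (PowerSeries.C (R := ℚ)) 2, ← map_mul]
    norm_num
  have key : (PowerSeries.mk fun n =>
        Polynomial.aeval (1/2:ℚ) ((1 / (n.factorial : ℚ)) • Polynomial.bernoulli n))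
      = 2 * rescale (1/2 : ℚ) F - F := by
    apply mul_right_cancel₀ exp_sub_one_ne_zero
    rw [hG, sub_mul, hF]
    symm
    calc (2 * rescale (1/2:ℚ) F) * (exp ℚ - 1) - X
        = (2 : ℚ⟦X⟧) * (rescale (1/2:ℚ) F * (R - 1)) * (R + 1) - X := by rw [hsplit]; ring
      _ = (2 * PowerSeries.C (1/2 : ℚ)) * (X * (R + 1)) - X := by rw [hresc]; ring
      _ = X * R := by rw [h2, one_mul]; ring
  have hcoeff := congrArg (PowerSeries.coeff (R := ℚ) N) key
  have hfac : ((N.factorial : ℚ)) ≠ 0 := by exact_mod_cast N.factorial_ne_zero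
  have hFc : PowerSeries.coeff (R := ℚ) N F = bernoulli N / (N.factorial : ℚ) := by
    rw [hFdef, bernoulliPowerSeries, PowerSeries.coeff_mk]
    simp
  have haev : Polynomial.aeval (1/2:ℚ) ((1 / (N.factorial : ℚ)) • Polynomial.bernoulli N)
      = (1 / (N.factorial : ℚ)) * (Polynomial.bernoulli N).eval (1/2:ℚ) := by
    rw [map_smul, smul_eq_mul, Polynomial.coe_aeval_eq_eval]
  rw [PowerSeries.coeff_mk, haev, map_sub, two_mul, map_add, PowerSeries.coeff_rescale,
    hFc] at hcoeff
  refine mul_left_cancel₀ (show (1/(N.factorial:ℚ)) ≠ 0 from one_div_ne_zero hfac) ?_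
  rw [hcoeff]
  field_simp
  ring

lemma bernoulli_poly_eval (N : ℕ) (x : ℚ) :
    (Polynomial.bernoulli N).eval x
      = ∑ i ∈ range (N + 1), bernoulli i * (N.choose i) * x ^ (N - i) := by
  rw [Polynomial.bernoulli, Polynomial.eval_finset_sum]
  exact Finset.sum_congr rfl fun i _ => by rw [Polynomial.eval_monomial]

lemma bernoulli_half_sum (N : ℕ) :
    ∑ i ∈ range (N + 1), bernoulli i * (N.choose i) * (1/2:ℚ) ^ (N - i)
      = (2 * (1/2:ℚ)^N - 1) * bernoulli N := by
  rw [← bernoulli_poly_eval, bernoulli_eval_half]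

end Half


section Bint

variable [hpf : Fact p.Prime]

lemma den_div_p (hp : p.Prime) {x : ℚ} (hx : ¬ p ∣ x.den) (hnum : (p : ℤ) ∣ x.num) :
    ¬ p ∣ (x / (p : ℚ)).den := by
  obtain ⟨c, hc⟩ := hnum
  have hden : ((x.den : ℚ)) ≠ 0 := by exact_mod_cast x.den_nz
  have hpq : ((p : ℚ)) ≠ 0 := by exact_mod_cast hp.ne_zero
  have hxd : x / (p : ℚ) = ((c : ℚ)) / ((x.den : ℚ)) := by
    have h0 : x = ((p : ℚ) * (c : ℚ)) / ((x.den : ℚ)) := by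
      conv_lhs => rw [← Rat.num_div_den x]
      rw [hc]
      push_cast
      ring
    conv_lhs => rw [h0]
    rw [div_div, mul_comm ((x.den : ℚ)) ((p : ℚ)), ← div_div, mul_comm ((p : ℚ)) ((c : ℚ)),
      mul_div_assoc, div_self hpq, mul_one]
  have h2 : x / (p : ℚ) = Rat.divInt c (x.den : ℤ) := by
    rw [Rat.divInt_eq_div, hxd]; norm_num
  intro h
  have := Rat.den_dvd c (x.den : ℤ)
  rw [← h2] at this
  have : (x / (p:ℚ)).den ∣ x.den := by exact_mod_cast this
  exact hx (dvd_trans h this)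

lemma den_term (hp : p.Prime) {B : ℚ} (hB : ¬ p ∣ B.den) (c x e : ℕ) {d : ℕ} (hd : ¬ p ∣ d) :
    ¬ p ∣ (B * (c : ℚ) * ((x : ℚ)) ^ e / ((d : ℚ))).den := by
  have hd' : ¬ (p : ℤ) ∣ (d : ℤ) := fun h => hd (Int.natCast_dvd_natCast.1 h)
  have hcast : ((d : ℚ)) = (((d : ℤ)) : ℚ) := by push_cast; ring
  rw [hcast]
  exact den_div_int hp (den_mul hp (den_mul hp hB (den_nat hp c))
    (den_pow hp (den_nat hp x) e)) hd'

lemma cast_term {B : ℚ} (hB : ¬ p ∣ B.den) (c x e : ℕ) {d : ℕ} (hd : ¬ p ∣ d) :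
    ((B * (c : ℚ) * ((x : ℚ)) ^ e / ((d : ℚ)) : ℚ) : ZMod p)
      = ((B : ℚ) : ZMod p) * (c : ZMod p) * ((x : ZMod p)) ^ e / ((d : ZMod p)) := by
  have hd' : ¬ (p : ℤ) ∣ (d : ℤ) := fun h => hd (Int.natCast_dvd_natCast.1 h)
  have hcast : ((d : ℚ)) = (((d : ℤ)) : ℚ) := by push_cast; ring
  have h1 : ¬ p ∣ (B * (c : ℚ)).den := den_mul hp' hB (den_nat hp' c)
  have h2 : ¬ p ∣ (((x : ℚ)) ^ e).den := den_pow hp' (den_nat hp' x) e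
  rw [hcast, cast_div_int' (den_mul hp' h1 h2) hd',
    cast_mul' h1 h2, cast_mul' hB (den_nat hp' c), cast_pow' (den_nat hp' x)]
  push_cast
  ring

lemma bint : ∀ m : ℕ, m < p - 1 → ¬ p ∣ (bernoulli m).den := by
  have hpp : p.Prime := hpf.out
  intro m
  induction m using Nat.strong_induction_on with
  | _ m ih =>
    intro hm
    rcases Nat.eq_zero_or_pos m with rfl | hm0
    · rw [bernoulli_zero]
      have h1 : ¬ p ∣ (((1 : ℕ) : ℚ)).den := den_nat hpp 1
      simpa using h1
    have hp2 := hpp.two_le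
    have hmp : m + 1 < p := by omega
    have hd : ¬ p ∣ (m + 1) := Nat.not_dvd_of_pos_of_lt (by omega) hmp
    -- Faulhaber at n = p
    have hFa := sum_range_pow p m
    set Sz : ℤ := ∑ k ∈ range p, (k : ℤ) ^ m with hSzdef
    have hSz : ((Sz : ℚ)) = ∑ k ∈ range p, (k : ℚ) ^ m := by rw [hSzdef]; push_cast; rfl
    have hdvd : (p : ℤ) ∣ Sz := dvd_sum_range_pow hm0 hm
    -- canonical form of the terms
    have hFa' : ((Sz : ℚ)) = (∑ i ∈ range m,
          bernoulli i * (((m+1).choose i : ℕ) : ℚ) * ((p : ℚ)) ^ (m + 1 - i) / (((m+1 : ℕ)) : ℚ))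
        + bernoulli m * (p : ℚ) := by
      rw [hSz, hFa, Finset.sum_range_succ]
      congr 1
      · apply Finset.sum_congr rfl
        intro i _
        push_cast
        ring
      · have hch : (m+1).choose m = m + 1 := by
          rw [Nat.choose_succ_self_right]
        have he : m + 1 - m = 1 := by omega
        rw [hch, he, pow_one]
        have hne : ((m : ℚ)) + 1 ≠ 0 := by positivity
        push_cast
        field_simp
    set Sig : ℚ := ∑ i ∈ range m,
        bernoulli i * (((m+1).choose i : ℕ) : ℚ) * ((p : ℚ)) ^ (m + 1 - i) / (((m+1 : ℕ)) : ℚ)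
      with hSigdef
    have hterm_den : ∀ i ∈ range m, ¬ p ∣
        (bernoulli i * (((m+1).choose i : ℕ) : ℚ) * ((p : ℚ)) ^ (m + 1 - i)
          / (((m+1 : ℕ)) : ℚ)).den := by
      intro i hi
      have him : i < m := Finset.mem_range.1 hi
      exact den_term hpp (ih i him (by omega)) _ _ _ hd
    have hSigden : ¬ p ∣ Sig.den := den_sum hpp hterm_den
    set x : ℚ := ((Sz : ℚ)) - Sig with hxdef
    have hxden : ¬ p ∣ x.den := by
      rw [hxdef, sub_eq_add_neg]
      exact den_add hpp (den_int hpp Sz) (den_neg hSigden)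
    have hxcast : ((x : ℚ) : ZMod p) = 0 := by
      rw [hxdef, cast_sub' (den_int hpp Sz) hSigden, Rat.cast_intCast,
        (ZMod.intCast_zmod_eq_zero_iff_dvd Sz p).2 hdvd, hSigdef,
        cast_sum' hterm_den]
      rw [zero_sub, neg_eq_zero]
      apply Finset.sum_eq_zero
      intro i hi
      have him : i < m := Finset.mem_range.1 hi
      rw [cast_term (ih i him (by omega)) _ _ _ hd,
        ZMod.natCast_self, zero_pow (by omega)]
      ring
    have hxnum : (p : ℤ) ∣ x.num := num_dvd_of_cast_eq_zero hxden hxcast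
    have hsolve : bernoulli m = x / (p : ℚ) := by
      have hpq : ((p : ℚ)) ≠ 0 := by exact_mod_cast hpp.ne_zero
      rw [hxdef]
      field_simp
      linarith [hFa']
    rw [hsolve]
    exact den_div_p hpp hxden hxnum

end Bint

end Stmt5Aux
section MainAux
namespace Stmt5Aux

variable {p : ℕ} [hpf : Fact p.Prime]

lemma den_term0 (hp : p.Prime) {B : ℚ} (hB : ¬ p ∣ B.den) (c x e : ℕ) :
    ¬ p ∣ (B * (c : ℚ) * ((x : ℚ)) ^ e).den :=
  den_mul hp (den_mul hp hB (den_nat hp c)) (den_pow hp (den_nat hp x) e)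

lemma cast_term0 {B : ℚ} (hB : ¬ p ∣ B.den) (c x e : ℕ) :
    ((B * (c : ℚ) * ((x : ℚ)) ^ e : ℚ) : ZMod p)
      = ((B : ℚ) : ZMod p) * (c : ZMod p) * ((x : ZMod p)) ^ e := by
  have h1 : ¬ p ∣ (B * (c : ℚ)).den := den_mul hp' hB (den_nat hp' c)
  rw [cast_mul' h1 (den_pow hp' (den_nat hp' x) e), cast_mul' hB (den_nat hp' c),
    cast_pow' (den_nat hp' x)]
  push_cast
  ring

end Stmt5Aux
end MainAux

open Stmt5Aux Finset in
/-- For a prime `p > 3`,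
`∑_{k=1}^{p-1} (-1)^k/k³ ≡ -B_{p-3}/2 (mod p)`. -/
theorem stmt_5 (p : ℕ) (hp : p.Prime) (hp3 : 3 < p) :
    (p : ℤ) ∣
      ((∑ k ∈ Finset.Icc 1 (p - 1), (-1 : ℚ) ^ k / (k : ℚ) ^ 3)
        - (-(bernoulli (p - 3)) / 2)).num := by
  haveI hpf : Fact p.Prime := ⟨hp⟩
  have hp4 : p ≠ 4 := by intro h; rw [h] at hp; norm_num at hp
  have hp5 : 5 ≤ p := by
    have := hp.two_le
    rcases Nat.lt_or_ge p 5 with h | h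
    · omega
    · exact h
  set m := p - 4 with hmdef
  have hm4 : m + 4 = p := by omega
  have hp31 : p - 3 = m + 1 := by omega
  obtain ⟨n, hn⟩ : ∃ n, p = 2 * n + 1 := by
    have := hp.odd_of_ne_two (by omega)
    obtain ⟨n, hn⟩ := this
    exact ⟨n, by omega⟩
  have hndvd2 : ¬ (p : ℤ) ∣ 2 := by
    intro h
    have := Int.le_of_dvd (by norm_num) h
    omega
  have h2K : (2 : ZMod p) ≠ 0 := by
    have h : ¬ p ∣ 2 := by intro h; have := Nat.le_of_dvd (by norm_num) h; omega
    have : ((2 : ℕ) : ZMod p) ≠ 0 := by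
      rw [Ne, ZMod.natCast_eq_zero_iff]; exact h
    simpa using this
  have h3K : (3 : ZMod p) ≠ 0 := by
    have h : ¬ p ∣ 3 := by intro h; have := Nat.le_of_dvd (by norm_num) h; omega
    have : ((3 : ℕ) : ZMod p) ≠ 0 := by
      rw [Ne, ZMod.natCast_eq_zero_iff]; exact h
    simpa using this
  have hdm1 : ¬ p ∣ (m + 1) := Nat.not_dvd_of_pos_of_lt (by omega) (by omega)
  have hB : ¬ p ∣ (bernoulli (m + 1)).den := bint (m + 1) (by omega)
  have hBi : ∀ i, i < m + 1 → ¬ p ∣ (bernoulli i).den := fun i hi => bint i (by omega)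
  set β : ZMod p := ((bernoulli (m + 1) : ℚ) : ZMod p) with hbdef
  -- LHS term analysis
  have hterm : ∀ k ∈ Finset.Icc 1 (p - 1),
      (¬ p ∣ ((-1 : ℚ) ^ k / (k : ℚ) ^ 3).den) ∧
      ((((-1 : ℚ) ^ k / (k : ℚ) ^ 3 : ℚ)) : ZMod p)
        = (-1 : ZMod p) ^ k * ((k : ZMod p)) ^ m := by
    intro k hk
    obtain ⟨hk1, hk2⟩ := Finset.mem_Icc.1 hk
    have hkp : k < p := by omega
    have hpk : ¬ p ∣ k := Nat.not_dvd_of_pos_of_lt (by omega) hkp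
    have hpk3 : ¬ (p : ℤ) ∣ ((k ^ 3 : ℕ) : ℤ) := by
      rw [Int.natCast_dvd_natCast]
      intro h
      exact hpk (hp.dvd_of_dvd_pow h)
    have heq : (-1 : ℚ) ^ k / (k : ℚ) ^ 3 = ((((-1) ^ k : ℤ)) : ℚ) / (((k ^ 3 : ℕ) : ℤ) : ℚ) := by
      push_cast
      ring
    have hkK : ((k : ZMod p)) ≠ 0 := by
      rw [Ne, ZMod.natCast_eq_zero_iff]; exact hpk
    constructor
    · rw [heq]; exact den_div_int hp (den_int hp _) hpk3
    · rw [heq, cast_div_int' (den_int hp _) hpk3]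
      have hfl : ((k : ZMod p)) ^ 3 * ((k : ZMod p)) ^ m = 1 := by
        rw [← pow_add, show 3 + m = p - 1 by omega]
        exact ZMod.pow_card_sub_one_eq_one hkK
      have hc : (((k ^ 3 : ℕ) : ℤ) : ZMod p) = ((k : ZMod p)) ^ 3 := by push_cast; ring
      rw [div_eq_mul_inv, hc, inv_eq_of_mul_eq_one_right hfl]
      push_cast
      ring
  have hLden : ¬ p ∣ (∑ k ∈ Finset.Icc 1 (p - 1), (-1 : ℚ) ^ k / (k : ℚ) ^ 3).den :=
    den_sum hp fun k hk => (hterm k hk).1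
  have hLcast : ((∑ k ∈ Finset.Icc 1 (p - 1), (-1 : ℚ) ^ k / (k : ℚ) ^ 3 : ℚ) : ZMod p)
      = ∑ k ∈ Finset.Icc 1 (p - 1), (-1 : ZMod p) ^ k * ((k : ZMod p)) ^ m := by
    rw [cast_sum' (fun k hk => (hterm k hk).1)]
    exact Finset.sum_congr rfl fun k hk => (hterm k hk).2
  -- RHS analysis
  have hr2 : ((-(bernoulli (m + 1))) / 2 : ℚ) = (-(bernoulli (m + 1))) / (((2 : ℤ)) : ℚ) := by
    norm_num
  have hRden : ¬ p ∣ ((-(bernoulli (p - 3))) / 2 : ℚ).den := by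
    rw [hp31, hr2]
    exact den_div_int hp (den_neg hB) hndvd2
  have hRcast : (((-(bernoulli (p - 3))) / 2 : ℚ) : ZMod p) = -β / 2 := by
    rw [hp31, hr2, cast_div_int' (den_neg hB) hndvd2, Rat.cast_neg, hbdef]
    push_cast
    ring
  -- reduce to ZMod p computation
  have hqden : ¬ p ∣ ((∑ k ∈ Finset.Icc 1 (p - 1), (-1 : ℚ) ^ k / (k : ℚ) ^ 3)
      - (-(bernoulli (p - 3)) / 2)).den := by
    rw [sub_eq_add_neg]
    exact den_add hp hLden (den_neg hRden)
  apply num_dvd_of_cast_eq_zero hqden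
  rw [cast_sub' hLden hRden, hLcast, hRcast]
  -- now a pure ZMod p computation
  have hm1 : m ≠ 0 := by omega
  have hext : ∑ k ∈ Finset.Icc 1 (p - 1), (-1 : ZMod p) ^ k * ((k : ZMod p)) ^ m
      = ∑ k ∈ Finset.range p, (-1 : ZMod p) ^ k * ((k : ZMod p)) ^ m := by
    rw [Finset.range_eq_Ico, Finset.sum_eq_sum_Ico_succ_bot (by omega : 0 < p),
      show Finset.Icc 1 (p - 1) = Finset.Ico 1 p by rw [← Finset.Ico_add_one_right_eq_Icc]; congr 1; omega]
    simp [zero_pow hm1]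
  have hS : ∑ k ∈ Finset.range p, ((k : ZMod p)) ^ m = 0 :=
    sum_range_pow_zmod_eq_zero (by omega) (by omega)
  set T : ZMod p := ((∑ j ∈ Finset.range (n + 1), j ^ m : ℕ) : ZMod p) with hTdef
  have hT1 : ∑ j ∈ Finset.range (n + 1), ((j : ZMod p)) ^ m = T := by
    rw [hTdef]; push_cast; rfl
  have hA2T : ∑ k ∈ Finset.range p, (-1 : ZMod p) ^ k * ((k : ZMod p)) ^ m
      = 2 ^ (m + 1) * T := by
    have hAS : ∑ k ∈ Finset.range p, (-1 : ZMod p) ^ k * ((k : ZMod p)) ^ m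
        = ∑ k ∈ Finset.range p, ((-1 : ZMod p) ^ k + 1) * ((k : ZMod p)) ^ m := by
      simp only [add_mul, one_mul, Finset.sum_add_distrib, hS, add_zero]
    have hev : ∀ j : ℕ,
        ((-1 : ZMod p) ^ (2 * j) + 1) * (((2 * j : ℕ)) : ZMod p) ^ m
        = 2 * 2 ^ m * ((j : ZMod p)) ^ m := by
      intro j
      have h1 : (-1 : ZMod p) ^ (2 * j) = 1 := by rw [pow_mul]; norm_num
      rw [h1]
      push_cast
      rw [mul_pow]
      ring
    have hodd : ∀ j : ℕ,
        ((-1 : ZMod p) ^ (2 * j + 1) + 1) * (((2 * j + 1 : ℕ)) : ZMod p) ^ m = 0 := by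
      intro j
      have h1 : (-1 : ZMod p) ^ (2 * j) = 1 := by rw [pow_mul]; norm_num
      have h2 : (-1 : ZMod p) ^ (2 * j + 1) = -1 := by rw [pow_succ, h1]; ring
      rw [h2]
      ring
    rw [hAS, show Finset.range p = Finset.range (2 * n + 1) from by rw [← hn],
      Finset.sum_range_succ,
      sum_range_two_mul (fun k => ((-1 : ZMod p) ^ k + 1) * ((k : ZMod p)) ^ m) n]
    rw [Finset.sum_congr rfl (fun j _ => by rw [hodd j, hev j, add_zero] :
      ∀ j ∈ Finset.range n, ((-1 : ZMod p) ^ (2 * j) + 1) * (((2 * j : ℕ)) : ZMod p) ^ m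
        + ((-1 : ZMod p) ^ (2 * j + 1) + 1) * (((2 * j + 1 : ℕ)) : ZMod p) ^ m
        = 2 * 2 ^ m * ((j : ZMod p)) ^ m), hev n]
    rw [← Finset.sum_range_succ (fun j => 2 * 2 ^ m * ((j : ZMod p)) ^ m) n]
    rw [← Finset.mul_sum, hT1]
    ring
  -- Faulhaber for T
  have hT2 : ((∑ j ∈ Finset.range (n + 1), j ^ m : ℕ) : ℚ)
      = ∑ k ∈ Finset.range (n + 1), (k : ℚ) ^ m := by push_cast; rfl
  have hFa := sum_range_pow (n + 1) m
  rw [← hT2] at hFa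
  rw [show ((m : ℚ) + 1) = (((m + 1 : ℕ)) : ℚ) by push_cast; ring] at hFa
  have hFden : ∀ i ∈ Finset.range (m + 1), ¬ p ∣
      (bernoulli i * (((m + 1).choose i : ℕ) : ℚ) * (((n + 1 : ℕ)) : ℚ) ^ (m + 1 - i)
        / (((m + 1 : ℕ)) : ℚ)).den := fun i hi =>
    den_term hp (hBi i (Finset.mem_range.1 hi)) _ _ _ hdm1
  have hTK : T = ∑ i ∈ Finset.range (m + 1),
      ((bernoulli i : ℚ) : ZMod p) * (((m + 1).choose i : ℕ) : ZMod p)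
        * (((n + 1 : ℕ)) : ZMod p) ^ (m + 1 - i) / (((m + 1 : ℕ)) : ZMod p) := by
    have hc := congrArg (fun q : ℚ => ((q : ℚ) : ZMod p)) hFa
    rw [Rat.cast_natCast, cast_sum' hFden] at hc
    rw [hTdef, hc]
    exact Finset.sum_congr rfl fun i hi =>
      cast_term (hBi i (Finset.mem_range.1 hi)) _ _ _ hdm1
  -- value of (n+1) mod p
  have hh : (2 : ZMod p) * (((n + 1 : ℕ)) : ZMod p) = 1 := by
    have h1 : ((2 * (n + 1) : ℕ) : ZMod p) = ((p : ℕ) : ZMod p) + 1 := by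
      rw [show 2 * (n + 1) = p + 1 by omega]; push_cast; ring
    rw [ZMod.natCast_self] at h1
    push_cast at h1 ⊢
    linear_combination h1
  -- value of (m+1) mod p
  have hD : (((m + 1 : ℕ)) : ZMod p) = -3 := by
    have h1 : (((m + 4 : ℕ)) : ZMod p) = 0 := by rw [hm4]; exact ZMod.natCast_self p
    push_cast at h1 ⊢
    linear_combination h1
  -- the Bernoulli(1/2) identity, integerized
  have hhs := bernoulli_half_sum (m + 1)
  rw [Finset.sum_range_succ, Nat.choose_self] at hhs
  have hidQ : ∑ i ∈ Finset.range (m + 1),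
        bernoulli i * (((m + 1).choose i : ℕ) : ℚ) * (1 / 2 : ℚ) ^ (m + 1 - i)
      = (2 * (1 / 2 : ℚ) ^ (m + 1) - 2) * bernoulli (m + 1) := by
    have hx : bernoulli (m + 1) * ((1 : ℕ) : ℚ) * (1 / 2 : ℚ) ^ (m + 1 - (m + 1)) =
        bernoulli (m + 1) := by norm_num
    linear_combination hhs - hx
  have hpow : ∀ i ∈ Finset.range (m + 1),
      (1 / 2 : ℚ) ^ (m + 1 - i) * (2 : ℚ) ^ (m + 1) = (((2 : ℕ)) : ℚ) ^ i := by
    intro i hi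
    have hi' : i < m + 1 := Finset.mem_range.1 hi
    have hsp : (2 : ℚ) ^ (m + 1) = 2 ^ (m + 1 - i) * 2 ^ i := by
      rw [← pow_add]; congr 1; omega
    rw [hsp, ← mul_assoc, ← mul_pow]
    norm_num
  have h12 : (1 / 2 : ℚ) ^ (m + 1) * (2 : ℚ) ^ (m + 1) = 1 := by
    rw [← mul_pow]; norm_num
  have hidQ' : ∑ i ∈ Finset.range (m + 1),
        bernoulli i * (((m + 1).choose i : ℕ) : ℚ) * (((2 : ℕ)) : ℚ) ^ i
      = ((((2 - 2 ^ (m + 2) : ℤ))) : ℚ) * bernoulli (m + 1) := by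
    have hmul := congrArg (fun x : ℚ => x * (2 : ℚ) ^ (m + 1)) hidQ
    simp only [Finset.sum_mul] at hmul
    calc ∑ i ∈ Finset.range (m + 1),
          bernoulli i * (((m + 1).choose i : ℕ) : ℚ) * (((2 : ℕ)) : ℚ) ^ i
        = ∑ i ∈ Finset.range (m + 1),
            bernoulli i * (((m + 1).choose i : ℕ) : ℚ) * (1 / 2 : ℚ) ^ (m + 1 - i)
              * (2 : ℚ) ^ (m + 1) := by
          refine Finset.sum_congr rfl fun i hi => ?_
          rw [mul_assoc (bernoulli i * (((m + 1).choose i : ℕ) : ℚ)), hpow i hi]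
      _ = (2 * (1 / 2 : ℚ) ^ (m + 1) - 2) * bernoulli (m + 1) * (2 : ℚ) ^ (m + 1) := hmul
      _ = ((((2 - 2 ^ (m + 2) : ℤ))) : ℚ) * bernoulli (m + 1) := by
          push_cast
          have hq2 : (2 : ℚ) ^ (m + 2) = 2 * (2 : ℚ) ^ (m + 1) := by rw [pow_succ]; ring
          linear_combination (2 * bernoulli (m + 1)) * h12 + bernoulli (m + 1) * hq2
  -- cast the identity
  have hidden : ∀ i ∈ Finset.range (m + 1), ¬ p ∣
      (bernoulli i * (((m + 1).choose i : ℕ) : ℚ) * (((2 : ℕ)) : ℚ) ^ i).den := fun i hi =>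
    den_term0 hp (hBi i (Finset.mem_range.1 hi)) _ _ _
  have hidK : ∑ i ∈ Finset.range (m + 1),
        ((bernoulli i : ℚ) : ZMod p) * (((m + 1).choose i : ℕ) : ZMod p)
          * (((2 : ℕ)) : ZMod p) ^ i
      = (2 - (2 : ZMod p) ^ (m + 2)) * β := by
    have hc := congrArg (fun q : ℚ => ((q : ℚ) : ZMod p)) hidQ'
    rw [cast_sum' hidden,
      cast_mul' (den_int hp (2 - 2 ^ (m + 2))) hB, Rat.cast_intCast] at hc
    rw [← Finset.sum_congr rfl (fun i hi => cast_term0 (p := p)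
      (hBi i (Finset.mem_range.1 hi)) ((m + 1).choose i) 2 i), hc, hbdef]
    push_cast
    ring
  -- per-term power juggling
  have hptt : ∀ i ∈ Finset.range (m + 1),
      (2 : ZMod p) ^ (m + 2) * (((bernoulli i : ℚ) : ZMod p) * (((m + 1).choose i : ℕ) : ZMod p)
        * (((n + 1 : ℕ)) : ZMod p) ^ (m + 1 - i))
      = 2 * (((bernoulli i : ℚ) : ZMod p) * (((m + 1).choose i : ℕ) : ZMod p)
        * (((2 : ℕ)) : ZMod p) ^ i) := by
    intro i hi
    have hi' : i < m + 1 := Finset.mem_range.1 hi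
    have e0 : (2 : ZMod p) ^ (m + 2) = (2 : ZMod p) ^ (m + 1 - i) * (2 : ZMod p) ^ (i + 1) := by
      rw [← pow_add]; congr 1; omega
    have e1 : (2 : ZMod p) ^ (m + 1 - i) * ((((n + 1 : ℕ)) : ZMod p)) ^ (m + 1 - i) = 1 := by
      rw [← mul_pow, hh, one_pow]
    have e2 : (((2 : ℕ)) : ZMod p) = (2 : ZMod p) := by push_cast; rfl
    calc (2 : ZMod p) ^ (m + 2) * (((bernoulli i : ℚ) : ZMod p)
          * (((m + 1).choose i : ℕ) : ZMod p) * (((n + 1 : ℕ)) : ZMod p) ^ (m + 1 - i))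
        = ((bernoulli i : ℚ) : ZMod p) * (((m + 1).choose i : ℕ) : ZMod p)
            * ((2 : ZMod p) ^ (m + 1 - i) * ((((n + 1 : ℕ)) : ZMod p)) ^ (m + 1 - i))
            * (2 : ZMod p) ^ (i + 1) := by rw [e0]; ring
      _ = ((bernoulli i : ℚ) : ZMod p) * (((m + 1).choose i : ℕ) : ZMod p)
            * (2 : ZMod p) ^ (i + 1) := by rw [e1]; ring
      _ = 2 * (((bernoulli i : ℚ) : ZMod p) * (((m + 1).choose i : ℕ) : ZMod p)
            * (((2 : ℕ)) : ZMod p) ^ i) := by rw [e2, pow_succ]; ring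
  -- assemble
  have hDne : (((m + 1 : ℕ)) : ZMod p) ≠ 0 := by
    rw [hD]
    exact neg_ne_zero.2 h3K
  have hTD : T * (((m + 1 : ℕ)) : ZMod p) = ∑ i ∈ Finset.range (m + 1),
      ((bernoulli i : ℚ) : ZMod p) * (((m + 1).choose i : ℕ) : ZMod p)
        * (((n + 1 : ℕ)) : ZMod p) ^ (m + 1 - i) := by
    rw [hTK, Finset.sum_mul]
    exact Finset.sum_congr rfl fun i _ => div_mul_cancel₀ _ hDne
  have key1 : (2 : ZMod p) ^ (m + 2) * (T * (((m + 1 : ℕ)) : ZMod p))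
      = 2 * ((2 - (2 : ZMod p) ^ (m + 2)) * β) := by
    rw [hTD, Finset.mul_sum, Finset.sum_congr rfl hptt, ← Finset.mul_sum, hidK]
  have hFermat : (2 : ZMod p) ^ (m + 3) = 1 := by
    have hf := ZMod.pow_card_sub_one_eq_one h2K
    rwa [show p - 1 = m + 3 by omega] at hf
  have h4 : (2 : ZMod p) * (2 : ZMod p) ^ (m + 2) = 1 := by
    rw [← pow_succ']
    exact hFermat
  have hT6 : T * (((m + 1 : ℕ)) : ZMod p) = 6 * β := by
    calc T * (((m + 1 : ℕ)) : ZMod p)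
        = (2 * (2 : ZMod p) ^ (m + 2)) * (T * (((m + 1 : ℕ)) : ZMod p)) := by
          rw [h4, one_mul]
      _ = 2 * ((2 : ZMod p) ^ (m + 2) * (T * (((m + 1 : ℕ)) : ZMod p))) := by ring
      _ = 2 * (2 * ((2 - (2 : ZMod p) ^ (m + 2)) * β)) := by rw [key1]
      _ = 8 * β - 2 * (2 * (2 : ZMod p) ^ (m + 2)) * β := by ring
      _ = 6 * β := by rw [h4]; ring
  have hTval : (-3 : ZMod p) * T = 6 * β := by
    rw [← hD]
    linear_combination hT6
  have h4A : (4 : ZMod p) * (2 ^ (m + 1) * T) = T := by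
    have : (4 : ZMod p) * (2 : ZMod p) ^ (m + 1) = (2 : ZMod p) ^ (m + 3) := by
      rw [pow_succ, pow_succ]
      ring
    rw [← mul_assoc, this, hFermat, one_mul]
  have h6 : (6 : ZMod p) ≠ 0 := by
    have h63 : (6 : ZMod p) = 2 * 3 := by norm_num
    rw [h63]
    exact mul_ne_zero h2K h3K
  rw [hext, hA2T]
  have h2A : (2 : ZMod p) * (2 ^ (m + 1) * T) + β = 0 := by
    apply mul_left_cancel₀ h6
    rw [mul_zero]
    linear_combination (3 : ZMod p) * h4A - hTval
  have hb2 : (2 : ZMod p) * (β / 2) = β := by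
    field_simp
  apply mul_left_cancel₀ h2K
  rw [mul_zero]
  calc (2 : ZMod p) * ((2 ^ (m + 1) * T) - (-β / 2))
      = 2 * (2 ^ (m + 1) * T) + 2 * (β / 2) := by ring
    _ = 2 * (2 ^ (m + 1) * T) + β := by rw [hb2]
    _ = 0 := h2A
end

section
/- Let p > 3 be a prime. Then ∑_{k=1}^{p-1} H_k/k ≡ (p/3)·B_{p-3} (mod p²). -/
open Finset

namespace Stmt6

section Helpers

variable {p : ℕ} [hp : Fact p.Prime]

lemma pR_pos : (0:ℝ) < (p:ℝ) := by exact_mod_cast hp.out.pos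

lemma pR_ne : (p:ℝ) ≠ 0 := ne_of_gt pR_pos

lemma pR_one_lt : (1:ℝ) < (p:ℝ) := by exact_mod_cast hp.out.one_lt

lemma zp_le {a b : ℤ} (h : a ≤ b) : ((p:ℝ))^a ≤ (p:ℝ)^b :=
  zpow_le_zpow_right₀ pR_one_lt.le h

lemma zp_pos (a : ℤ) : (0:ℝ) < (p:ℝ)^a := zpow_pos pR_pos a

lemma norm_intC_le {a : ℤ} {n : ℕ} (h : (p:ℤ)^n ∣ a) :
    ‖((a : ℤ) : ℚ_[p])‖ ≤ (p:ℝ)^(-(n:ℤ)) := by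
  have := (Padic.norm_int_le_pow_iff_dvd (p := p) a n).mpr h
  simpa using this

lemma norm_int_le_one' (a : ℤ) : ‖((a : ℤ) : ℚ_[p])‖ ≤ 1 :=
  Padic.norm_int_le_one a

lemma norm_nat_le_one (a : ℕ) : ‖((a : ℕ) : ℚ_[p])‖ ≤ 1 := by
  have := Padic.norm_int_le_one (p := p) (a : ℤ)
  simpa using this

lemma norm_nat_eq_one {a : ℕ} (ha : ¬ p ∣ a) : ‖((a : ℕ) : ℚ_[p])‖ = 1 := by
  refine le_antisymm (norm_nat_le_one a) ?_
  by_contra h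
  push_neg at h
  have h2 : ‖((a : ℤ) : ℚ_[p])‖ < 1 := by
    have : ((a : ℤ) : ℚ_[p]) = ((a : ℕ) : ℚ_[p]) := by push_cast; ring
    rw [this]; exact h
  have := (Padic.norm_intCast_lt_one_iff (p := p) (k := (a : ℤ))).mp h2
  exact ha (by exact_mod_cast this)

lemma norm_sum_le' {ι : Type*} {s : Finset ι} {f : ι → ℚ_[p]} {C : ℝ} (hC : 0 ≤ C)
    (h : ∀ i ∈ s, ‖f i‖ ≤ C) : ‖∑ i ∈ s, f i‖ ≤ C :=
  IsUltrametricDist.norm_sum_le_of_forall_le_of_nonneg hC h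

lemma norm_add_max {x y : ℚ_[p]} {C : ℝ} (hx : ‖x‖ ≤ C) (hy : ‖y‖ ≤ C) : ‖x + y‖ ≤ C :=
  le_trans (Padic.nonarchimedean x y) (max_le hx hy)

lemma norm_sub_max {x y : ℚ_[p]} {C : ℝ} (hx : ‖x‖ ≤ C) (hy : ‖y‖ ≤ C) : ‖x - y‖ ≤ C := by
  rw [sub_eq_add_neg]
  exact norm_add_max hx (by simpa using hy)

lemma nb_mul {x y : ℚ_[p]} {a b : ℝ} (hx : ‖x‖ ≤ a) (hy : ‖y‖ ≤ b) : ‖x*y‖ ≤ a*b := by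
  rw [norm_mul]
  exact mul_le_mul hx hy (norm_nonneg y) (le_trans (norm_nonneg x) hx)

lemma pz_mul (a b : ℤ) : (p:ℝ)^a * (p:ℝ)^b = (p:ℝ)^(a+b) := (zpow_add₀ pR_ne a b).symm

lemma hp5 (hp3 : 3 < p) : 5 ≤ p := by
  have h4 : p ≠ 4 := by
    intro h
    have := hp.out
    rw [h] at this
    norm_num at this
  omega

lemma aux5 : ∀ v : ℕ, 1 ≤ v → v + 4 ≤ 5^v := by
  intro v
  induction v with
  | zero => omega
  | succ n ih =>
    intro _
    rcases Nat.eq_zero_or_pos n with rfl | hn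
    · norm_num
    · have h1 := ih hn
      have h2 : 5^(n+1) = 5 * 5^n := by ring
      have h3 : 5 * (n + 4) ≤ 5 * 5^n := Nat.mul_le_mul_left 5 h1
      omega

lemma val_bound (hp3 : 3 < p) {v t : ℕ} (hv : p^v ∣ t) (ht : t ≠ 0) : v = 0 ∨ v + 4 ≤ t := by
  rcases Nat.eq_zero_or_pos v with h | h
  · exact Or.inl h
  · right
    have h1 : p^v ≤ t := Nat.le_of_dvd (Nat.pos_of_ne_zero ht) hv
    have h2 : 5^v ≤ p^v := Nat.pow_le_pow_left (hp5 hp3) v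
    have h3 := aux5 v h
    omega

lemma norm_nat_val (t : ℕ) (ht : t ≠ 0) :
    ∃ v : ℕ, p^v ∣ t ∧ ‖((t : ℕ) : ℚ_[p])‖ = (p:ℝ)^(-(v:ℤ)) := by
  refine ⟨t.factorization p, Nat.ordProj_dvd t p, ?_⟩
  have hs : ¬ p ∣ ordCompl[p] t := Nat.not_dvd_ordCompl hp.out ht
  have hfact : (p ^ t.factorization p) * ordCompl[p] t = t :=
    Nat.ordProj_mul_ordCompl_eq_self t p
  calc ‖((t:ℕ) : ℚ_[p])‖ = ‖(((p ^ t.factorization p) * ordCompl[p] t : ℕ) : ℚ_[p])‖ := by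
        rw [hfact]
    _ = ‖((p:ℕ) : ℚ_[p])‖^(t.factorization p) * ‖((ordCompl[p] t : ℕ) : ℚ_[p])‖ := by
        push_cast
        rw [norm_mul, norm_pow]
    _ = ((p:ℝ)⁻¹)^(t.factorization p) * 1 := by
        rw [Padic.norm_p, norm_nat_eq_one hs]
    _ = (p:ℝ)^(-(t.factorization p : ℤ)) := by
        rw [mul_one, inv_pow, ← zpow_natCast, ← zpow_neg]

end Helpers

section Bernoulli

variable {p : ℕ} [hp : Fact p.Prime]

/-- `S_n(p) = ∑_{k<p} k^n` as a rational number. -/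
def stdS (p n : ℕ) : ℚ := ∑ k ∈ Finset.range p, (k:ℚ)^n

/-- Faulhaber rearranged: `p * B_P = S_P(p) - ∑_{i<P} (p*B_i) * C(P,i) * p^(P-i) / (P+1-i)`. -/
lemma faul' (P : ℕ) :
    (p:ℚ) * bernoulli P = stdS p P
      - ∑ i ∈ range P, (p:ℚ) * bernoulli i * (P.choose i) * (p:ℚ)^(P-i) / ((P+1-i : ℕ) : ℚ) := by
  have h := sum_range_pow p P
  rw [Finset.sum_range_succ] at h
  have hP1 : ((P:ℚ)+1) ≠ 0 := by positivity
  have hlast : bernoulli P * ((P+1).choose P) * (p:ℚ)^(P+1-P) / ((P:ℚ)+1) = (p:ℚ) * bernoulli P := by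
    rw [Nat.choose_succ_self_right]
    have h1 : P + 1 - P = 1 := by omega
    rw [h1]
    push_cast
    field_simp
  have hterm : ∀ i ∈ range P,
      bernoulli i * (((P+1).choose i : ℕ) : ℚ) * (p:ℚ)^(P+1-i) / ((P:ℚ)+1)
        = (p:ℚ) * bernoulli i * (P.choose i) * (p:ℚ)^(P-i) / ((P+1-i : ℕ) : ℚ) := by
    intro i hi
    rw [mem_range] at hi
    have key : (P+1) * P.choose i = (P+1).choose i * (P+1-i) := by
      have h1 : P.choose (P - i) = P.choose i := Nat.choose_symm (le_of_lt hi)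
      have h2 : (P+1) * P.choose (P - i) = (P+1).choose (P-i+1) * (P-i+1) :=
        Nat.add_one_mul_choose_eq P (P-i)
      have h3 : (P+1).choose (P-i+1) = (P+1).choose i := by
        have h4 : (P+1) - (P-i+1) = i := by omega
        conv_rhs => rw [← h4]
        exact (Nat.choose_symm (by omega)).symm
      rw [h1] at h2
      rw [h3] at h2
      rw [h2]
      congr 1
      omega
    have hti : ((P+1-i : ℕ) : ℚ) ≠ 0 := by
      have : P+1-i ≠ 0 := by omega
      exact_mod_cast this
    have hpow : (p:ℚ)^(P+1-i) = (p:ℚ)^(P-i) * (p:ℚ) := by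
      rw [← pow_succ]
      congr 1
      omega
    have keyQ : ((P:ℚ)+1) * (P.choose i : ℚ) = ((P+1).choose i : ℚ) * ((P+1-i : ℕ) : ℚ) := by
      exact_mod_cast key
    field_simp
    rw [hpow]
    linear_combination (-(bernoulli i * (p:ℚ)^(P-i) * (p:ℚ))) * keyQ
  rw [Finset.sum_congr rfl hterm] at h
  rw [hlast] at h
  simp only [stdS]
  rw [h]
  ring

/-- Bound on an individual Faulhaber tail term. -/
lemma term_bound (hp3 : 3 < p) {i P r : ℕ} (hiP : i < P)
    (hr : r = 1 ∨ (r = 2 ∧ i + 2 ≤ P))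
    (hBi : ‖(((p:ℚ) * bernoulli i : ℚ) : ℚ_[p])‖ ≤ 1) :
    ‖(((p:ℚ) * bernoulli i * (P.choose i) * (p:ℚ)^(P-i) / ((P+1-i : ℕ) : ℚ) : ℚ) : ℚ_[p])‖
      ≤ (p:ℝ)^(-(r:ℤ)) := by
  have ht0 : P + 1 - i ≠ 0 := by omega
  obtain ⟨v, hvd, hnt⟩ := norm_nat_val (p := p) (P+1-i) ht0
  have hcast : (((p:ℚ) * bernoulli i * (P.choose i) * (p:ℚ)^(P-i) / ((P+1-i : ℕ) : ℚ) : ℚ) : ℚ_[p])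
      = (((p:ℚ) * bernoulli i : ℚ) : ℚ_[p]) * ((P.choose i : ℕ) : ℚ_[p]) * ((p:ℕ) : ℚ_[p])^(P-i)
        / ((P+1-i : ℕ) : ℚ_[p]) := by
    push_cast
    ring
  rw [hcast, norm_div, norm_mul, norm_mul, norm_pow, hnt]
  have hnp : ‖((p:ℕ) : ℚ_[p])‖ = (p:ℝ)⁻¹ := Padic.norm_p
  rw [hnp]
  have hchoose : ‖((P.choose i : ℕ) : ℚ_[p])‖ ≤ 1 := norm_nat_le_one _
  have hb1 : ‖(((p:ℚ) * bernoulli i : ℚ) : ℚ_[p])‖ * ‖((P.choose i : ℕ) : ℚ_[p])‖ ≤ 1 := by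
    calc ‖(((p:ℚ) * bernoulli i : ℚ) : ℚ_[p])‖ * ‖((P.choose i : ℕ) : ℚ_[p])‖
        ≤ 1 * 1 := mul_le_mul hBi hchoose (norm_nonneg _) (by norm_num)
      _ = 1 := by norm_num
  have hinvpow : ((p:ℝ)⁻¹)^(P-i) = (p:ℝ)^(-((P-i : ℕ) : ℤ)) := by
    rw [inv_pow, ← zpow_natCast, ← zpow_neg]
  have hexp : -((P-i : ℕ) : ℤ) + (v:ℤ) ≤ -(r:ℤ) := by
    rcases val_bound hp3 hvd ht0 with h | h
    · subst h
      rcases hr with h | ⟨h, h2⟩ <;> omega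
    · rcases hr with h1 | ⟨h1, h2⟩ <;> omega
  calc ‖(((p:ℚ) * bernoulli i : ℚ) : ℚ_[p])‖ * ‖((P.choose i : ℕ) : ℚ_[p])‖ * ((p:ℝ)⁻¹)^(P-i)
        / (p:ℝ)^(-(v:ℤ))
      ≤ 1 * ((p:ℝ)⁻¹)^(P-i) / (p:ℝ)^(-(v:ℤ)) := by
        gcongr
    _ = (p:ℝ)^(-((P-i : ℕ) : ℤ) + (v:ℤ)) := by
        rw [one_mul, hinvpow, div_eq_mul_inv, ← zpow_neg, pz_mul, neg_neg]
    _ ≤ (p:ℝ)^(-(r:ℤ)) := zp_le hexp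

end Bernoulli

section Bernoulli2

variable {p : ℕ} [hp : Fact p.Prime]

lemma pB_int (hp3 : 3 < p) : ∀ n : ℕ, ‖(((p:ℚ) * bernoulli n : ℚ) : ℚ_[p])‖ ≤ 1 := by
  intro n
  induction n using Nat.strong_induction_on with
  | _ n ih =>
    rw [faul', Rat.cast_sub]
    apply norm_sub_max
    · rw [stdS, Rat.cast_sum]
      apply norm_sum_le' zero_le_one
      intro k _
      have : (((k:ℚ)^n : ℚ) : ℚ_[p]) = ((k:ℕ) : ℚ_[p])^n := by push_cast; ring
      rw [this, norm_pow]
      exact pow_le_one₀ (norm_nonneg _) (norm_nat_le_one k)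
    · rw [Rat.cast_sum]
      apply norm_sum_le' zero_le_one
      intro i hi
      rw [mem_range] at hi
      have hb := term_bound hp3 hi (Or.inl rfl) (ih i hi)
      refine hb.trans ?_
      calc (p:ℝ)^(-(1:ℤ)) ≤ (p:ℝ)^(0:ℤ) := zp_le (by norm_num)
        _ = 1 := zpow_zero _

lemma bern_odd_norm (hp3 : 3 < p) {j : ℕ} (hj : Odd j) :
    ‖((bernoulli j : ℚ) : ℚ_[p])‖ ≤ 1 := by
  rcases eq_or_ne j 1 with rfl | hne
  · rw [bernoulli_one]
    have h2 : ¬ p ∣ 2 := fun h => by have := Nat.le_of_dvd (by norm_num) h; omega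
    have hc : ((-1/2 : ℚ) : ℚ_[p]) = -(((2:ℕ) : ℚ_[p]))⁻¹ := by push_cast; ring
    rw [hc, norm_neg, norm_inv, norm_nat_eq_one h2]
    norm_num
  · have h1 : 1 < j := by
      rcases hj with ⟨t, ht⟩
      omega
    rw [bernoulli, bernoulli'_eq_zero_of_odd hj h1, mul_zero]
    simp

lemma S_pB (hp3 : 3 < p) {P : ℕ} (hPe : Even P) (hP1 : 1 ≤ P) :
    ‖((stdS p P - (p:ℚ) * bernoulli P : ℚ) : ℚ_[p])‖ ≤ (p:ℝ)^(-(2:ℤ)) := by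
  have hP2 : 2 ≤ P := by
    rcases hPe with ⟨t, ht⟩
    omega
  have heq : stdS p P - (p:ℚ) * bernoulli P
      = ∑ i ∈ range P, (p:ℚ) * bernoulli i * (P.choose i) * (p:ℚ)^(P-i) / ((P+1-i : ℕ) : ℚ) := by
    have h := faul' (p := p) P
    linarith
  rw [heq, Rat.cast_sum]
  apply norm_sum_le' (zp_pos _).le
  intro i hi
  rw [mem_range] at hi
  rcases eq_or_ne i (P-1) with rfl | hne
  · have hPi : P - (P-1) = 1 := by omega
    have ht2 : P + 1 - (P-1) = 2 := by omega
    have hodd : Odd (P-1) := Nat.Even.sub_odd (by omega) hPe odd_one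
    have h2d : ¬ p ∣ 2 := fun h => by have := Nat.le_of_dvd (by norm_num) h; omega
    have hterm_cast :
        (((p:ℚ) * bernoulli (P-1) * (P.choose (P-1)) * (p:ℚ)^(P-(P-1)) / ((P+1-(P-1) : ℕ) : ℚ) : ℚ) : ℚ_[p])
        = ((bernoulli (P-1) : ℚ) : ℚ_[p]) * ((P.choose (P-1) : ℕ) : ℚ_[p]) * ((p:ℕ) : ℚ_[p])^2
          / ((2:ℕ) : ℚ_[p]) := by
      rw [hPi, ht2]
      push_cast
      ring
    rw [hterm_cast, norm_div, norm_mul, norm_mul, norm_pow, Padic.norm_p,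
      norm_nat_eq_one h2d, div_one]
    have hend : ((p:ℝ)⁻¹)^2 = (p:ℝ)^(-(2:ℤ)) := by
      rw [inv_pow, ← zpow_natCast, ← zpow_neg]
      norm_num
    calc ‖((bernoulli (P-1) : ℚ) : ℚ_[p])‖ * ‖((P.choose (P-1) : ℕ) : ℚ_[p])‖ * ((p:ℝ)⁻¹)^2
        ≤ 1 * 1 * ((p:ℝ)⁻¹)^2 := by
          gcongr
          · exact bern_odd_norm hp3 hodd
          · exact norm_nat_le_one _
      _ = (p:ℝ)^(-(2:ℤ)) := by rw [one_mul, one_mul, hend]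
  · exact term_bound hp3 hi (Or.inr ⟨rfl, by omega⟩) (pB_int hp3 i)

lemma B_int_small (hp3 : 3 < p) : ∀ j : ℕ, j + 2 ≤ p → ‖((bernoulli j : ℚ) : ℚ_[p])‖ ≤ 1 := by
  intro j
  induction j using Nat.strong_induction_on with
  | _ j ih =>
    intro hj
    rcases Nat.eq_zero_or_pos j with rfl | hj1
    · simp
    · have hs := sum_bernoulli (j+1)
      have hne : j + 1 ≠ 1 := by omega
      rw [if_neg hne, Finset.sum_range_succ, Nat.choose_succ_self_right] at hs
      have hj1Q : ((j:ℚ)+1) ≠ 0 := by positivity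
      have hBj : bernoulli j = -(∑ i ∈ range j, (((j+1).choose i : ℕ) : ℚ) * bernoulli i) / ((j:ℚ)+1) := by
        field_simp
        push_cast at hs ⊢
        linarith
      rw [hBj, Rat.cast_div, Rat.cast_neg, norm_div, norm_neg]
      have hden : ‖((((j:ℚ)+1) : ℚ) : ℚ_[p])‖ = 1 := by
        have hc : ((((j:ℚ)+1) : ℚ) : ℚ_[p]) = ((j+1 : ℕ) : ℚ_[p]) := by push_cast; ring
        rw [hc]
        apply norm_nat_eq_one
        intro hd
        have := Nat.le_of_dvd (by omega) hd
        omega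
      rw [hden, div_one, Rat.cast_sum]
      apply norm_sum_le' zero_le_one
      intro i hi
      rw [mem_range] at hi
      rw [Rat.cast_mul, norm_mul]
      calc ‖((((j+1).choose i : ℕ) : ℚ) : ℚ_[p])‖ * ‖((bernoulli i : ℚ) : ℚ_[p])‖
          ≤ 1 * 1 := by
            apply mul_le_mul ?_ (ih i hi (by omega)) (norm_nonneg _) zero_le_one
            have hc : ((((j+1).choose i : ℕ) : ℚ) : ℚ_[p]) = (((j+1).choose i : ℕ) : ℚ_[p]) := by
              push_cast; ring
            rw [hc]
            exact norm_nat_le_one _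
        _ = 1 := by norm_num

end Bernoulli2

section Scaling

variable {p : ℕ} [hp : Fact p.Prime]

lemma sum_range_zmod {M : Type*} [AddCommMonoid M] (f : ZMod p → M) :
    ∑ k ∈ range p, f ((k : ℕ) : ZMod p) = ∑ x : ZMod p, f x := by
  haveI : NeZero p := ⟨hp.out.ne_zero⟩
  refine Finset.sum_nbij' (fun k => ((k : ℕ) : ZMod p)) (fun x => x.val) ?_ ?_ ?_ ?_ ?_
  · intro a _
    exact mem_univ _
  · intro x _
    rw [mem_range]
    exact ZMod.val_lt x
  · intro a ha
    rw [mem_range] at ha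
    exact ZMod.val_cast_of_lt ha
  · intro x _
    exact ZMod.natCast_rightInverse x
  · intro a _
    rfl

lemma sum_double_mod (hp3 : 3 < p) (g : ℕ → ℚ) :
    ∑ k ∈ range p, g (2*k % p) = ∑ k ∈ range p, g k := by
  haveI : NeZero p := ⟨hp.out.ne_zero⟩
  have h2ne : (2 : ZMod p) ≠ 0 := by
    have : ((2:ℕ) : ZMod p) ≠ 0 := by
      rw [Ne, ZMod.natCast_eq_zero_iff]
      intro h
      have := Nat.le_of_dvd (by norm_num) h
      omega
    simpa using this
  have h1 : ∀ k ∈ range p, g (2*k % p) = (fun x : ZMod p => g ((2*x).val)) ((k : ℕ) : ZMod p) := by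
    intro k _
    simp only
    congr 1
    have hv : ((2*k : ℕ) : ZMod p).val = 2*k % p := ZMod.val_natCast _ _
    rw [← hv]
    congr 1
    push_cast
    ring
  rw [Finset.sum_congr rfl h1, sum_range_zmod (fun x : ZMod p => g ((2*x).val))]
  have h2 : ∑ x : ZMod p, g ((2*x).val) = ∑ x : ZMod p, g x.val :=
    Fintype.sum_bijective (fun x : ZMod p => 2*x) (mulLeft_bijective₀ (2 : ZMod p) h2ne)
      (fun x => g ((2*x).val)) (fun x => g x.val) (fun x => rfl)
  rw [h2, ← sum_range_zmod (fun x : ZMod p => g x.val)]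
  apply Finset.sum_congr rfl
  intro k hk
  rw [mem_range] at hk
  rw [ZMod.val_cast_of_lt hk]

lemma binom_aux (a x : ℤ) (n : ℕ) : x^2 ∣ (a+x)^(n+1) - a^(n+1) - (n+1)*a^n*x := by
  induction n with
  | zero =>
    have h : (a+x)^(0+1) - a^(0+1) - ((0:ℕ)+1)*a^0*x = 0 := by push_cast; ring
    rw [h]
    exact dvd_zero _
  | succ n ih =>
    obtain ⟨c, hc⟩ := ih
    refine ⟨(a+x)*c + (n+1)*a^n, ?_⟩
    have h2 : (a+x)^(n+1) = a^(n+1) + (n+1)*a^n*x + x^2*c := by linarith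
    calc (a+x)^(n+1+1) - a^(n+1+1) - ((n:ℤ)+1+1)*a^(n+1)*x
        = (a+x)*((a+x)^(n+1)) - a^(n+1+1) - ((n:ℤ)+1+1)*a^(n+1)*x := by ring
      _ = x^2*((a+x)*c + ((n:ℤ)+1)*a^n) := by rw [h2]; ring

/-- `W_j = ∑_{k<p} k^j * ⌊2k/p⌋`. -/
def Wd (p j : ℕ) : ℕ := ∑ k ∈ Finset.range p, k^j * (2*k/p)

lemma scaling (hp3 : 3 < p) (j : ℕ) :
    ‖((((2:ℚ)^(j+1) - 1) * stdS p (j+1) - ((j:ℚ)+1) * 2^j * (p:ℚ) * (Wd p j : ℚ) : ℚ) : ℚ_[p])‖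
      ≤ (p:ℝ)^(-(2:ℤ)) := by
  set e : ℕ → ℤ := fun k =>
    ((2*k % p : ℕ) : ℤ)^(j+1) - (2*(k:ℤ))^(j+1)
      + ((j:ℤ)+1)*(2*(k:ℤ))^j*(((p:ℕ):ℤ)*((2*k/p : ℕ) : ℤ)) with he_def
  have he : ∀ k : ℕ, (p:ℤ)^2 ∣ e k := by
    intro k
    have h0 : (p:ℤ) * ((2*k/p : ℕ) : ℤ) + ((2*k % p : ℕ) : ℤ) = 2*(k:ℤ) := by
      exact_mod_cast Nat.div_add_mod (2*k) p
    have hmod : ((2*k % p : ℕ) : ℤ) = 2*(k:ℤ) + (-(((p:ℕ):ℤ)*((2*k/p : ℕ) : ℤ))) := by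
      push_cast at h0 ⊢
      linarith
    obtain ⟨c, hc⟩ := binom_aux (2*(k:ℤ)) (-(((p:ℕ):ℤ)*((2*k/p : ℕ) : ℤ))) j
    refine ⟨((2*k/p : ℕ):ℤ)^2 * c, ?_⟩
    rw [he_def]
    simp only
    rw [hmod]
    push_cast at hc ⊢
    linear_combination hc
  have hre : ∑ k ∈ range p, ((2*k % p : ℕ) : ℚ)^(j+1) = stdS p (j+1) := by
    have h := sum_double_mod hp3 (fun k => (k:ℚ)^(j+1))
    simpa [stdS] using h
  have hW : ((Wd p j : ℕ) : ℚ) = ∑ k ∈ range p, (k:ℚ)^j*((2*k/p : ℕ) : ℚ) := by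
    rw [Wd]
    push_cast
    rfl
  have hsum : (((2:ℚ)^(j+1) - 1) * stdS p (j+1) - ((j:ℚ)+1) * 2^j * (p:ℚ) * (Wd p j : ℚ))
      = - ∑ k ∈ range p, ((e k : ℤ) : ℚ) := by
    have h1 : ∀ k ∈ range p, ((e k : ℤ) : ℚ)
        = ((2*k % p : ℕ) : ℚ)^(j+1) - (2:ℚ)^(j+1)*(k:ℚ)^(j+1)
          + (((j:ℚ)+1)*2^j*(p:ℚ))*((k:ℚ)^j*((2*k/p : ℕ) : ℚ)) := by
      intro k _
      simp only [he_def]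
      generalize 2*k % p = r
      generalize 2*k / p = q
      push_cast
      ring
    rw [Finset.sum_congr rfl h1, Finset.sum_add_distrib, Finset.sum_sub_distrib, hre,
      ← Finset.mul_sum, ← Finset.mul_sum, ← hW]
    have hS2 : ∑ k ∈ range p, (k:ℚ)^(j+1) = stdS p (j+1) := rfl
    rw [hS2]
    ring
  rw [hsum]
  rw [Rat.cast_neg, norm_neg, Rat.cast_sum]
  apply norm_sum_le' (zp_pos _).le
  intro k _
  have hc : (((e k : ℤ) : ℚ) : ℚ_[p]) = ((e k : ℤ) : ℚ_[p]) := by push_cast; ring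
  rw [hc]
  exact norm_intC_le (he k)

lemma W_cong (hp3 : 3 < p) {m : ℕ} (hpm : p = m + 4) :
    (p:ℤ) ∣ (Wd p (2*m+3) : ℤ) - (Wd p m : ℤ) := by
  have hm1 : 1 ≤ m := by
    have := hp5 (p := p) hp3
    omega
  have h1 : ((Wd p (2*m+3) : ℕ) : ZMod p) = ((Wd p m : ℕ) : ZMod p) := by
    rw [Wd, Wd]
    push_cast
    apply Finset.sum_congr rfl
    intro k _
    congr 1
    rcases eq_or_ne ((k:ℕ) : ZMod p) 0 with h | h
    · rw [h, zero_pow (by omega), zero_pow (by omega)]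
    · have hf : ((k:ℕ) : ZMod p)^(p-1) = 1 := ZMod.pow_card_sub_one_eq_one h
      have hp1 : p - 1 = m + 3 := by omega
      rw [hp1] at hf
      calc ((k:ℕ) : ZMod p)^(2*m+3)
          = ((k:ℕ) : ZMod p)^m * ((k:ℕ) : ZMod p)^(m+3) := by
            rw [← pow_add]
            congr 1
            omega
        _ = ((k:ℕ) : ZMod p)^m := by rw [hf, mul_one]
  have h2 : (((Wd p (2*m+3) : ℤ) - (Wd p m : ℤ) : ℤ) : ZMod p) = 0 := by
    push_cast
    rw [h1]
    ring
  exact (ZMod.intCast_zmod_eq_zero_iff_dvd _ p).mp h2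

lemma h8_lemma (hp3 : 3 < p) {m : ℕ} (hpm : p = m + 4) : (2 : ZMod p)^m * 8 = 1 := by
  have h2 : ((2:ℕ) : ZMod p) ≠ 0 := by
    rw [Ne, ZMod.natCast_eq_zero_iff]
    intro h
    have := Nat.le_of_dvd (by norm_num) h
    omega
  have hf : ((2:ℕ) : ZMod p)^(p-1) = 1 := ZMod.pow_card_sub_one_eq_one h2
  have hmm : p - 1 = m + 3 := by omega
  rw [hmm] at hf
  have hcc : ((2:ℕ) : ZMod p) = (2 : ZMod p) := by push_cast; rfl
  rw [hcc] at hf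
  calc (2:ZMod p)^m * 8 = (2:ZMod p)^(m+3) := by rw [pow_add]; norm_num
    _ = 1 := hf

lemma A4_dvd (hp3 : 3 < p) {m : ℕ} (hpm : p = m + 4) :
    (p:ℤ) ∣ 3*(2*(m:ℤ)+4)*2^(2*m+3)*(2^(m+1) - 1) - 4*((m:ℤ)+1)*2^m*(2^(2*m+4) - 1) := by
  apply (ZMod.intCast_zmod_eq_zero_iff_dvd _ p).mp
  push_cast
  have h8 := h8_lemma hp3 hpm
  have hm4 : (m : ZMod p) = -4 := by
    have h0 : ((m + 4 : ℕ) : ZMod p) = 0 := by rw [← hpm]; exact ZMod.natCast_self p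
    push_cast at h0
    linear_combination h0
  have e1 : (2 : ZMod p)^(2*m+3) = (2 : ZMod p)^m*(2 : ZMod p)^m*8 := by
    rw [show 2*m+3 = m+m+3 by omega, pow_add, pow_add]
    norm_num
  have e2 : (2 : ZMod p)^(m+1) = (2 : ZMod p)^m*2 := by
    rw [pow_add]
    norm_num
  have e3 : (2 : ZMod p)^(2*m+4) = (2 : ZMod p)^m*(2 : ZMod p)^m*16 := by
    rw [show 2*m+4 = m+m+4 by omega, pow_add, pow_add]
    norm_num
  rw [e1, e2, e3, hm4]
  linear_combination (12*(2 : ZMod p)^m) * h8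

lemma two_pow_not (hp3 : 3 < p) {m : ℕ} (hpm : p = m + 4) :
    ¬ (p:ℤ) ∣ (2^(2*m+4) - 1 : ℤ) := by
  intro h
  have h0 : ((2^(2*m+4) - 1 : ℤ) : ZMod p) = 0 := (ZMod.intCast_zmod_eq_zero_iff_dvd _ p).mpr h
  push_cast at h0
  have h8 := h8_lemma hp3 hpm
  have e3 : (2 : ZMod p)^(2*m+4) = (2 : ZMod p)^m*(2 : ZMod p)^m*16 := by
    rw [show 2*m+4 = m+m+4 by omega, pow_add, pow_add]
    norm_num
  rw [e3] at h0
  have h3 : ((3:ℕ) : ZMod p) = 0 := by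
    push_cast
    linear_combination (-4)*h0 + ((2 : ZMod p)^m*8+1)*h8
  have hd : p ∣ 3 := (ZMod.natCast_eq_zero_iff 3 p).mp h3
  have := Nat.le_of_dvd (by norm_num) hd
  omega

end Scaling

section Kummer

variable {p : ℕ} [hp : Fact p.Prime]

lemma int_mul_bound (z : ℤ) {x : ℚ} {C : ℝ} (hx : ‖((x : ℚ) : ℚ_[p])‖ ≤ C) :
    ‖(((z:ℚ) * x : ℚ) : ℚ_[p])‖ ≤ C := by
  rw [Rat.cast_mul, norm_mul]
  have h1 : ‖((z:ℚ) : ℚ_[p])‖ ≤ 1 := by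
    have hc : ((z:ℚ) : ℚ_[p]) = ((z:ℤ) : ℚ_[p]) := by push_cast; ring
    rw [hc]
    exact norm_int_le_one' z
  calc ‖((z:ℚ) : ℚ_[p])‖ * ‖((x:ℚ) : ℚ_[p])‖ ≤ 1 * ‖((x:ℚ) : ℚ_[p])‖ :=
      mul_le_mul_of_nonneg_right h1 (norm_nonneg _)
    _ = ‖((x:ℚ) : ℚ_[p])‖ := one_mul _
    _ ≤ C := hx

lemma norm_two_eq_one (hp3 : 3 < p) : ‖(((2:ℚ)) : ℚ_[p])‖ = 1 := by
  have hc : ((2:ℚ) : ℚ_[p]) = ((2:ℕ) : ℚ_[p]) := by push_cast; ring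
  rw [hc]
  apply norm_nat_eq_one
  intro h
  have := Nat.le_of_dvd (by norm_num) h
  omega

lemma pp_mul : (p:ℝ)^(-(1:ℤ)) * (p:ℝ)^(-(1:ℤ)) = (p:ℝ)^(-(2:ℤ)) := by
  rw [pz_mul]
  norm_num

lemma kummer (hp3 : 3 < p) {m : ℕ} (hpm : p = m + 4) (hmo : Odd m) :
    ‖((3 * bernoulli (2*m+4) - 4 * bernoulli (m+1) : ℚ) : ℚ_[p])‖ ≤ (p:ℝ)^(-(1:ℤ)) := by
  have hm1 : 1 ≤ m := by
    have := hp5 (p := p) hp3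
    omega
  have hU1 := scaling (p := p) hp3 m
  have hU2 : ‖((((2:ℚ)^(2*m+4) - 1) * stdS p (2*m+4)
      - (((2*m+3 : ℕ):ℚ)+1) * 2^(2*m+3) * (p:ℚ) * (Wd p (2*m+3) : ℚ) : ℚ) : ℚ_[p])‖
      ≤ (p:ℝ)^(-(2:ℤ)) := scaling (p := p) hp3 (2*m+3)
  have hV1 : ‖((stdS p (m+1) - (p:ℚ) * bernoulli (m+1) : ℚ) : ℚ_[p])‖ ≤ (p:ℝ)^(-(2:ℤ)) :=
    S_pB hp3 hmo.add_one (by omega)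
  have hV2 : ‖((stdS p (2*m+4) - (p:ℚ) * bernoulli (2*m+4) : ℚ) : ℚ_[p])‖ ≤ (p:ℝ)^(-(2:ℤ)) :=
    S_pB hp3 ⟨m+2, by omega⟩ (by omega)
  have hΔ : ‖(((p:ℚ) * (((Wd p (2*m+3) : ℤ) - (Wd p m : ℤ) : ℤ) : ℚ) : ℚ) : ℚ_[p])‖
      ≤ (p:ℝ)^(-(2:ℤ)) := by
    have hc : (((p:ℚ) * (((Wd p (2*m+3) : ℤ) - (Wd p m : ℤ) : ℤ) : ℚ) : ℚ) : ℚ_[p])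
        = ((p:ℕ) : ℚ_[p]) * (((Wd p (2*m+3) : ℤ) - (Wd p m : ℤ) : ℤ) : ℚ_[p]) := by
      push_cast
      ring
    rw [hc, norm_mul, Padic.norm_p]
    have h1 : ‖(((Wd p (2*m+3) : ℤ) - (Wd p m : ℤ) : ℤ) : ℚ_[p])‖ ≤ (p:ℝ)^(-(1:ℤ)) := by
      apply norm_intC_le
      rw [pow_one]
      exact W_cong hp3 hpm
    calc (p:ℝ)⁻¹ * ‖(((Wd p (2*m+3) : ℤ) - (Wd p m : ℤ) : ℤ) : ℚ_[p])‖
        ≤ (p:ℝ)^(-(1:ℤ)) * (p:ℝ)^(-(1:ℤ)) := by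
          rw [zpow_neg_one] at h1 ⊢
          exact mul_le_mul_of_nonneg_left h1 (by positivity)
      _ = (p:ℝ)^(-(2:ℤ)) := pp_mul
  have hpB1 : ‖(((p:ℚ) * bernoulli (m+1) : ℚ) : ℚ_[p])‖ ≤ (p:ℝ)^(-(1:ℤ)) := by
    have hc : (((p:ℚ) * bernoulli (m+1) : ℚ) : ℚ_[p])
        = ((p:ℕ) : ℚ_[p]) * ((bernoulli (m+1) : ℚ) : ℚ_[p]) := by push_cast; ring
    rw [hc, norm_mul, Padic.norm_p]
    have hb := B_int_small hp3 (m+1) (by omega)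
    calc (p:ℝ)⁻¹ * ‖((bernoulli (m+1) : ℚ) : ℚ_[p])‖ ≤ (p:ℝ)⁻¹ * 1 :=
        mul_le_mul_of_nonneg_left hb (by positivity)
      _ = (p:ℝ)^(-(1:ℤ)) := by rw [mul_one, zpow_neg_one]
  have hA4 : ‖(((3*(2*(m:ℤ)+4)*2^(2*m+3)*(2^(m+1) - 1)
      - 4*((m:ℤ)+1)*2^m*(2^(2*m+4) - 1) : ℤ) : ℚ) : ℚ_[p])‖ ≤ (p:ℝ)^(-(1:ℤ)) := by
    have hc : (((3*(2*(m:ℤ)+4)*2^(2*m+3)*(2^(m+1) - 1)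
        - 4*((m:ℤ)+1)*2^m*(2^(2*m+4) - 1) : ℤ) : ℚ) : ℚ_[p])
        = ((3*(2*(m:ℤ)+4)*2^(2*m+3)*(2^(m+1) - 1)
        - 4*((m:ℤ)+1)*2^m*(2^(2*m+4) - 1) : ℤ) : ℚ_[p]) := by push_cast; ring
    rw [hc]
    apply norm_intC_le
    rw [pow_one]
    exact A4_dvd hp3 hpm
  -- the main algebraic identity
  have hid : (((m:ℚ)+1) * 2^m * ((2:ℚ)^(2*m+4) - 1) * (p:ℚ)
        * (3 * bernoulli (2*m+4) - 4 * bernoulli (m+1)) : ℚ)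
      = ((3*((m:ℤ)+1)*2^m : ℤ) : ℚ)
          * (((2:ℚ)^(2*m+4) - 1) * stdS p (2*m+4)
            - (((2*m+3 : ℕ):ℚ)+1) * 2^(2*m+3) * (p:ℚ) * (Wd p (2*m+3) : ℚ))
        + (((-(3*((m:ℤ)+1)*2^m*(2^(2*m+4)-1))) : ℤ) : ℚ)
          * (stdS p (2*m+4) - (p:ℚ) * bernoulli (2*m+4))
        + (((-(3*(2*(m:ℤ)+4)*2^(2*m+3))) : ℤ) : ℚ)
          * (((2:ℚ)^(m+1) - 1) * stdS p (m+1) - ((m:ℚ)+1) * 2^m * (p:ℚ) * (Wd p m : ℚ))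
        + ((3*(2*(m:ℤ)+4)*2^(2*m+3)*(2^(m+1)-1) : ℤ) : ℚ)
          * (stdS p (m+1) - (p:ℚ) * bernoulli (m+1))
        + ((3*((m:ℤ)+1)*(2*(m:ℤ)+4)*2^m*2^(2*m+3) : ℤ) : ℚ)
          * ((p:ℚ) * (((Wd p (2*m+3) : ℤ) - (Wd p m : ℤ) : ℤ) : ℚ))
        + (((3*(2*(m:ℤ)+4)*2^(2*m+3)*(2^(m+1) - 1)
            - 4*((m:ℤ)+1)*2^m*(2^(2*m+4) - 1)) : ℤ) : ℚ)
          * ((p:ℚ) * bernoulli (m+1)) := by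
    push_cast
    ring
  -- norm of the right-hand side
  have hRHS : ‖((((m:ℚ)+1) * 2^m * ((2:ℚ)^(2*m+4) - 1) * (p:ℚ)
      * (3 * bernoulli (2*m+4) - 4 * bernoulli (m+1)) : ℚ) : ℚ_[p])‖ ≤ (p:ℝ)^(-(2:ℤ)) := by
    rw [hid, Rat.cast_add, Rat.cast_add, Rat.cast_add, Rat.cast_add, Rat.cast_add]
    refine norm_add_max (norm_add_max (norm_add_max (norm_add_max (norm_add_max
      ?_ ?_) ?_) ?_) ?_) ?_
    · exact int_mul_bound _ hU2
    · exact int_mul_bound _ hV2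
    · exact int_mul_bound _ hU1
    · exact int_mul_bound _ hV1
    · exact int_mul_bound _ hΔ
    · rw [Rat.cast_mul, norm_mul]
      calc ‖(((3*(2*(m:ℤ)+4)*2^(2*m+3)*(2^(m+1) - 1)
            - 4*((m:ℤ)+1)*2^m*(2^(2*m+4) - 1) : ℤ) : ℚ) : ℚ_[p])‖
            * ‖(((p:ℚ) * bernoulli (m+1) : ℚ) : ℚ_[p])‖
          ≤ (p:ℝ)^(-(1:ℤ)) * (p:ℝ)^(-(1:ℤ)) :=
            mul_le_mul hA4 hpB1 (norm_nonneg _) (zp_pos _).le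
        _ = (p:ℝ)^(-(2:ℤ)) := pp_mul
  -- factor out the unit coefficient
  have hmu : ‖((((m:ℚ)+1) : ℚ) : ℚ_[p])‖ = 1 := by
    have hc : ((((m:ℚ)+1) : ℚ) : ℚ_[p]) = ((m+1 : ℕ) : ℚ_[p]) := by push_cast; ring
    rw [hc]
    apply norm_nat_eq_one
    intro h
    have := Nat.le_of_dvd (by omega) h
    omega
  have hg1 : ‖(((2:ℚ)^m : ℚ) : ℚ_[p])‖ = 1 := by
    rw [Rat.cast_pow, norm_pow, norm_two_eq_one hp3, one_pow]
  have hz2 : ‖(((2:ℚ)^(2*m+4) - 1 : ℚ) : ℚ_[p])‖ = 1 := by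
    have hc : (((2:ℚ)^(2*m+4) - 1 : ℚ) : ℚ_[p]) = ((2^(2*m+4) - 1 : ℤ) : ℚ_[p]) := by
      push_cast; ring
    rw [hc]
    refine le_antisymm (norm_int_le_one' _) ?_
    by_contra hlt
    push_neg at hlt
    exact two_pow_not hp3 hpm (Padic.norm_intCast_lt_one_iff.mp hlt)
  have hfact : ‖((((m:ℚ)+1) * 2^m * ((2:ℚ)^(2*m+4) - 1) * (p:ℚ)
      * (3 * bernoulli (2*m+4) - 4 * bernoulli (m+1)) : ℚ) : ℚ_[p])‖
      = (p:ℝ)^(-(1:ℤ)) * ‖((3 * bernoulli (2*m+4) - 4 * bernoulli (m+1) : ℚ) : ℚ_[p])‖ := by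
    rw [Rat.cast_mul, Rat.cast_mul, Rat.cast_mul, Rat.cast_mul, norm_mul, norm_mul, norm_mul,
      norm_mul, hmu, hg1, hz2]
    have hnp : ‖((p:ℚ) : ℚ_[p])‖ = (p:ℝ)^(-(1:ℤ)) := by
      have hc : ((p:ℚ) : ℚ_[p]) = ((p:ℕ) : ℚ_[p]) := by push_cast; ring
      rw [hc, Padic.norm_p, zpow_neg_one]
    rw [hnp, one_mul, one_mul, one_mul]
  rw [hfact] at hRHS
  -- divide by p^{-1}
  have hfin : ‖((3 * bernoulli (2*m+4) - 4 * bernoulli (m+1) : ℚ) : ℚ_[p])‖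
      = (p:ℝ)^(1:ℤ) * ((p:ℝ)^(-(1:ℤ))
        * ‖((3 * bernoulli (2*m+4) - 4 * bernoulli (m+1) : ℚ) : ℚ_[p])‖) := by
    rw [← mul_assoc, pz_mul]
    norm_num
  rw [hfin]
  calc (p:ℝ)^(1:ℤ) * ((p:ℝ)^(-(1:ℤ))
        * ‖((3 * bernoulli (2*m+4) - 4 * bernoulli (m+1) : ℚ) : ℚ_[p])‖)
      ≤ (p:ℝ)^(1:ℤ) * (p:ℝ)^(-(2:ℤ)) := mul_le_mul_of_nonneg_left hRHS (zp_pos _).le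
    _ = (p:ℝ)^(-(1:ℤ)) := by rw [pz_mul]; norm_num

end Kummer

section Final

variable {p : ℕ} [hp : Fact p.Prime]

lemma sum_identity : ∀ n : ℕ,
    2 * ∑ k ∈ Icc 1 n, (∑ j ∈ Icc 1 k, (1:ℚ)/j)/k
      = (∑ j ∈ Icc 1 n, (1:ℚ)/j)^2 + ∑ k ∈ Icc 1 n, 1/(k:ℚ)^2 := by
  intro n
  induction n with
  | zero => simp
  | succ n ih =>
    have h1 : ∀ f : ℕ → ℚ, ∑ k ∈ Icc 1 (n+1), f k = ∑ k ∈ Icc 1 n, f k + f (n+1) := by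
      intro f
      rw [← Finset.Ico_add_one_right_eq_Icc, ← Finset.Ico_add_one_right_eq_Icc, Finset.sum_Ico_succ_top (by omega)]
    rw [h1 (fun k => (∑ j ∈ Icc 1 k, (1:ℚ)/j)/k), h1 (fun j => (1:ℚ)/j),
      h1 (fun k => 1/(k:ℚ)^2)]
    have hsq : (1:ℚ)/((n+1 : ℕ):ℚ)^2 = ((1:ℚ)/((n+1 : ℕ):ℚ))^2 := by
      rw [div_pow, one_pow]
    rw [hsq]
    push_cast
    linear_combination ih

lemma range_split (f : ℕ → ℚ) (hf : f 0 = 0) :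
    ∑ k ∈ range p, f k = ∑ k ∈ Icc 1 (p-1), f k := by
  have hp0 : 0 < p := hp.out.pos
  rw [← Finset.Ico_add_one_right_eq_Icc]
  have hpp : p - 1 + 1 = p := by omega
  rw [hpp, Finset.range_eq_Ico, Finset.sum_eq_sum_Ico_succ_bot hp0, hf, zero_add]

lemma harmonic_bound (hp3 : 3 < p) :
    ‖((∑ k ∈ Icc 1 (p-1), (1:ℚ)/k : ℚ) : ℚ_[p])‖ ≤ (p:ℝ)^(-(1:ℤ)) := by
  have hrev : ∑ k ∈ Icc 1 (p-1), (1:ℚ)/k = ∑ k ∈ Icc 1 (p-1), (1:ℚ)/((p-k : ℕ) : ℚ) := by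
    refine Finset.sum_nbij' (fun k => p - k) (fun k => p - k) ?_ ?_ ?_ ?_ ?_
    · intro a ha
      rw [mem_Icc] at ha ⊢
      omega
    · intro a ha
      rw [mem_Icc] at ha ⊢
      omega
    · intro a ha
      rw [mem_Icc] at ha
      omega
    · intro a ha
      rw [mem_Icc] at ha
      omega
    · intro a ha
      rw [mem_Icc] at ha
      have h : p - (p - a) = a := by omega
      rw [h]
  have h2 : (2:ℚ) * ∑ k ∈ Icc 1 (p-1), (1:ℚ)/k
      = ∑ k ∈ Icc 1 (p-1), (p:ℚ)/(k*((p-k : ℕ) : ℚ)) := by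
    rw [two_mul]
    nth_rewrite 2 [hrev]
    rw [← Finset.sum_add_distrib]
    apply Finset.sum_congr rfl
    intro k hk
    rw [mem_Icc] at hk
    have hkp : k ≤ p := by omega
    have hc : ((p - k : ℕ) : ℚ) = (p:ℚ) - k := by
      rw [Nat.cast_sub hkp]
    rw [hc]
    have hk0 : (k:ℚ) ≠ 0 := Nat.cast_ne_zero.mpr (by omega)
    have hpk0 : (p:ℚ) - k ≠ 0 := by
      have hlt : (k:ℚ) < p := by exact_mod_cast (by omega : k < p)
      linarith
    field_simp
    ring
  have h3 : ‖((∑ k ∈ Icc 1 (p-1), (p:ℚ)/(k*((p-k : ℕ) : ℚ)) : ℚ) : ℚ_[p])‖ ≤ (p:ℝ)^(-(1:ℤ)) := by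
    rw [Rat.cast_sum]
    apply norm_sum_le' (zp_pos _).le
    intro k hk
    rw [mem_Icc] at hk
    have hk1 : ¬ p ∣ k := by
      intro hd
      have := Nat.le_of_dvd (by omega) hd
      omega
    have hk2 : ¬ p ∣ (p - k) := by
      intro hd
      have := Nat.le_of_dvd (by omega) hd
      omega
    have hcast : (((p:ℚ)/(k*((p-k : ℕ) : ℚ)) : ℚ) : ℚ_[p])
        = ((p:ℕ) : ℚ_[p])/(((k:ℕ) : ℚ_[p])*((p-k : ℕ) : ℚ_[p])) := by
      push_cast
      ring
    rw [hcast, norm_div, norm_mul, Padic.norm_p, norm_nat_eq_one hk1, norm_nat_eq_one hk2]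
    rw [zpow_neg_one]
    norm_num
  have h2n : ‖((2:ℚ) : ℚ_[p])‖ = 1 := norm_two_eq_one hp3
  calc ‖((∑ k ∈ Icc 1 (p-1), (1:ℚ)/k : ℚ) : ℚ_[p])‖
      = ‖((2:ℚ) : ℚ_[p])‖ * ‖((∑ k ∈ Icc 1 (p-1), (1:ℚ)/k : ℚ) : ℚ_[p])‖ := by
        rw [h2n, one_mul]
    _ = ‖(((2:ℚ) * ∑ k ∈ Icc 1 (p-1), (1:ℚ)/k : ℚ) : ℚ_[p])‖ := by
        rw [Rat.cast_mul, norm_mul]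
    _ = ‖((∑ k ∈ Icc 1 (p-1), (p:ℚ)/(k*((p-k : ℕ) : ℚ)) : ℚ) : ℚ_[p])‖ := by rw [h2]
    _ ≤ (p:ℝ)^(-(1:ℤ)) := h3

lemma inv_sq (hp3 : 3 < p) {m k : ℕ} (hpm : p = m + 4) (h1 : 1 ≤ k) (h2 : k ≤ p - 1) :
    ‖((1/(k:ℚ)^2 - 2*(k:ℚ)^(m+1) + (k:ℚ)^(2*m+4) : ℚ) : ℚ_[p])‖ ≤ (p:ℝ)^(-(2:ℤ)) := by
  have hk0 : (k:ℚ) ≠ 0 := Nat.cast_ne_zero.mpr (by omega)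
  have hid : (1/(k:ℚ)^2 - 2*(k:ℚ)^(m+1) + (k:ℚ)^(2*m+4) : ℚ)
      = ((((k:ℤ)^(m+3) - 1 : ℤ) : ℚ) / (k:ℚ))^2 := by
    push_cast
    field_simp
    ring
  rw [hid]
  have hdvd : (p:ℤ) ∣ (k:ℤ)^(m+3) - 1 := by
    have hk : ((k:ℕ) : ZMod p) ≠ 0 := by
      rw [Ne, ZMod.natCast_eq_zero_iff]
      intro hd
      have := Nat.le_of_dvd (by omega) hd
      omega
    have hf := ZMod.pow_card_sub_one_eq_one hk
    have hp1 : p - 1 = m + 3 := by omega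
    rw [hp1] at hf
    have hz : (((k:ℤ)^(m+3) - 1 : ℤ) : ZMod p) = 0 := by
      push_cast
      rw [hf]
      ring
    exact (ZMod.intCast_zmod_eq_zero_iff_dvd _ p).mp hz
  have hnum : ‖(((((k:ℤ)^(m+3) - 1 : ℤ) : ℚ)) : ℚ_[p])‖ ≤ (p:ℝ)^(-(1:ℤ)) := by
    have hc : (((((k:ℤ)^(m+3) - 1 : ℤ) : ℚ)) : ℚ_[p]) = (((k:ℤ)^(m+3) - 1 : ℤ) : ℚ_[p]) := by
      push_cast
      ring
    rw [hc]
    apply norm_intC_le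
    rw [pow_one]
    exact hdvd
  have hden : ‖(((k:ℚ) : ℚ) : ℚ_[p])‖ = 1 := by
    have hc : (((k:ℚ) : ℚ) : ℚ_[p]) = ((k:ℕ) : ℚ_[p]) := by push_cast; ring
    rw [hc]
    apply norm_nat_eq_one
    intro hd
    have := Nat.le_of_dvd (by omega) hd
    omega
  rw [Rat.cast_pow, norm_pow, Rat.cast_div, norm_div, hden, div_one]
  calc ‖(((((k:ℤ)^(m+3) - 1 : ℤ) : ℚ)) : ℚ_[p])‖^2 ≤ ((p:ℝ)^(-(1:ℤ)))^2 :=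
      pow_le_pow_left₀ (norm_nonneg _) hnum 2
    _ = (p:ℝ)^(-(2:ℤ)) := by rw [sq, pp_mul]

lemma num_dvd_of_norm {x : ℚ} (h : ‖((x : ℚ) : ℚ_[p])‖ ≤ (p:ℝ)^(-(2:ℤ))) :
    (p:ℤ)^2 ∣ x.num := by
  have hd0 : (x.den : ℚ) ≠ 0 := Nat.cast_ne_zero.mpr x.den_nz
  have h0 : (x.num : ℚ) = x * (x.den : ℚ) := by
    have hx := Rat.num_div_den x
    rw [div_eq_iff hd0] at hx
    exact hx.symm ▸ rfl
  have hnum : ((x.num : ℤ) : ℚ_[p]) = ((x : ℚ) : ℚ_[p]) * ((x.den : ℕ) : ℚ_[p]) := by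
    have := congrArg (fun q : ℚ => ((q : ℚ) : ℚ_[p])) h0
    push_cast at this
    exact_mod_cast this
  have hb : ‖((x.num : ℤ) : ℚ_[p])‖ ≤ (p:ℝ)^(-(2:ℤ)) := by
    rw [hnum, norm_mul]
    calc ‖((x : ℚ) : ℚ_[p])‖ * ‖((x.den : ℕ) : ℚ_[p])‖ ≤ (p:ℝ)^(-(2:ℤ)) * 1 :=
        mul_le_mul h (norm_nat_le_one _) (norm_nonneg _) (zp_pos _).le
      _ = (p:ℝ)^(-(2:ℤ)) := mul_one _
  have h2 := (Padic.norm_int_le_pow_iff_dvd (p := p) x.num 2).mp (by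
    simpa using hb)
  exact_mod_cast h2

end Final

end Stmt6

/-- For a prime `p > 3`,
`∑_{k=1}^{p-1} H_k/k ≡ (p/3)·B_{p-3} (mod p²)`. -/
theorem stmt_6 (p : ℕ) (hp : p.Prime) (hp3 : 3 < p) :
    (p : ℤ) ^ 2 ∣
      ((∑ k ∈ Finset.Icc 1 (p - 1),
          (∑ j ∈ Finset.Icc 1 k, (1 : ℚ) / j) / (k : ℚ))
        - (p : ℚ) / 3 * bernoulli (p - 3)).num := by
  haveI : Fact p.Prime := ⟨hp⟩
  obtain ⟨m, hpm⟩ : ∃ m, p = m + 4 := ⟨p - 4, by omega⟩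
  have hmo : Odd m := by
    have hodd : Odd p := hp.odd_of_ne_two (by omega)
    rcases hodd with ⟨t, ht⟩
    exact ⟨t - 2, by omega⟩
  rw [show p - 1 = m + 3 by omega, show p - 3 = m + 1 by omega]
  apply Stmt6.num_dvd_of_norm
  -- the rational number in question
  set X : ℚ := (∑ k ∈ Finset.Icc 1 (m+3), (∑ j ∈ Finset.Icc 1 k, (1:ℚ)/j)/(k:ℚ))
      - (p:ℚ)/3 * bernoulli (m+1) with hX
  -- key identity for 2X
  have e1 := Stmt6.sum_identity (m+3)
  have e2 : Stmt6.stdS p (m+1) = ∑ k ∈ Finset.Icc 1 (m+3), (k:ℚ)^(m+1) := by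
    rw [Stmt6.stdS, Stmt6.range_split (fun k => (k:ℚ)^(m+1)) (by norm_num),
      show p - 1 = m + 3 by omega]
  have e3 : Stmt6.stdS p (2*m+4) = ∑ k ∈ Finset.Icc 1 (m+3), (k:ℚ)^(2*m+4) := by
    rw [Stmt6.stdS, Stmt6.range_split (fun k => (k:ℚ)^(2*m+4)) (by norm_num),
      show p - 1 = m + 3 by omega]
  have e4 : ∑ k ∈ Finset.Icc 1 (m+3), (1/(k:ℚ)^2 - 2*(k:ℚ)^(m+1) + (k:ℚ)^(2*m+4))
      = (∑ k ∈ Finset.Icc 1 (m+3), 1/(k:ℚ)^2)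
        - 2*(∑ k ∈ Finset.Icc 1 (m+3), (k:ℚ)^(m+1))
        + (∑ k ∈ Finset.Icc 1 (m+3), (k:ℚ)^(2*m+4)) := by
    rw [Finset.sum_add_distrib, Finset.sum_sub_distrib, ← Finset.mul_sum]
  have h2X : (2:ℚ) * X
      = (∑ j ∈ Finset.Icc 1 (m+3), (1:ℚ)/j)^2
        + ((∑ k ∈ Finset.Icc 1 (m+3), (1/(k:ℚ)^2 - 2*(k:ℚ)^(m+1) + (k:ℚ)^(2*m+4)))
        + ((2*(Stmt6.stdS p (m+1) - (p:ℚ)*bernoulli (m+1))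
            - (Stmt6.stdS p (2*m+4) - (p:ℚ)*bernoulli (2*m+4)))
        + (-((p:ℚ)/3)*(3*bernoulli (2*m+4) - 4*bernoulli (m+1))))) := by
    rw [hX, e4, ← e2, ← e3]
    linear_combination e1
  -- norm bounds
  have hG1 : ‖(((∑ j ∈ Finset.Icc 1 (m+3), (1:ℚ)/j)^2 : ℚ) : ℚ_[p])‖ ≤ (p:ℝ)^(-(2:ℤ)) := by
    rw [Rat.cast_pow, norm_pow]
    have hh := Stmt6.harmonic_bound (p := p) hp3
    rw [show p - 1 = m + 3 by omega] at hh
    calc ‖((∑ j ∈ Finset.Icc 1 (m+3), (1:ℚ)/j : ℚ) : ℚ_[p])‖^2 ≤ ((p:ℝ)^(-(1:ℤ)))^2 :=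
        pow_le_pow_left₀ (norm_nonneg _) hh 2
      _ = (p:ℝ)^(-(2:ℤ)) := by rw [sq, Stmt6.pp_mul]
  have hG2 : ‖((∑ k ∈ Finset.Icc 1 (m+3), (1/(k:ℚ)^2 - 2*(k:ℚ)^(m+1) + (k:ℚ)^(2*m+4)) : ℚ) : ℚ_[p])‖
      ≤ (p:ℝ)^(-(2:ℤ)) := by
    rw [Rat.cast_sum]
    apply Stmt6.norm_sum_le' (Stmt6.zp_pos _).le
    intro k hk
    rw [Finset.mem_Icc] at hk
    exact Stmt6.inv_sq hp3 hpm hk.1 (by omega)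
  have hV1 := Stmt6.S_pB (p := p) hp3 hmo.add_one (by omega)
  have hV2 := Stmt6.S_pB (p := p) hp3 (⟨m+2, by omega⟩ : Even (2*m+4)) (by omega)
  have hG3 : ‖((2*(Stmt6.stdS p (m+1) - (p:ℚ)*bernoulli (m+1))
      - (Stmt6.stdS p (2*m+4) - (p:ℚ)*bernoulli (2*m+4)) : ℚ) : ℚ_[p])‖ ≤ (p:ℝ)^(-(2:ℤ)) := by
    rw [Rat.cast_sub]
    apply Stmt6.norm_sub_max ?_ hV2
    rw [Rat.cast_mul, norm_mul, Stmt6.norm_two_eq_one hp3, one_mul]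
    exact hV1
  have hG4 : ‖((-((p:ℚ)/3)*(3*bernoulli (2*m+4) - 4*bernoulli (m+1)) : ℚ) : ℚ_[p])‖
      ≤ (p:ℝ)^(-(2:ℤ)) := by
    rw [Rat.cast_mul, norm_mul]
    have hcoef : ‖((-((p:ℚ)/3) : ℚ) : ℚ_[p])‖ = (p:ℝ)^(-(1:ℤ)) := by
      have hc : ((-((p:ℚ)/3) : ℚ) : ℚ_[p]) = -(((p:ℕ) : ℚ_[p]) / ((3:ℕ) : ℚ_[p])) := by
        push_cast
        ring
      have h3 : ¬ p ∣ 3 := by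
        intro hd
        have := Nat.le_of_dvd (by norm_num) hd
        omega
      rw [hc, norm_neg, norm_div, Padic.norm_p, Stmt6.norm_nat_eq_one h3, div_one,
        zpow_neg_one]
    rw [hcoef]
    calc (p:ℝ)^(-(1:ℤ)) * ‖((3*bernoulli (2*m+4) - 4*bernoulli (m+1) : ℚ) : ℚ_[p])‖
        ≤ (p:ℝ)^(-(1:ℤ)) * (p:ℝ)^(-(1:ℤ)) :=
          mul_le_mul_of_nonneg_left (Stmt6.kummer hp3 hpm hmo) (Stmt6.zp_pos _).le
      _ = (p:ℝ)^(-(2:ℤ)) := Stmt6.pp_mul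
  -- combine
  have h2n : ‖((2:ℚ) : ℚ_[p])‖ = 1 := Stmt6.norm_two_eq_one hp3
  calc ‖((X : ℚ) : ℚ_[p])‖
      = ‖((2:ℚ) : ℚ_[p])‖ * ‖((X : ℚ) : ℚ_[p])‖ := by rw [h2n, one_mul]
    _ = ‖(((2:ℚ) * X : ℚ) : ℚ_[p])‖ := by rw [Rat.cast_mul, norm_mul]
    _ ≤ (p:ℝ)^(-(2:ℤ)) := by
        rw [h2X, Rat.cast_add, Rat.cast_add, Rat.cast_add]
        exact Stmt6.norm_add_max hG1 (Stmt6.norm_add_max hG2 (Stmt6.norm_add_max hG3 hG4))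
end

section
/- For every positive integer n, ∑_{k=1}^{n} C(n,k)·((−1)^{k-1}/k)·H_k = H_{n,2}. -/
open Finset

def Hq (k : ℕ) : ℚ := ∑ i ∈ range k, 1/((i:ℚ)+1)

lemma L1 (n : ℕ) : ∑ j ∈ range (n+1), (-1:ℚ)^j * ((n+1).choose (j+1)) = 1 := by
  have h := Int.alternating_sum_range_choose (n := n+1)
  simp only [Nat.succ_ne_zero, if_false] at h
  have h' : (∑ i ∈ range (n+2), (-1:ℚ)^i * ((n+1).choose i)) = 0 := by
    exact_mod_cast congrArg (Int.cast : ℤ → ℚ) h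
  rw [Finset.sum_range_succ'] at h'
  simp only [pow_zero, Nat.choose_zero_right, Nat.cast_one, one_mul, pow_succ] at h'
  have : (∑ j ∈ range (n+1), -((-1:ℚ)^j * ((n+1).choose (j+1)))) + 1 = 0 := by
    rw [← h']; congr 1; apply Finset.sum_congr rfl; intro j _; ring
  rw [Finset.sum_neg_distrib] at this
  linarith

lemma Lcd (n j : ℕ) : (n.choose j : ℚ) / ((j:ℚ)+1) = ((n+1).choose (j+1) : ℚ) / ((n:ℚ)+1) := by
  rw [div_eq_div_iff (by positivity) (by positivity)]
  have h := Nat.add_one_mul_choose_eq n j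
  have : ((n+1) * n.choose j : ℚ) = ((n+1).choose (j+1) * (j+1) : ℚ) := by exact_mod_cast h
  push_cast at this ⊢
  linarith

lemma L2 (n : ℕ) : ∑ j ∈ range (n+1), (-1:ℚ)^j * (n.choose j) / ((j:ℚ)+1) = 1/((n:ℚ)+1) := by
  have : ∀ j ∈ range (n+1), (-1:ℚ)^j * (n.choose j) / ((j:ℚ)+1)
      = ((-1:ℚ)^j * ((n+1).choose (j+1))) * (1/((n:ℚ)+1)) := by
    intro j _
    rw [mul_div_assoc, Lcd]
    ring
  rw [Finset.sum_congr rfl this, ← Finset.sum_mul, L1, one_mul]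

lemma Hq_succ (k : ℕ) : Hq (k+1) = Hq k + 1/((k:ℚ)+1) := by
  simp [Hq, Finset.sum_range_succ]

lemma LA : ∀ n : ℕ, ∑ j ∈ range n, (-1:ℚ)^j * (n.choose (j+1)) * Hq (j+1) = 1/(n:ℚ)
  | 0 => by simp
  | (n+1) => by
    have IH := LA n
    have key : ∑ j ∈ range (n+1), (-1:ℚ)^j * ((n+1).choose (j+1)) * Hq (j+1)
        = (∑ j ∈ range (n+1), (-1:ℚ)^j * (n.choose j) * Hq j)
          + (∑ j ∈ range (n+1), (-1:ℚ)^j * (n.choose j) / ((j:ℚ)+1))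
          + (∑ j ∈ range (n+1), (-1:ℚ)^j * (n.choose (j+1)) * Hq (j+1)) := by
      rw [← Finset.sum_add_distrib, ← Finset.sum_add_distrib]
      apply Finset.sum_congr rfl
      intro j _
      rw [Nat.choose_succ_succ, Hq_succ]
      push_cast
      ring
    have e1 : ∑ j ∈ range (n+1), (-1:ℚ)^j * (n.choose j) * Hq j = -(1/(n:ℚ)) := by
      rw [Finset.sum_range_succ', ← IH]
      have h0 : (-1:ℚ)^0 * (n.choose 0) * Hq 0 = 0 := by simp [Hq]
      rw [h0, add_zero]
      rw [← Finset.sum_neg_distrib]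
      apply Finset.sum_congr rfl
      intro i _
      push_cast
      ring
    have e3 : ∑ j ∈ range (n+1), (-1:ℚ)^j * (n.choose (j+1)) * Hq (j+1) = 1/(n:ℚ) := by
      rw [Finset.sum_range_succ, Nat.choose_succ_self, IH]
      simp
    rw [key, e1, L2 n, e3]
    push_cast
    ring

lemma LTT : ∀ n : ℕ, ∑ j ∈ range n, ((n.choose (j+1)):ℚ) * ((-1:ℚ)^j/((j:ℚ)+1)) * Hq (j+1)
    = ∑ j ∈ range n, 1/((j:ℚ)+1)^2
  | 0 => by simp
  | (n+1) => by
    have IH := LTT n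
    have key : ∑ j ∈ range (n+1), (((n+1).choose (j+1)):ℚ) * ((-1:ℚ)^j/((j:ℚ)+1)) * Hq (j+1)
        = (∑ j ∈ range (n+1), ((n.choose j):ℚ) * ((-1:ℚ)^j/((j:ℚ)+1)) * Hq (j+1))
          + (∑ j ∈ range (n+1), ((n.choose (j+1)):ℚ) * ((-1:ℚ)^j/((j:ℚ)+1)) * Hq (j+1)) := by
      rw [← Finset.sum_add_distrib]
      apply Finset.sum_congr rfl
      intro j _
      rw [Nat.choose_succ_succ]
      push_cast
      ring
    have e1 : ∑ j ∈ range (n+1), ((n.choose j):ℚ) * ((-1:ℚ)^j/((j:ℚ)+1)) * Hq (j+1)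
        = 1/((n:ℚ)+1) * (1/((n:ℚ)+1)) := by
      have : ∀ j ∈ range (n+1), ((n.choose j):ℚ) * ((-1:ℚ)^j/((j:ℚ)+1)) * Hq (j+1)
          = 1/((n:ℚ)+1) * ((-1:ℚ)^j * (((n+1).choose (j+1)):ℚ) * Hq (j+1)) := by
        intro j _
        have h1 : ((n.choose j):ℚ) * ((-1:ℚ)^j/((j:ℚ)+1)) * Hq (j+1)
            = ((n.choose j:ℚ)/((j:ℚ)+1)) * ((-1:ℚ)^j * Hq (j+1)) := by ring
        rw [h1, Lcd]
        ring
      rw [Finset.sum_congr rfl this, ← Finset.mul_sum, LA (n+1)]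
      push_cast
      ring
    have e2 : ∑ j ∈ range (n+1), ((n.choose (j+1)):ℚ) * ((-1:ℚ)^j/((j:ℚ)+1)) * Hq (j+1)
        = ∑ j ∈ range n, 1/((j:ℚ)+1)^2 := by
      rw [Finset.sum_range_succ, Nat.choose_succ_self, IH]
      simp
    rw [key, e1, e2, Finset.sum_range_succ]
    have : 1/((n:ℚ)+1) * (1/((n:ℚ)+1)) = 1/((n:ℚ)+1)^2 := by rw [div_mul_div_comm, one_mul, ← sq]
    rw [this]
    exact add_comm _ _

lemma HqIcc (k : ℕ) : ∑ j ∈ Finset.Icc 1 k, (1:ℚ)/(j:ℚ) = Hq k := by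
  rw [← Finset.Ico_add_one_right_eq_Icc, Finset.sum_Ico_eq_sum_range, Nat.add_sub_cancel]
  apply Finset.sum_congr rfl
  intro i _
  push_cast
  rw [add_comm]

/-- For every positive integer `n`,
`∑_{k=1}^{n} C(n,k)·((-1)^{k-1}/k)·H_k = H_{n,2}`. -/
theorem stmt_8 (n : ℕ) (hn : 0 < n) :
    ∑ k ∈ Finset.Icc 1 n,
        (n.choose k : ℚ) * ((-1 : ℚ) ^ (k - 1) / (k : ℚ))
          * (∑ j ∈ Finset.Icc 1 k, (1 : ℚ) / j)
      = ∑ k ∈ Finset.Icc 1 n, (1 : ℚ) / (k : ℚ) ^ 2 := by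
  rw [show Finset.Icc 1 n = Finset.Ico 1 (n+1) from (Finset.Ico_add_one_right_eq_Icc 1 n).symm, Finset.sum_Ico_eq_sum_range, Finset.sum_Ico_eq_sum_range, Nat.add_sub_cancel]
  have h1 : ∑ i ∈ range n,
      (n.choose (1+i) : ℚ) * ((-1 : ℚ) ^ ((1+i) - 1) / ((1+i : ℕ) : ℚ))
        * (∑ j ∈ Finset.Icc 1 (1+i), (1 : ℚ) / j)
      = ∑ j ∈ range n, ((n.choose (j+1)):ℚ) * ((-1:ℚ)^j/((j:ℚ)+1)) * Hq (j+1) := by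
    apply Finset.sum_congr rfl
    intro i _
    rw [HqIcc, add_comm 1 i, Nat.add_sub_cancel]
    push_cast
    ring
  rw [h1, LTT n]
  apply Finset.sum_congr rfl
  intro i _
  push_cast
  rw [add_comm]
end

section
/- Let p > 3 be a prime. Then ∑_{1 ≤ i ≤ j ≤ k ≤ p-1} (2^i − (−1)^i)/(i·j·k) ≡ ∑_{k=1}^{p-1} ((−1)^k − 2^k)/k³ (mod p). -/
open Finset

lemma icc_split_s10 (m n : ℕ) (h : m ≤ n) :
    Finset.Icc m n = insert m (Finset.Icc (m+1) n) := by
  ext x; simp only [mem_Icc, mem_insert]; omega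

lemma icc_swap {M : Type*} [AddCommMonoid M] (n : ℕ) (f : ℕ → ℕ → M) :
    ∑ k ∈ Icc 1 n, ∑ j ∈ Icc 1 k, f j k = ∑ j ∈ Icc 1 n, ∑ k ∈ Icc j n, f j k := by
  refine Finset.sum_comm' ?_
  intro k j; simp only [mem_Icc]; omega

section Core
variable {p : ℕ} [hfp : Fact p.Prime]

/-- sum of j⁻¹ for j from m to p-1 -/
def F1 (p m : ℕ) : ZMod p := ∑ j ∈ Icc m (p-1), (j : ZMod p)⁻¹

/-- sum over m ≤ j ≤ k ≤ p-1 of 1/(jk) -/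
def F2 (p m : ℕ) : ZMod p := ∑ j ∈ Icc m (p-1), (j : ZMod p)⁻¹ * F1 p j

lemma cast_ne_zero_of_mem {k : ℕ} (h1 : 1 ≤ k) (h2 : k ≤ p - 1) : (k : ZMod p) ≠ 0 := by
  have hp := hfp.out
  intro h
  have := (ZMod.natCast_eq_zero_iff k p).mp h
  have := Nat.le_of_dvd (by omega) this
  have := hp.two_le
  omega

lemma sum_inv_pow_eq_zero (d : ℕ) (hd : 0 < d) (hdp : d < p - 1) :
    ∑ k ∈ Icc 1 (p-1), ((k : ZMod p)⁻¹)^d = 0 := by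
  have hp := hfp.out
  have hcard : Fintype.card (ZMod p) = p := ZMod.card p
  have h1 : ∑ k ∈ Icc 1 (p-1), ((k : ZMod p)⁻¹)^d
      = ∑ x ∈ (Finset.univ.erase (0 : ZMod p)), (x⁻¹)^d := by
    refine Finset.sum_nbij' (fun k => (k : ZMod p)) (fun x => x.val) ?_ ?_ ?_ ?_ ?_
    · intro k hk
      simp only [mem_Icc] at hk
      simp only [mem_erase, mem_univ, and_true]
      exact cast_ne_zero_of_mem hk.1 hk.2
    · intro x hx
      simp only [mem_erase, mem_univ, and_true] at hx
      simp only [mem_Icc]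
      constructor
      · by_contra h
        push_neg at h
        interval_cases hv : x.val
        · exact hx ((ZMod.val_eq_zero x).mp hv)
      · have := ZMod.val_lt x
        omega
    · intro k hk
      simp only [mem_Icc] at hk
      exact ZMod.val_natCast_of_lt (by omega)
    · intro x _
      haveI : NeZero p := ⟨hfp.out.pos.ne'⟩
      exact ZMod.natCast_rightInverse x
    · intro k _; rfl
  rw [h1]
  have h2 : ∑ x ∈ (Finset.univ.erase (0 : ZMod p)), (x⁻¹)^d
      = ∑ x : ZMod p, (x⁻¹)^d := by
    rw [← Finset.sum_erase_add Finset.univ _ (Finset.mem_univ (0:ZMod p))]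
    simp [zero_pow (by omega : d ≠ 0)]
  rw [h2]
  have h3 : ∑ x : ZMod p, (x⁻¹)^d = ∑ x : ZMod p, x^d := by
    exact Fintype.sum_bijective (·⁻¹) (Function.Involutive.bijective inv_inv) _ _ (fun x => rfl)
  rw [h3]
  have := FiniteField.sum_pow_lt_card_sub_one (K := ZMod p) d (by rw [hcard]; omega)
  exact this

lemma choose_p_sub_one (m : ℕ) (hm : m ≤ p - 1) :
    (((p-1).choose m : ℕ) : ZMod p) = (-1 : ZMod p)^m := by
  have hp := hfp.out
  have hp2 := hp.two_le
  induction m with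
  | zero => simp
  | succ m ih =>
    have ihm : (((p-1).choose m : ℕ) : ZMod p) = (-1 : ZMod p)^m := ih (by omega)
    have hpascal : (p-1).choose m + (p-1).choose (m+1) = p.choose (m+1) := by
      have := Nat.choose_succ_succ (p-1) m
      simp only [Nat.succ_eq_add_one] at this
      rw [show p - 1 + 1 = p by omega] at this
      omega
    have hzero : ((p.choose (m+1) : ℕ) : ZMod p) = 0 := by
      rw [ZMod.natCast_eq_zero_iff]
      exact hp.dvd_choose_self (Nat.succ_ne_zero m) (by omega)
    have hcast := congrArg (fun t : ℕ => (t : ZMod p)) hpascal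
    simp only [Nat.cast_add] at hcast
    rw [hzero, ihm] at hcast
    rw [pow_succ]
    linear_combination hcast
lemma hockey (m : ℕ) (hm : 1 ≤ m) :
    ∑ k ∈ Icc m (p-1), (k-1).choose (m-1) = (p-1).choose m := by
  have hp2 := hfp.out.two_le
  have hmap : Finset.Icc m (p-1) =
      (Finset.Icc (m-1) (p-1-1)).map (addRightEmbedding 1) := by
    rw [Finset.map_add_right_Icc]
    congr 1 <;> omega
  rw [hmap, Finset.sum_map]
  simp only [addRightEmbedding_apply, Nat.add_sub_cancel]
  rw [Nat.sum_Icc_choose]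
  congr 1 <;> omega

lemma key_pt (m k : ℕ) (hm : 1 ≤ m) (hmp : m ≤ p-1) (hk : m ≤ k) (hkp : k ≤ p-1) :
    (k.choose m : ZMod p) * (k : ZMod p)⁻¹
      = (m : ZMod p)⁻¹ * ((k-1).choose (m-1) : ZMod p) := by
  have hknat : k * ((k-1).choose (m-1)) = k.choose m * m := by
    have := Nat.add_one_mul_choose_eq (k-1) (m-1)
    rw [show k - 1 + 1 = k by omega, show m - 1 + 1 = m by omega] at this
    exact this
  have hkF : (k : ZMod p) ≠ 0 := cast_ne_zero_of_mem (by omega) hkp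
  have hmF : (m : ZMod p) ≠ 0 := cast_ne_zero_of_mem hm hmp
  have hcast := congrArg (fun t : ℕ => (t : ZMod p)) hknat
  simp only [Nat.cast_mul] at hcast
  field_simp
  linear_combination -hcast


end Core

section Core2
variable {p : ℕ} [hfp : Fact p.Prime]

lemma F1_rec (m : ℕ) (hm : m ≤ p - 1) :
    F1 p m = (m : ZMod p)⁻¹ + F1 p (m+1) := by
  rw [F1, F1, icc_split_s10 m (p-1) hm, Finset.sum_insert (by simp)]

lemma F2_rec (m : ℕ) (hm : m ≤ p - 1) :
    F2 p m = (m : ZMod p)⁻¹ * F1 p m + F2 p (m+1) := by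
  rw [F2, F2, icc_split_s10 m (p-1) hm, Finset.sum_insert (by simp)]

lemma F1_one (hp3 : 3 < p) : F1 p 1 = 0 := by
  have := sum_inv_pow_eq_zero (p := p) 1 (by omega) (by have := hfp.out.two_le; omega)
  simpa [F1] using this

lemma F2_one (hp3 : 3 < p) : F2 p 1 = 0 := by
  have hp2 := hfp.out.two_le
  set n := p - 1 with hn
  have hB : ∑ j ∈ Icc 1 n, (j : ZMod p)⁻¹ * ∑ k ∈ Icc 1 j, (k : ZMod p)⁻¹
      = F2 p 1 := by
    have h1 : ∑ j ∈ Icc 1 n, (j : ZMod p)⁻¹ * ∑ k ∈ Icc 1 j, (k : ZMod p)⁻¹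
        = ∑ j ∈ Icc 1 n, ∑ k ∈ Icc 1 j, ((j : ZMod p)⁻¹ * (k : ZMod p)⁻¹) := by
      refine Finset.sum_congr rfl fun j _ => ?_
      rw [Finset.mul_sum]
    rw [h1, icc_swap n (fun k j => (j : ZMod p)⁻¹ * (k : ZMod p)⁻¹)]
    rw [F2]
    refine Finset.sum_congr rfl fun k _ => ?_
    rw [F1, Finset.mul_sum]
    refine Finset.sum_congr rfl fun j _ => ?_
    ring
  have hsum : ∀ j ∈ Icc 1 n, F1 p j + ∑ k ∈ Icc 1 j, (k : ZMod p)⁻¹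
      = F1 p 1 + (j : ZMod p)⁻¹ := by
    intro j hj
    simp only [mem_Icc] at hj
    have hun : Icc 1 n = Icc 1 j ∪ Icc (j+1) n := by
      ext t; simp only [mem_Icc, mem_union]; omega
    have hdisj : Disjoint (Icc 1 j) (Icc (j+1) n) := by
      rw [Finset.disjoint_left]
      intro t ht1 ht2
      simp only [mem_Icc] at ht1 ht2
      omega
    have hsplit : F1 p 1 = (∑ k ∈ Icc 1 j, (k : ZMod p)⁻¹) + F1 p (j+1) := by
      rw [F1, ← hn, hun, Finset.sum_union hdisj]; rfl
    have hr := F1_rec (p := p) j hj.2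
    rw [hsplit, hr]
    ring
  have hAB : F2 p 1 + F2 p 1 = F1 p 1 * F1 p 1 + ∑ j ∈ Icc 1 n, ((j:ZMod p)⁻¹)^2 := by
    calc F2 p 1 + F2 p 1
        = F2 p 1 + ∑ j ∈ Icc 1 n, (j : ZMod p)⁻¹ * ∑ k ∈ Icc 1 j, (k : ZMod p)⁻¹ := by
          rw [hB]
      _ = ∑ j ∈ Icc 1 n, (j : ZMod p)⁻¹ * (F1 p j + ∑ k ∈ Icc 1 j, (k : ZMod p)⁻¹) := by
          rw [F2, ← Finset.sum_add_distrib]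
          refine Finset.sum_congr rfl fun j _ => ?_
          ring
      _ = ∑ j ∈ Icc 1 n, (j : ZMod p)⁻¹ * (F1 p 1 + (j : ZMod p)⁻¹) := by
          refine Finset.sum_congr rfl fun j hj => ?_
          rw [hsum j hj]
      _ = F1 p 1 * F1 p 1 + ∑ j ∈ Icc 1 n, ((j:ZMod p)⁻¹)^2 := by
          simp only [mul_add]
          rw [Finset.sum_add_distrib, ← Finset.sum_mul]
          have hid : ∑ j ∈ Icc 1 n, (j:ZMod p)⁻¹ = F1 p 1 := rfl
          rw [hid]
          congr 1
          exact Finset.sum_congr rfl fun j _ => by ring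
  rw [F1_one hp3, sum_inv_pow_eq_zero 2 (by omega) (by omega)] at hAB
  have h2 : (2 : ZMod p) * F2 p 1 = 0 := by linear_combination hAB
  have h2ne : (2 : ZMod p) ≠ 0 := by
    have : ((2:ℕ) : ZMod p) ≠ 0 := cast_ne_zero_of_mem (by omega) (by omega)
    simpa using this
  exact (mul_eq_zero.mp h2).resolve_left h2ne

end Core2
section Core3
variable {p : ℕ} [hfp : Fact p.Prime]

lemma psi1 (hp3 : 3 < p) (m : ℕ) (hm1 : 1 ≤ m) :
    m ≤ p - 1 →
    ∑ k ∈ Icc m (p-1), ((k-1).choose (m-1) : ZMod p) * (k : ZMod p)⁻¹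
      = (-1 : ZMod p)^m * F1 p m := by
  induction m, hm1 using Nat.le_induction with
  | base =>
    intro _
    simp only [Nat.sub_self, Nat.choose_zero_right, Nat.cast_one, one_mul]
    rw [show ∑ k ∈ Icc 1 (p-1), (k : ZMod p)⁻¹ = F1 p 1 from rfl, F1_one hp3]
    ring
  | succ m hm ih =>
    intro hmp1
    have hmp : m ≤ p - 1 := by omega
    have ihm := ih hmp
    have key2 : ∑ k ∈ Icc m (p-1), (k.choose m : ZMod p) * (k : ZMod p)⁻¹
        = (m : ZMod p)⁻¹ * (-1 : ZMod p)^m := by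
      rw [Finset.sum_congr rfl (fun k hk => by
        simp only [mem_Icc] at hk
        exact key_pt m k hm hmp hk.1 hk.2)]
      rw [← Finset.mul_sum, ← Nat.cast_sum, hockey m hm, choose_p_sub_one m hmp]
    have key1 : ∑ k ∈ Icc m (p-1), (k.choose m : ZMod p) * (k : ZMod p)⁻¹
        = (∑ k ∈ Icc m (p-1), ((k-1).choose (m-1) : ZMod p) * (k : ZMod p)⁻¹)
          + ∑ k ∈ Icc (m+1) (p-1), ((k-1).choose m : ZMod p) * (k : ZMod p)⁻¹ := by
      have hsplit : ∀ k ∈ Icc m (p-1), (k.choose m : ZMod p) * (k : ZMod p)⁻¹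
          = ((k-1).choose (m-1) : ZMod p) * (k : ZMod p)⁻¹
            + ((k-1).choose m : ZMod p) * (k : ZMod p)⁻¹ := by
        intro k hk
        simp only [mem_Icc] at hk
        have hkc : k.choose m = (k-1).choose (m-1) + (k-1).choose m := by
          have := Nat.choose_succ_succ (k-1) (m-1)
          simp only [Nat.succ_eq_add_one] at this
          rw [show k - 1 + 1 = k by omega, show m - 1 + 1 = m by omega] at this
          exact this
        rw [hkc]
        push_cast
        ring
      rw [Finset.sum_congr rfl hsplit, Finset.sum_add_distrib]
      congr 1
      rw [icc_split_s10 m (p-1) hmp, Finset.sum_insert (by simp)]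
      rw [Nat.choose_eq_zero_of_lt (by omega : m - 1 < m)]
      simp
    have hF1 : F1 p m = (m : ZMod p)⁻¹ + F1 p (m+1) := F1_rec m hmp
    simp only [Nat.add_sub_cancel]
    linear_combination key2 - key1 - ihm - ((-1 : ZMod p)^m) * hF1

lemma psi2 (hp3 : 3 < p) (m : ℕ) (hm1 : 1 ≤ m) :
    m ≤ p - 1 →
    ∑ k ∈ Icc m (p-1), ((k-1).choose (m-1) : ZMod p) * ((k : ZMod p)⁻¹)^2
      = (-1 : ZMod p)^m * F2 p m := by
  induction m, hm1 using Nat.le_induction with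
  | base =>
    intro _
    simp only [Nat.sub_self, Nat.choose_zero_right, Nat.cast_one, one_mul]
    rw [sum_inv_pow_eq_zero 2 (by omega) (by omega), F2_one hp3]
    ring
  | succ m hm ih =>
    intro hmp1
    have hmp : m ≤ p - 1 := by omega
    have ihm := ih hmp
    have key2 : ∑ k ∈ Icc m (p-1), (k.choose m : ZMod p) * ((k : ZMod p)⁻¹)^2
        = (m : ZMod p)⁻¹ * ((-1 : ZMod p)^m * F1 p m) := by
      rw [Finset.sum_congr rfl (fun k hk => by
        simp only [mem_Icc] at hk
        have h1 := key_pt m k hm hmp hk.1 hk.2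
        calc (k.choose m : ZMod p) * ((k : ZMod p)⁻¹)^2
            = ((k.choose m : ZMod p) * (k : ZMod p)⁻¹) * (k : ZMod p)⁻¹ := by ring
          _ = ((m : ZMod p)⁻¹ * ((k-1).choose (m-1) : ZMod p)) * (k : ZMod p)⁻¹ := by
              rw [h1]
          _ = (m : ZMod p)⁻¹ * (((k-1).choose (m-1) : ZMod p) * (k : ZMod p)⁻¹) := by
              ring)]
      rw [← Finset.mul_sum, psi1 hp3 m hm hmp]
    have key1 : ∑ k ∈ Icc m (p-1), (k.choose m : ZMod p) * ((k : ZMod p)⁻¹)^2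
        = (∑ k ∈ Icc m (p-1), ((k-1).choose (m-1) : ZMod p) * ((k : ZMod p)⁻¹)^2)
          + ∑ k ∈ Icc (m+1) (p-1), ((k-1).choose m : ZMod p) * ((k : ZMod p)⁻¹)^2 := by
      have hsplit : ∀ k ∈ Icc m (p-1), (k.choose m : ZMod p) * ((k : ZMod p)⁻¹)^2
          = ((k-1).choose (m-1) : ZMod p) * ((k : ZMod p)⁻¹)^2
            + ((k-1).choose m : ZMod p) * ((k : ZMod p)⁻¹)^2 := by
        intro k hk
        simp only [mem_Icc] at hk
        have hkc : k.choose m = (k-1).choose (m-1) + (k-1).choose m := by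
          have := Nat.choose_succ_succ (k-1) (m-1)
          simp only [Nat.succ_eq_add_one] at this
          rw [show k - 1 + 1 = k by omega, show m - 1 + 1 = m by omega] at this
          exact this
        rw [hkc]
        push_cast
        ring
      rw [Finset.sum_congr rfl hsplit, Finset.sum_add_distrib]
      congr 1
      rw [icc_split_s10 m (p-1) hmp, Finset.sum_insert (by simp)]
      rw [Nat.choose_eq_zero_of_lt (by omega : m - 1 < m)]
      simp
    have hF2 : F2 p m = (m : ZMod p)⁻¹ * F1 p m + F2 p (m+1) := F2_rec m hmp
    simp only [Nat.add_sub_cancel]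
    linear_combination key2 - key1 - ihm - ((-1 : ZMod p)^m) * hF2

end Core3
section Core4
variable {p : ℕ} [hfp : Fact p.Prime]

lemma main_id (hp3 : 3 < p) (x : ZMod p) :
    (∑ k ∈ Icc 1 (p-1), ∑ j ∈ Icc 1 k, ∑ i ∈ Icc 1 j,
        x^i * ((i : ZMod p)⁻¹ * (j : ZMod p)⁻¹ * (k : ZMod p)⁻¹))
      = ∑ k ∈ Icc 1 (p-1), (1-x)^k * ((k : ZMod p)⁻¹)^3 := by
  have hp2 := hfp.out.two_le
  have hp5 : 4 < p := by
    by_contra h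
    push_neg at h
    have h4 : p = 4 := by omega
    rw [h4] at hfp
    exact absurd hfp.out (by norm_num)
  have hL : (∑ k ∈ Icc 1 (p-1), ∑ j ∈ Icc 1 k, ∑ i ∈ Icc 1 j,
        x^i * ((i : ZMod p)⁻¹ * (j : ZMod p)⁻¹ * (k : ZMod p)⁻¹))
      = ∑ i ∈ Icc 1 (p-1), x^i * (i : ZMod p)⁻¹ * F2 p i := by
    calc ∑ k ∈ Icc 1 (p-1), ∑ j ∈ Icc 1 k, ∑ i ∈ Icc 1 j,
          x^i * ((i : ZMod p)⁻¹ * (j : ZMod p)⁻¹ * (k : ZMod p)⁻¹)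
        = ∑ j ∈ Icc 1 (p-1), ∑ k ∈ Icc j (p-1), ∑ i ∈ Icc 1 j,
            x^i * ((i : ZMod p)⁻¹ * (j : ZMod p)⁻¹ * (k : ZMod p)⁻¹) :=
          icc_swap (p-1) _
      _ = ∑ j ∈ Icc 1 (p-1), ∑ i ∈ Icc 1 j, ∑ k ∈ Icc j (p-1),
            x^i * ((i : ZMod p)⁻¹ * (j : ZMod p)⁻¹ * (k : ZMod p)⁻¹) :=
          Finset.sum_congr rfl (fun j _ => Finset.sum_comm)
      _ = ∑ i ∈ Icc 1 (p-1), ∑ j ∈ Icc i (p-1), ∑ k ∈ Icc j (p-1),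
            x^i * ((i : ZMod p)⁻¹ * (j : ZMod p)⁻¹ * (k : ZMod p)⁻¹) :=
          icc_swap (p-1) _
      _ = ∑ i ∈ Icc 1 (p-1), x^i * (i : ZMod p)⁻¹ * F2 p i := by
          refine Finset.sum_congr rfl fun i _ => ?_
          simp only [F2, F1, Finset.mul_sum]
          refine Finset.sum_congr rfl fun j _ => ?_
          refine Finset.sum_congr rfl fun k _ => ?_
          ring
  have hR : (∑ k ∈ Icc 1 (p-1), (1-x)^k * ((k : ZMod p)⁻¹)^3)
      = ∑ m ∈ Icc 1 (p-1), (-x)^m * (-1 : ZMod p)^m * ((m : ZMod p)⁻¹ * F2 p m) := by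
    calc ∑ k ∈ Icc 1 (p-1), (1-x)^k * ((k : ZMod p)⁻¹)^3
        = ∑ k ∈ Icc 1 (p-1), ∑ m ∈ range (k+1),
            (-x)^m * (k.choose m : ZMod p) * ((k : ZMod p)⁻¹)^3 := by
          refine Finset.sum_congr rfl fun k _ => ?_
          rw [show (1 : ZMod p) - x = -x + 1 by ring, add_pow, Finset.sum_mul]
          refine Finset.sum_congr rfl fun m _ => ?_
          rw [one_pow]
          ring
      _ = ∑ k ∈ Icc 1 (p-1), (((k : ZMod p)⁻¹)^3
            + ∑ m ∈ Icc 1 k, (-x)^m * (k.choose m : ZMod p) * ((k : ZMod p)⁻¹)^3) := by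
          refine Finset.sum_congr rfl fun k hk => ?_
          have hr : range (k+1) = insert 0 (Icc 1 k) := by
            ext t
            simp only [Finset.mem_range, Finset.mem_Icc, Finset.mem_insert]
            omega
          rw [hr, Finset.sum_insert (by simp)]
          simp
      _ = (∑ k ∈ Icc 1 (p-1), ((k : ZMod p)⁻¹)^3)
            + ∑ k ∈ Icc 1 (p-1), ∑ m ∈ Icc 1 k,
              (-x)^m * (k.choose m : ZMod p) * ((k : ZMod p)⁻¹)^3 :=
          Finset.sum_add_distrib
      _ = ∑ k ∈ Icc 1 (p-1), ∑ m ∈ Icc 1 k,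
            (-x)^m * (k.choose m : ZMod p) * ((k : ZMod p)⁻¹)^3 := by
          rw [sum_inv_pow_eq_zero 3 (by omega) (by omega), zero_add]
      _ = ∑ m ∈ Icc 1 (p-1), ∑ k ∈ Icc m (p-1),
            (-x)^m * (k.choose m : ZMod p) * ((k : ZMod p)⁻¹)^3 :=
          icc_swap (p-1) _
      _ = ∑ m ∈ Icc 1 (p-1), (-x)^m * (-1 : ZMod p)^m * ((m : ZMod p)⁻¹ * F2 p m) := by
          refine Finset.sum_congr rfl fun m hm => ?_
          simp only [mem_Icc] at hm
          have step : ∀ k ∈ Icc m (p-1),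
              (-x)^m * (k.choose m : ZMod p) * ((k : ZMod p)⁻¹)^3
                = ((-x)^m * (m : ZMod p)⁻¹)
                  * (((k-1).choose (m-1) : ZMod p) * ((k : ZMod p)⁻¹)^2) := by
            intro k hk
            simp only [mem_Icc] at hk
            have h1 := key_pt m k hm.1 hm.2 hk.1 hk.2
            calc (-x)^m * (k.choose m : ZMod p) * ((k : ZMod p)⁻¹)^3
                = (-x)^m * (((k.choose m : ZMod p) * (k : ZMod p)⁻¹) * ((k : ZMod p)⁻¹)^2) := by
                  ring
              _ = (-x)^m * (((m : ZMod p)⁻¹ * ((k-1).choose (m-1) : ZMod p)) * ((k : ZMod p)⁻¹)^2) := by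
                  rw [h1]
              _ = ((-x)^m * (m : ZMod p)⁻¹)
                  * (((k-1).choose (m-1) : ZMod p) * ((k : ZMod p)⁻¹)^2) := by
                  ring
          rw [Finset.sum_congr rfl step, ← Finset.mul_sum, psi2 hp3 m hm.1 hm.2]
          ring
  rw [hL, hR]
  refine Finset.sum_congr rfl fun m _ => ?_
  have hxx : (-x)^m * (-1 : ZMod p)^m = x^m := by
    rw [← mul_pow]
    norm_num
  calc (x : ZMod p)^m * (m : ZMod p)⁻¹ * F2 p m
      = ((-x)^m * (-1 : ZMod p)^m) * (m : ZMod p)⁻¹ * F2 p m := by rw [hxx]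
    _ = (-x)^m * (-1 : ZMod p)^m * ((m : ZMod p)⁻¹ * F2 p m) := by ring

end Core4
section Core5
variable {p : ℕ} [hfp : Fact p.Prime]

lemma core_id (hp3 : 3 < p) :
    (∑ k ∈ Icc 1 (p-1), ∑ j ∈ Icc 1 k, ∑ i ∈ Icc 1 j,
        ((2 : ZMod p)^i - (-1 : ZMod p)^i)
          * ((i : ZMod p)⁻¹ * (j : ZMod p)⁻¹ * (k : ZMod p)⁻¹))
      = ∑ k ∈ Icc 1 (p-1), ((-1 : ZMod p)^k - (2 : ZMod p)^k) * ((k : ZMod p)⁻¹)^3 := by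
  have h2 := main_id hp3 (2 : ZMod p)
  have h1 := main_id hp3 (-1 : ZMod p)
  rw [show (1 : ZMod p) - 2 = -1 by ring] at h2
  rw [show (1 : ZMod p) - (-1) = 2 by ring] at h1
  calc (∑ k ∈ Icc 1 (p-1), ∑ j ∈ Icc 1 k, ∑ i ∈ Icc 1 j,
        ((2 : ZMod p)^i - (-1 : ZMod p)^i)
          * ((i : ZMod p)⁻¹ * (j : ZMod p)⁻¹ * (k : ZMod p)⁻¹))
      = (∑ k ∈ Icc 1 (p-1), ∑ j ∈ Icc 1 k, ∑ i ∈ Icc 1 j,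
          (2 : ZMod p)^i * ((i : ZMod p)⁻¹ * (j : ZMod p)⁻¹ * (k : ZMod p)⁻¹))
        - (∑ k ∈ Icc 1 (p-1), ∑ j ∈ Icc 1 k, ∑ i ∈ Icc 1 j,
          (-1 : ZMod p)^i * ((i : ZMod p)⁻¹ * (j : ZMod p)⁻¹ * (k : ZMod p)⁻¹)) := by
        simp only [sub_mul, Finset.sum_sub_distrib]
    _ = (∑ k ∈ Icc 1 (p-1), (-1 : ZMod p)^k * ((k : ZMod p)⁻¹)^3)
        - ∑ k ∈ Icc 1 (p-1), (2 : ZMod p)^k * ((k : ZMod p)⁻¹)^3 := by rw [h2, h1]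
    _ = ∑ k ∈ Icc 1 (p-1), ((-1 : ZMod p)^k - (2 : ZMod p)^k) * ((k : ZMod p)⁻¹)^3 := by
        rw [← Finset.sum_sub_distrib]
        exact Finset.sum_congr rfl fun k _ => by ring

end Core5


/-- For a prime `p > 3`,
`∑_{1 ≤ i ≤ j ≤ k ≤ p-1} (2^i - (-1)^i)/(i·j·k)
  ≡ ∑_{k=1}^{p-1} ((-1)^k - 2^k)/k³ (mod p)`. -/
theorem stmt_10 (p : ℕ) (hp : p.Prime) (hp3 : 3 < p) :
    (p : ℤ) ∣
      ((∑ k ∈ Finset.Icc 1 (p - 1), ∑ j ∈ Finset.Icc 1 k, ∑ i ∈ Finset.Icc 1 j,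
          ((2 : ℚ) ^ i - (-1 : ℚ) ^ i) / ((i : ℚ) * (j : ℚ) * (k : ℚ)))
        - ∑ k ∈ Finset.Icc 1 (p - 1),
            ((-1 : ℚ) ^ k - (2 : ℚ) ^ k) / (k : ℚ) ^ 3).num := by
  haveI hfp : Fact p.Prime := ⟨hp⟩
  have hp2 := hp.two_le
  set w := (p-1).factorial with hw
  set c : ℕ → ℕ := fun i => w / i with hc
  have hcmul : ∀ i, 1 ≤ i → i ≤ p - 1 → (c i) * i = w := by
    intro i h1 h2
    exact Nat.div_mul_cancel (Nat.dvd_factorial (by omega) (by omega))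
  set D := ((∑ k ∈ Finset.Icc 1 (p - 1), ∑ j ∈ Finset.Icc 1 k, ∑ i ∈ Finset.Icc 1 j,
          ((2 : ℚ) ^ i - (-1 : ℚ) ^ i) / ((i : ℚ) * (j : ℚ) * (k : ℚ)))
        - ∑ k ∈ Finset.Icc 1 (p - 1),
            ((-1 : ℚ) ^ k - (2 : ℚ) ^ k) / (k : ℚ) ^ 3) with hD
  set N : ℤ := (∑ k ∈ Finset.Icc 1 (p-1), ∑ j ∈ Finset.Icc 1 k, ∑ i ∈ Finset.Icc 1 j,
      ((2:ℤ)^i - (-1:ℤ)^i) * (c i : ℤ) * (c j : ℤ) * (c k : ℤ))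
      - ∑ k ∈ Finset.Icc 1 (p-1), ((-1:ℤ)^k - (2:ℤ)^k) * (c k : ℤ)^3 with hN
  -- rational identity
  have hQ : (N : ℚ) = (w : ℚ)^3 * D := by
    rw [hN, hD]
    push_cast
    rw [mul_sub]
    congr 1
    · rw [Finset.mul_sum]
      refine Finset.sum_congr rfl fun k hk => ?_
      rw [Finset.mul_sum]
      refine Finset.sum_congr rfl fun j hj => ?_
      rw [Finset.mul_sum]
      refine Finset.sum_congr rfl fun i hi => ?_
      simp only [mem_Icc] at hk hj hi
      have hiw : (c i : ℚ) * (i : ℚ) = (w : ℚ) := by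
        exact_mod_cast congrArg (fun t : ℕ => (t : ℚ)) (hcmul i hi.1 (by omega))
      have hjw : (c j : ℚ) * (j : ℚ) = (w : ℚ) := by
        exact_mod_cast congrArg (fun t : ℕ => (t : ℚ)) (hcmul j hj.1 (by omega))
      have hkw : (c k : ℚ) * (k : ℚ) = (w : ℚ) := by
        exact_mod_cast congrArg (fun t : ℕ => (t : ℚ)) (hcmul k hk.1 hk.2)
      have hi0 : (i : ℚ) ≠ 0 := Nat.cast_ne_zero.mpr (by omega)
      have hj0 : (j : ℚ) ≠ 0 := Nat.cast_ne_zero.mpr (by omega)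
      have hk0 : (k : ℚ) ≠ 0 := Nat.cast_ne_zero.mpr (by omega)
      have e : (w : ℚ)^3 = ((c i : ℚ) * i) * ((c j : ℚ) * j) * ((c k : ℚ) * k) := by
        rw [hiw, hjw, hkw]; ring
      rw [e]
      field_simp
    · rw [Finset.mul_sum]
      refine Finset.sum_congr rfl fun k hk => ?_
      simp only [mem_Icc] at hk
      have hkw : (c k : ℚ) * (k : ℚ) = (w : ℚ) := by
        exact_mod_cast congrArg (fun t : ℕ => (t : ℚ)) (hcmul k hk.1 hk.2)
      have hk0 : (k : ℚ) ≠ 0 := Nat.cast_ne_zero.mpr (by omega)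
      have e : (w : ℚ)^3 = ((c k : ℚ) * k)^3 := by rw [hkw]
      rw [e]
      field_simp
  -- ZMod identity
  have hcz : ∀ i, 1 ≤ i → i ≤ p - 1 → ((c i : ℕ) : ZMod p) = (w : ZMod p) * (i : ZMod p)⁻¹ := by
    intro i h1 h2
    have h := congrArg (fun t : ℕ => (t : ZMod p)) (hcmul i h1 h2)
    simp only [Nat.cast_mul] at h
    have hi0 : (i : ZMod p) ≠ 0 := cast_ne_zero_of_mem h1 h2
    exact (eq_mul_inv_iff_mul_eq₀ hi0).mpr h
  have hZ : (N : ZMod p) = 0 := by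
    rw [hN]
    push_cast
    have hL' : (∑ k ∈ Finset.Icc 1 (p-1), ∑ j ∈ Finset.Icc 1 k, ∑ i ∈ Finset.Icc 1 j,
        ((2:ZMod p)^i - (-1:ZMod p)^i) * ((c i : ℕ) : ZMod p) * ((c j : ℕ) : ZMod p) * ((c k : ℕ) : ZMod p))
        = (w : ZMod p)^3 * ∑ k ∈ Icc 1 (p-1), ∑ j ∈ Icc 1 k, ∑ i ∈ Icc 1 j,
          ((2 : ZMod p)^i - (-1 : ZMod p)^i)
            * ((i : ZMod p)⁻¹ * (j : ZMod p)⁻¹ * (k : ZMod p)⁻¹) := by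
      rw [Finset.mul_sum]
      refine Finset.sum_congr rfl fun k hk => ?_
      rw [Finset.mul_sum]
      refine Finset.sum_congr rfl fun j hj => ?_
      rw [Finset.mul_sum]
      refine Finset.sum_congr rfl fun i hi => ?_
      simp only [mem_Icc] at hk hj hi
      rw [hcz i hi.1 (by omega), hcz j hj.1 (by omega), hcz k hk.1 hk.2]
      ring
    have hR' : (∑ k ∈ Finset.Icc 1 (p-1),
        ((-1:ZMod p)^k - (2:ZMod p)^k) * ((c k : ℕ) : ZMod p)^3)
        = (w : ZMod p)^3 * ∑ k ∈ Icc 1 (p-1),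
            ((-1 : ZMod p)^k - (2 : ZMod p)^k) * ((k : ZMod p)⁻¹)^3 := by
      rw [Finset.mul_sum]
      refine Finset.sum_congr rfl fun k hk => ?_
      simp only [mem_Icc] at hk
      rw [hcz k hk.1 hk.2]
      ring
    rw [hL', hR', core_id hp3, sub_self]
  have hdvd : (p : ℤ) ∣ N := (ZMod.intCast_zmod_eq_zero_iff_dvd N p).mp hZ
  have hden : ((D.den : ℚ)) ≠ 0 := Nat.cast_ne_zero.mpr D.den_nz
  have hQnum : (w : ℤ)^3 * D.num = N * (D.den : ℤ) := by
    have hkey : D * (D.den : ℚ) = (D.num : ℚ) := by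
      nth_rewrite 1 [← Rat.num_div_den D]
      exact div_mul_cancel₀ _ hden
    have h1 : (N : ℚ) * (D.den : ℚ) = (w : ℚ)^3 * (D.num : ℚ) := by
      rw [hQ, mul_assoc, hkey]
    exact_mod_cast h1.symm
  have h2 : (p : ℤ) ∣ (w : ℤ)^3 * D.num := by
    rw [hQnum]
    exact hdvd.mul_right _
  have hprime : Prime (p : ℤ) := Nat.prime_iff_prime_int.mp hp
  rcases hprime.dvd_mul.mp h2 with h | h
  · exfalso
    have h' : (p : ℤ) ∣ (w : ℤ) := hprime.dvd_of_dvd_pow h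
    have hnat : p ∣ w := Int.natCast_dvd_natCast.mp h'
    have := (Nat.Prime.dvd_factorial hp).mp hnat
    omega
  · exact h
end
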